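/- arXiv:2102.11987 — 5 statements merged into one kernel-verified Lean document; each statement's English description precedes it below -/
import Mathlib

section
/- Let ρ : [T0,T] → ℝ be a non-negative absolutely continuous function and let b1, b2, a : [T0,T] → ℝ₊ be non-negative Lebesgue integrable functions. Assume that ρ'(t) ≤ a(t) + b1(t)·ρ(t) + b2(t)·∫_{T0}^t ρ(s) ds for almost every t ∈ [T0,T]. Then for all t ∈ [T0,T] one has ρ(t) ≤ ρ(T0)·exp(∫_{T0}^t (b(τ)+1) dτ) + ∫_{T0}^t a(s)·exp(∫_s^t (b(τ)+1) dτ) ds, where b(t) := max{b1(t), b2(t)} for almost every t ∈ [T0,T]. -/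
open MeasureTheory Set
open scoped RealInnerProductSpace ENNReal Pointwise NNReal

noncomputable section

/-- a.e. differentiability of the primitive of a nonnegative measurable integrable function. -/
lemma ae_hasDerivAt_primitive (g : ℝ → ℝ) (hm : Measurable g)
    (hint : Integrable g volume) (hnn : ∀ t, 0 ≤ g t) (x : ℝ) :
    ∀ᵐ t, HasDerivAt (fun u => ∫ s in x..u, g s) (g t) t := by
  set F : ℝ → ℝ := fun u => ∫ s in x..u, g s with hFdef
  have hii : ∀ u v : ℝ, IntervalIntegrable g volume u v := fun u v => hint.intervalIntegrable
  have hFadd : ∀ u v : ℝ, (∫ s in u..v, g s) = F v - F u := by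
    intro u v
    have h := intervalIntegral.integral_add_adjacent_intervals (hii x u) (hii u v)
    simp only [hFdef]
    linarith
  have hmono : Monotone F := by
    intro u v huv
    have h0 : 0 ≤ ∫ s in u..v, g s :=
      intervalIntegral.integral_nonneg huv fun s _ => hnn s
    have := hFadd u v
    linarith
  have hcont : Continuous F := hint.continuous_primitive x
  have hsf : ∀ y, hmono.stieltjesFunction y = F y := by
    intro y
    rw [hmono.stieltjesFunction_eq]
    exact rightLim_eq_of_tendsto
      (hcont.continuousAt.tendsto.mono_left nhdsWithin_le_nhds)
  have hmeas_eq : hmono.stieltjesFunction.measure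
      = volume.withDensity (fun s => ENNReal.ofReal (g s)) := by
    refine Measure.ext_of_Ioc _ _ (fun u v huv => ?_)
    rw [StieltjesFunction.measure_Ioc, hsf, hsf, ← hFadd u v,
      withDensity_apply _ measurableSet_Ioc,
      intervalIntegral.integral_of_le huv.le,
      ofReal_integral_eq_lintegral_ofReal (hint.integrableOn) (ae_of_all _ hnn)]
  have hrn : (Measure.rnDeriv hmono.stieltjesFunction.measure volume) =ᵐ[volume]
      fun s => ENNReal.ofReal (g s) := by
    rw [hmeas_eq]
    exact Measure.rnDeriv_withDensity volume hm.ennreal_ofReal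
  filter_upwards [hmono.ae_hasDerivAt, hrn] with t ht hrt
  rw [hrt] at ht
  simpa [ENNReal.toReal_ofReal (hnn t)] using ht

/-- Fatou-type estimate: the integral of the a.e. derivative of a continuous monotone
function is at most the increment of the function. -/
lemma integral_deriv_le_of_monotone (f g : ℝ → ℝ) (hf : Monotone f)
    (hc : Continuous f) (hd : ∀ᵐ t, HasDerivAt f (g t) t) (hgnn : ∀ t, 0 ≤ g t)
    {u v : ℝ} (huv : u ≤ v) (hgint : IntegrableOn g (Ioc u v)) :
    (∫ t in u..v, g t) ≤ f v - f u := by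
  set d : ℕ → ℝ → ℝ := fun n t => (f (t + 1 / (n + 1)) - f t) / (1 / (n + 1)) with hd_def
  have hpos : ∀ n : ℕ, (0:ℝ) < 1 / (n + 1) := fun n => by positivity
  have hdnn : ∀ n t, 0 ≤ d n t := fun n t =>
    div_nonneg (sub_nonneg.2 (hf (by linarith [hpos n]))) (hpos n).le
  have hdcont : ∀ n, Continuous (d n) := fun n =>
    ((hc.comp (continuous_id.add continuous_const)).sub hc).div_const _
  -- pointwise convergence a.e.
  have htend : ∀ᵐ t, Filter.Tendsto (fun n => d n t) Filter.atTop (nhds (g t)) := by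
    filter_upwards [hd] with t ht
    have hslope := hasDerivAt_iff_tendsto_slope.1 ht
    have hseq : Filter.Tendsto (fun n : ℕ => t + 1 / (n + 1)) Filter.atTop (nhdsWithin t {t}ᶜ) := by
      apply tendsto_nhdsWithin_of_tendsto_nhds_of_eventually_within
      · have : Filter.Tendsto (fun n : ℕ => 1 / ((n : ℝ) + 1)) Filter.atTop (nhds 0) :=
          tendsto_one_div_add_atTop_nhds_zero_nat
        simpa using (this.const_add t)
      · exact Filter.Eventually.of_forall fun n => by
          simp only [mem_compl_iff, mem_singleton_iff]
          linarith [hpos n]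
    have := hslope.comp hseq
    refine this.congr fun n => ?_
    simp only [Function.comp_apply, slope_def_field]
    rw [hd_def]
    simp only [add_sub_cancel_left]
  -- per-n integral bound
  have hbound : ∀ n : ℕ, (∫ t in Set.Ioc u v, d n t) ≤ f (v + 1 / (n + 1)) - f u := by
    intro n
    set h : ℝ := 1 / (n + 1) with hh
    have hfi : ∀ p q : ℝ, IntervalIntegrable f volume p q := fun p q => hc.intervalIntegrable p q
    have hfi' : ∀ p q : ℝ, IntervalIntegrable (fun t => f (t + h)) volume p q := fun p q =>
      (hc.comp (continuous_id.add continuous_const)).intervalIntegrable p q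
    have e1 : (∫ t in Set.Ioc u v, d n t) = ∫ t in u..v, d n t :=
      (intervalIntegral.integral_of_le huv).symm
    have e2 : (∫ t in u..v, d n t) = (∫ t in u..v, (f (t + h) - f t)) / h := by
      rw [hd_def, intervalIntegral.integral_div]
    have e3 : (∫ t in u..v, f (t + h)) = ∫ t in (u+h)..(v+h), f t :=
      intervalIntegral.integral_comp_add_right f h
    have e4 : (∫ t in u..v, (f (t + h) - f t))
        = (∫ t in v..(v+h), f t) - ∫ t in u..(u+h), f t := by
      rw [intervalIntegral.integral_sub (hfi' u v) (hfi u v), e3]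
      have a1 := intervalIntegral.integral_add_adjacent_intervals (hfi u (u+h)) (hfi (u+h) (v+h))
      have a2 := intervalIntegral.integral_add_adjacent_intervals (hfi u v) (hfi v (v+h))
      linarith
    have hb1 : (∫ t in v..(v+h), f t) ≤ h * f (v + h) := by
      have := intervalIntegral.integral_mono_on (by linarith [hpos n] : v ≤ v + h)
        (hfi v (v+h)) (intervalIntegrable_const) (fun x hx => hf hx.2)
      simpa using this
    have hb2 : h * f u ≤ ∫ t in u..(u+h), f t := by
      have := intervalIntegral.integral_mono_on (by linarith [hpos n] : u ≤ u + h)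
        (intervalIntegrable_const) (hfi u (u+h)) (fun x hx => hf hx.1)
      simpa using this
    rw [e1, e2]
    rw [div_le_iff₀ (hpos n)]
    have : h * f (v + h) - h * f u = (f (v + h) - f u) * h := by ring
    linarith [e4, hb1, hb2, this]
  -- Fatou
  have hmeasd : ∀ n, Measurable fun t => ENNReal.ofReal (d n t) := fun n =>
    (hdcont n).measurable.ennreal_ofReal
  have hfatou : (∫⁻ t in Set.Ioc u v, ENNReal.ofReal (g t))
      ≤ ENNReal.ofReal (f v - f u) := by
    have h1 : (∫⁻ t in Set.Ioc u v, ENNReal.ofReal (g t))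
        = ∫⁻ t in Set.Ioc u v, Filter.liminf (fun n => ENNReal.ofReal (d n t)) Filter.atTop := by
      refine lintegral_congr_ae ?_
      filter_upwards [ae_restrict_of_ae htend] with t ht
      exact ((ENNReal.continuous_ofReal.continuousAt.tendsto.comp ht).liminf_eq).symm
    rw [h1]
    refine le_trans (lintegral_liminf_le fun n => hmeasd n) ?_
    have h2 : ∀ n : ℕ, (∫⁻ t in Set.Ioc u v, ENNReal.ofReal (d n t))
        ≤ ENNReal.ofReal (f (v + 1 / (n + 1)) - f u) := by
      intro n
      have hint_d : IntegrableOn (d n) (Set.Ioc u v) := (hdcont n).integrableOn_Ioc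
      rw [← ofReal_integral_eq_lintegral_ofReal hint_d (ae_of_all _ fun t => hdnn n t)]
      exact ENNReal.ofReal_le_ofReal (hbound n)
    refine le_trans (Filter.liminf_le_liminf (Filter.Eventually.of_forall h2)) ?_
    have h3 : Filter.Tendsto (fun n : ℕ => ENNReal.ofReal (f (v + 1 / (n + 1)) - f u))
        Filter.atTop (nhds (ENNReal.ofReal (f v - f u))) := by
      refine ENNReal.continuous_ofReal.continuousAt.tendsto.comp ?_
      have hv : Filter.Tendsto (fun n : ℕ => v + 1 / ((n:ℝ) + 1)) Filter.atTop (nhds v) := by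
        simpa using (tendsto_one_div_add_atTop_nhds_zero_nat.const_add v)
      exact ((hc.continuousAt.tendsto.comp hv).sub_const (f u))
    exact le_of_eq h3.liminf_eq
  -- conclude
  have hgnn' : 0 ≤ᵐ[volume.restrict (Set.Ioc u v)] g := ae_of_all _ hgnn
  rw [intervalIntegral.integral_of_le huv,
    integral_eq_lintegral_of_nonneg_ae hgnn' hgint.1]
  have hle := ENNReal.toReal_mono ENNReal.ofReal_ne_top hfatou
  rwa [ENNReal.toReal_ofReal (by linarith [hf huv] : (0:ℝ) ≤ f v - f u)] at hle

/-- Gronwall-type lemma (Lemma 3.2). -/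
theorem gronwall_integral_inequality (T0 T : ℝ) (hT : T0 < T)
    (ρ ρ' a b1 b2 : ℝ → ℝ)
    (hρnn : ∀ t ∈ Icc T0 T, 0 ≤ ρ t)
    (hρint : IntervalIntegrable ρ' volume T0 T)
    (hρAC : ∀ t ∈ Icc T0 T, ρ t = ρ T0 + ∫ s in T0..t, ρ' s)
    (haint : IntervalIntegrable a volume T0 T) (hann : ∀ t ∈ Icc T0 T, 0 ≤ a t)
    (hb1int : IntervalIntegrable b1 volume T0 T) (hb1nn : ∀ t ∈ Icc T0 T, 0 ≤ b1 t)
    (hb2int : IntervalIntegrable b2 volume T0 T) (hb2nn : ∀ t ∈ Icc T0 T, 0 ≤ b2 t)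
    (hineq : ∀ᵐ t ∂volume, t ∈ Icc T0 T →
      ρ' t ≤ a t + b1 t * ρ t + b2 t * ∫ s in T0..t, ρ s) :
    ∀ t ∈ Icc T0 T,
      ρ t ≤ ρ T0 * Real.exp (∫ τ in T0..t, (max (b1 τ) (b2 τ) + 1)) +
        ∫ s in T0..t, a s * Real.exp (∫ τ in s..t, (max (b1 τ) (b2 τ) + 1)) := by
  intro t₁ ht₁
  obtain ⟨hT0t₁, ht₁T⟩ := ht₁
  set c := ρ T0 with hcdef
  have hc0 : 0 ≤ c := hρnn T0 ⟨le_refl _, hT.le⟩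
  set bmax : ℝ → ℝ := fun t => max (b1 t) (b2 t) + 1 with hbmaxdef
  -- integrability on Icc
  have haI : IntegrableOn a (Icc T0 T) :=
    (intervalIntegrable_iff_integrableOn_Icc_of_le hT.le).1 haint
  have hb1I : IntegrableOn b1 (Icc T0 T) :=
    (intervalIntegrable_iff_integrableOn_Icc_of_le hT.le).1 hb1int
  have hb2I : IntegrableOn b2 (Icc T0 T) :=
    (intervalIntegrable_iff_integrableOn_Icc_of_le hT.le).1 hb2int
  have hbmaxI : IntegrableOn bmax (Icc T0 T) := by
    have hsup : IntegrableOn (b1 ⊔ b2) (Icc T0 T) := hb1I.sup hb2I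
    have : IntegrableOn (fun t => (b1 ⊔ b2) t + 1) (Icc T0 T) :=
      hsup.add (integrableOn_const measure_Icc_lt_top.ne)
    exact this.congr_fun (fun t _ => rfl) measurableSet_Icc
  -- measurable nonnegative modifications α of a and β of bmax, vanishing outside [T0,T]
  set α : ℝ → ℝ := (Icc T0 T).indicator (fun t => max (haI.1.mk a t) 0) with hαdef
  set β : ℝ → ℝ := (Icc T0 T).indicator (fun t => max (hbmaxI.1.mk bmax t) 0) with hβdef
  have hαm : Measurable α :=
    (haI.1.measurable_mk.max measurable_const).indicator measurableSet_Icc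
  have hβm : Measurable β :=
    (hbmaxI.1.measurable_mk.max measurable_const).indicator measurableSet_Icc
  have hαnn : ∀ t, 0 ≤ α t := fun t => by
    by_cases h : t ∈ Icc T0 T <;> simp [hαdef, indicator_apply, h, le_max_right]
  have hβnn : ∀ t, 0 ≤ β t := fun t => by
    by_cases h : t ∈ Icc T0 T <;> simp [hβdef, indicator_apply, h, le_max_right]
  have hα0 : ∀ t, t ∉ Icc T0 T → α t = 0 := fun t h => indicator_of_notMem h _
  have hβ0 : ∀ t, t ∉ Icc T0 T → β t = 0 := fun t h => indicator_of_notMem h _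
  have hα1 : (fun t => max (haI.1.mk a t) 0) =ᵐ[volume.restrict (Icc T0 T)] a := by
    have h3 : ∀ᵐ t ∂(volume.restrict (Icc T0 T)), 0 ≤ a t :=
      (ae_restrict_iff' measurableSet_Icc).2 (Filter.Eventually.of_forall hann)
    filter_upwards [haI.1.ae_eq_mk, h3] with t h2t h3t
    rw [← h2t, max_eq_left h3t]
  have hαae : α =ᵐ[volume.restrict (Icc T0 T)] a :=
    (indicator_ae_eq_restrict measurableSet_Icc).trans hα1
  have hbmaxnn : ∀ t ∈ Icc T0 T, 0 ≤ bmax t := fun t ht => by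
    have h1 : b1 t ≤ max (b1 t) (b2 t) := le_max_left _ _
    have h2 := hb1nn t ht
    simp only [hbmaxdef]
    linarith
  have hβ1 : (fun t => max (hbmaxI.1.mk bmax t) 0) =ᵐ[volume.restrict (Icc T0 T)] bmax := by
    have h3 : ∀ᵐ t ∂(volume.restrict (Icc T0 T)), 0 ≤ bmax t :=
      (ae_restrict_iff' measurableSet_Icc).2 (Filter.Eventually.of_forall hbmaxnn)
    filter_upwards [hbmaxI.1.ae_eq_mk, h3] with t h2t h3t
    rw [← h2t, max_eq_left h3t]
  have hβae : β =ᵐ[volume.restrict (Icc T0 T)] bmax :=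
    (indicator_ae_eq_restrict measurableSet_Icc).trans hβ1
  have hαint : Integrable α volume := by
    rw [hαdef, integrable_indicator_iff measurableSet_Icc]
    exact haI.congr hα1.symm
  have hβint : Integrable β volume := by
    rw [hβdef, integrable_indicator_iff measurableSet_Icc]
    exact hbmaxI.congr hβ1.symm
  -- primitives B and A
  set B : ℝ → ℝ := fun u => ∫ s in T0..u, β s with hBdef
  have hβii : ∀ u v : ℝ, IntervalIntegrable β volume u v := fun u v => hβint.intervalIntegrable
  have hBc : Continuous B := hβint.continuous_primitive T0
  have hBadd : ∀ u v : ℝ, (∫ s in u..v, β s) = B v - B u := by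
    intro u v
    have h := intervalIntegral.integral_add_adjacent_intervals (hβii T0 u) (hβii u v)
    simp only [hBdef]
    linarith
  have hBmono : Monotone B := by
    intro u v huv
    have h0 : 0 ≤ ∫ s in u..v, β s := intervalIntegral.integral_nonneg huv fun s _ => hβnn s
    have := hBadd u v
    linarith
  have hB0 : B T0 = 0 := intervalIntegral.integral_same
  have hBnn : ∀ u, 0 ≤ B u := by
    intro u
    rcases le_total T0 u with h | h
    · exact intervalIntegral.integral_nonneg h fun s _ => hβnn s
    · have hz : (∫ s in u..T0, β s) = 0 := by
        rw [intervalIntegral.integral_of_le h]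
        refine integral_eq_zero_of_ae ?_
        have hne : ∀ᵐ s : ℝ ∂volume, s ≠ T0 := by
          refine (ae_iff).2 ?_
          have : {s : ℝ | ¬ s ≠ T0} = {T0} := by ext s; simp
          rw [this]
          exact Real.volume_singleton
        have h0 : ∀ᵐ s ∂volume.restrict (Ioc u T0), β s = 0 := by
          rw [ae_restrict_iff' measurableSet_Ioc]
          filter_upwards [hne] with s hs hs'
          exact hβ0 s (fun hmem => hs (le_antisymm hs'.2 hmem.1))
        exact h0
      have := hBadd u T0
      rw [hB0] at this
      linarith
  set ψ : ℝ → ℝ := fun s => α s * Real.exp (-B s) with hψdef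
  have hψm : Measurable ψ := hαm.mul (Real.measurable_exp.comp hBc.measurable.neg)
  have hψnn : ∀ s, 0 ≤ ψ s := fun s => mul_nonneg (hαnn s) (Real.exp_pos _).le
  have hψint : Integrable ψ volume := by
    refine Integrable.mono' (hαint) hψm.aestronglyMeasurable ?_
    refine Filter.Eventually.of_forall fun s => ?_
    have h1 : Real.exp (-B s) ≤ 1 := Real.exp_le_one_iff.2 (by linarith [hBnn s])
    rw [Real.norm_eq_abs, abs_of_nonneg (hψnn s), hψdef]
    calc α s * Real.exp (-B s) ≤ α s * 1 :=
          mul_le_mul_of_nonneg_left h1 (hαnn s)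
      _ = α s := mul_one _
  set A : ℝ → ℝ := fun u => ∫ s in T0..u, ψ s with hAdef
  have hψii : ∀ u v : ℝ, IntervalIntegrable ψ volume u v := fun u v => hψint.intervalIntegrable
  have hAc : Continuous A := hψint.continuous_primitive T0
  have hAadd : ∀ u v : ℝ, (∫ s in u..v, ψ s) = A v - A u := by
    intro u v
    have h := intervalIntegral.integral_add_adjacent_intervals (hψii T0 u) (hψii u v)
    simp only [hAdef]
    linarith
  have hAmono : Monotone A := by
    intro u v huv
    have h0 : 0 ≤ ∫ s in u..v, ψ s := intervalIntegral.integral_nonneg huv fun s _ => hψnn s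
    have := hAadd u v
    linarith
  have hA0 : A T0 = 0 := intervalIntegral.integral_same
  have hAnn : ∀ u, 0 ≤ A u := by
    intro u
    rcases le_total T0 u with h | h
    · exact intervalIntegral.integral_nonneg h fun s _ => hψnn s
    · have hz : (∫ s in u..T0, ψ s) = 0 := by
        rw [intervalIntegral.integral_of_le h]
        refine integral_eq_zero_of_ae ?_
        have hne : ∀ᵐ s : ℝ ∂volume, s ≠ T0 := by
          refine (ae_iff).2 ?_
          have : {s : ℝ | ¬ s ≠ T0} = {T0} := by ext s; simp
          rw [this]
          exact Real.volume_singleton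
        have h0 : ∀ᵐ s ∂volume.restrict (Ioc u T0), ψ s = 0 := by
          rw [ae_restrict_iff' measurableSet_Ioc]
          filter_upwards [hne] with s hs hs'
          have : α s = 0 := hα0 s (fun hmem => hs (le_antisymm hs'.2 hmem.1))
          simp [hψdef, this]
        exact h0
      have := hAadd u T0
      rw [hA0] at this
      linarith
  have hB' : ∀ᵐ t ∂(volume : Measure ℝ), HasDerivAt B (β t) t :=
    ae_hasDerivAt_primitive β hβm hβint hβnn T0
  have hA' : ∀ᵐ t ∂(volume : Measure ℝ), HasDerivAt A (ψ t) t :=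
    ae_hasDerivAt_primitive ψ hψm hψint hψnn T0
  -- the function R
  set R : ℝ → ℝ := fun u => ρ u + ∫ s in T0..u, ρ s with hRdef
  have hρ'I : IntegrableOn ρ' (Icc T0 T) :=
    (intervalIntegrable_iff_integrableOn_Icc_of_le hT.le).1 hρint
  have hρcont : ContinuousOn ρ (Icc T0 T) := by
    have h2 : IntegrableOn ρ' (uIcc T0 T) := by rw [uIcc_of_le hT.le]; exact hρ'I
    have h3 := intervalIntegral.continuousOn_primitive_interval h2
    rw [uIcc_of_le hT.le] at h3
    exact (continuousOn_const.add h3).congr fun t ht => hρAC t ht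
  have hρI : IntegrableOn ρ (Icc T0 T) := hρcont.integrableOn_compact isCompact_Icc
  have hρiiI : ∀ t ∈ Icc T0 T, IntervalIntegrable ρ volume T0 t := by
    intro t ht
    have h4 : IntegrableOn ρ (uIcc T0 t) := by
      rw [uIcc_of_le ht.1]; exact hρI.mono_set (Icc_subset_Icc le_rfl ht.2)
    exact h4.intervalIntegrable
  have hρ'iiI : ∀ t ∈ Icc T0 T, IntervalIntegrable ρ' volume T0 t := by
    intro t ht
    have h4 : IntegrableOn ρ' (uIcc T0 t) := by
      rw [uIcc_of_le ht.1]; exact hρ'I.mono_set (Icc_subset_Icc le_rfl ht.2)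
    exact h4.intervalIntegrable
  have hRcont : ContinuousOn R (Icc T0 T) := by
    have h2 : IntegrableOn ρ (uIcc T0 T) := by rw [uIcc_of_le hT.le]; exact hρI
    have h3 := intervalIntegral.continuousOn_primitive_interval h2
    rw [uIcc_of_le hT.le] at h3
    exact hρcont.add h3
  have hInn : ∀ t ∈ Icc T0 T, 0 ≤ ∫ s in T0..t, ρ s := fun t ht =>
    intervalIntegral.integral_nonneg ht.1 fun s hs => hρnn s ⟨hs.1, hs.2.trans ht.2⟩
  have hρleR : ∀ t ∈ Icc T0 T, ρ t ≤ R t := fun t ht => by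
    have := hInn t ht
    simp only [hRdef]
    linarith
  have hRnn : ∀ t ∈ Icc T0 T, 0 ≤ R t := fun t ht =>
    le_trans (hρnn t ht) (hρleR t ht)
  have hRT0 : R T0 = c := by simp [hRdef, intervalIntegral.integral_same, hcdef]
  have hRAC : ∀ t ∈ Icc T0 T, R t = c + ∫ s in T0..t, (ρ' s + ρ s) := by
    intro t ht
    rw [intervalIntegral.integral_add (hρ'iiI t ht) (hρiiI t ht)]
    have := hρAC t ht
    simp only [hRdef]
    linarith
  -- bound for R on the interval
  obtain ⟨CR, hCR⟩ : ∃ C, ∀ x ∈ Icc T0 T, ‖R x‖ ≤ C :=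
    isCompact_Icc.exists_bound_of_continuousOn hRcont
  have hβRii : ∀ t ∈ Icc T0 T, IntervalIntegrable (fun s => β s * R s) volume T0 t := by
    intro t ht
    rw [intervalIntegrable_iff_integrableOn_Ioc_of_le ht.1]
    have hβo : IntegrableOn β (Ioc T0 t) := hβint.integrableOn
    have hsub : Ioc T0 t ⊆ Icc T0 T := fun x hx => ⟨hx.1.le, hx.2.trans ht.2⟩
    have hRm : AEStronglyMeasurable R (volume.restrict (Ioc T0 t)) :=
      (hRcont.aestronglyMeasurable measurableSet_Icc).mono_measure
        (Measure.restrict_mono hsub le_rfl)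
    have hbd : ∀ᵐ x ∂(volume.restrict (Ioc T0 t)), ‖R x‖ ≤ CR :=
      (ae_restrict_iff' measurableSet_Ioc).2
        (Filter.Eventually.of_forall fun x hx => hCR x (hsub hx))
    exact (hβo.bdd_mul hRm hbd).congr
      (Filter.Eventually.of_forall fun x => mul_comm _ _)
  -- the basic integral inequality for R
  have hkey : ∀ t ∈ Icc T0 T, R t ≤ c + ∫ s in T0..t, (α s + β s * R s) := by
    intro t ht
    rw [hRAC t ht]
    have hR2 : IntervalIntegrable (fun s => α s + β s * R s) volume T0 t :=
      hαint.intervalIntegrable.add (hβRii t ht)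
    refine add_le_add_right ?_ c
    refine intervalIntegral.integral_mono_ae_restrict ht.1
      ((hρ'iiI t ht).add (hρiiI t ht)) hR2 ?_
    have hsub : Icc T0 t ⊆ Icc T0 T := Icc_subset_Icc le_rfl ht.2
    have hα' := ae_restrict_of_ae_restrict_of_subset hsub hαae
    have hβ' := ae_restrict_of_ae_restrict_of_subset hsub hβae
    have hmem := ae_restrict_mem (μ := volume) (s := Icc T0 t) measurableSet_Icc
    have hineq' := ae_restrict_of_ae (μ := volume) (s := Icc T0 t) hineq
    filter_upwards [hα', hβ', hmem, hineq'] with s hαs hβs hs hineqs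
    have hsT : s ∈ Icc T0 T := hsub hs
    have h1 := hineqs hsT
    have hI := hInn s hsT
    have hρs := hρnn s hsT
    have hb1s := hb1nn s hsT
    have hb2s := hb2nn s hsT
    have hm1 : b1 s ≤ max (b1 s) (b2 s) := le_max_left _ _
    have hm2 : b2 s ≤ max (b1 s) (b2 s) := le_max_right _ _
    have hp1 : (max (b1 s) (b2 s) - b1 s) * ρ s ≥ 0 :=
      mul_nonneg (by linarith) hρs
    have hp2 : (max (b1 s) (b2 s) - b2 s) * (∫ u in T0..s, ρ u) ≥ 0 :=
      mul_nonneg (by linarith) hI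
    have hβval : β s = max (b1 s) (b2 s) + 1 := hβs
    rw [hαs, hβval]
    simp only [hRdef]
    nlinarith [h1, hp1, hp2, hI, hρs]
  -- per-ε comparison with the explicit supersolution
  have hcross : ∀ ε : ℝ, 0 < ε → R t₁ ≤ Real.exp (B t₁) * (c + ε + A t₁) := by
    intro ε hε
    set Z : ℝ → ℝ := fun u => Real.exp (B u) * (c + ε + A u) with hZdef
    have hZc : Continuous Z := (Real.continuous_exp.comp hBc).mul (continuous_const.add hAc)
    have hZmono : Monotone Z := by
      intro u v huv
      have h1 : Real.exp (B u) ≤ Real.exp (B v) := Real.exp_le_exp.2 (hBmono huv)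
      have h2 : c + ε + A u ≤ c + ε + A v := by linarith [hAmono huv]
      have h3 : 0 ≤ c + ε + A u := by linarith [hAnn u]
      exact mul_le_mul h1 h2 h3 (Real.exp_pos _).le
    have hZT0 : Z T0 = c + ε := by simp [hZdef, hB0, hA0]
    have hZnn : ∀ u, 0 ≤ Z u := fun u =>
      mul_nonneg (Real.exp_pos _).le (by linarith [hAnn u])
    have hZ' : ∀ᵐ u ∂(volume : Measure ℝ), HasDerivAt Z (β u * Z u + α u) u := by
      filter_upwards [hB', hA'] with u hBu hAu
      have h1 : HasDerivAt (fun w => Real.exp (B w)) (Real.exp (B u) * β u) u := hBu.exp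
      have h2 : HasDerivAt (fun w => c + ε + A w) (ψ u) u := hAu.const_add (c + ε)
      have h3 := h1.mul h2
      have he : Real.exp (B u) * ψ u = α u := by
        simp only [hψdef, Real.exp_neg]
        field_simp
      refine h3.congr_deriv ?_
      simp only [hZdef]
      rw [← he]
      ring
    have hgnn : ∀ u, 0 ≤ β u * Z u + α u := fun u =>
      add_nonneg (mul_nonneg (hβnn u) (hZnn u)) (hαnn u)
    obtain ⟨CZ, hCZ⟩ : ∃ C, ∀ x ∈ Icc T0 T, ‖Z x‖ ≤ C :=
      isCompact_Icc.exists_bound_of_continuousOn hZc.continuousOn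
    have hβZI : ∀ t ∈ Icc T0 T, IntegrableOn (fun s => β s * Z s) (Ioc T0 t) := by
      intro t ht
      have hβo : IntegrableOn β (Ioc T0 t) := hβint.integrableOn
      have hsub : Ioc T0 t ⊆ Icc T0 T := fun x hx => ⟨hx.1.le, hx.2.trans ht.2⟩
      have hZm : AEStronglyMeasurable Z (volume.restrict (Ioc T0 t)) :=
        hZc.aestronglyMeasurable
      have hbd : ∀ᵐ x ∂(volume.restrict (Ioc T0 t)), ‖Z x‖ ≤ CZ :=
        (ae_restrict_iff' measurableSet_Ioc).2
          (Filter.Eventually.of_forall fun x hx => hCZ x (hsub hx))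
      exact (hβo.bdd_mul hZm hbd).congr
        (Filter.Eventually.of_forall fun x => mul_comm _ _)
    have hβZii : ∀ t ∈ Icc T0 T, IntervalIntegrable (fun s => β s * Z s) volume T0 t := by
      intro t ht
      rw [intervalIntegrable_iff_integrableOn_Ioc_of_le ht.1]
      exact hβZI t ht
    have hclaim : ∀ t ∈ Icc T0 t₁, R t < Z t := by
      by_contra hcon
      push_neg at hcon
      obtain ⟨t₂, ht₂, hZR⟩ := hcon
      set S : Set ℝ := Icc T0 t₁ ∩ {t | Z t ≤ R t} with hSdef
      have hSne : S.Nonempty := ⟨t₂, ht₂, hZR⟩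
      have hsub1 : Icc T0 t₁ ⊆ Icc T0 T := Icc_subset_Icc le_rfl ht₁T
      have hScl : IsClosed S := by
        have hcont2 : ContinuousOn (fun t => R t - Z t) (Icc T0 t₁) :=
          (hRcont.mono hsub1).sub hZc.continuousOn
        have h5 := hcont2.preimage_isClosed_of_isClosed isClosed_Icc
          (isClosed_Ici (a := (0:ℝ)))
        convert h5 using 1
        ext x
        simp only [hSdef, mem_inter_iff, mem_setOf_eq, mem_preimage, mem_Ici, sub_nonneg]
      have hSbdd : BddBelow S := ⟨T0, fun x hx => hx.1.1⟩
      have ht₃S : sInf S ∈ S := hScl.csInf_mem hSne hSbdd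
      set t₃ := sInf S with ht₃def
      have ht₃Icc : t₃ ∈ Icc T0 t₁ := ht₃S.1
      have ht₃T : t₃ ∈ Icc T0 T := hsub1 ht₃Icc
      have hZRt₃ : Z t₃ ≤ R t₃ := ht₃S.2
      have hT0t₃ : T0 < t₃ := by
        rcases eq_or_lt_of_le ht₃Icc.1 with h | h
        · exfalso
          rw [← h] at hZRt₃
          rw [hZT0, hRT0] at hZRt₃
          linarith
        · exact h
      have hRleZ : ∀ s, s ∈ Ioo T0 t₃ → R s ≤ Z s := by
        intro s hs
        by_contra hnot
        push_neg at hnot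
        have hsS : s ∈ S := ⟨⟨hs.1.le, hs.2.le.trans ht₃Icc.2⟩, hnot.le⟩
        exact absurd (csInf_le hSbdd hsS) (not_le.2 hs.2)
      have h1 : R t₃ ≤ c + ∫ s in T0..t₃, (α s + β s * R s) := hkey t₃ ht₃T
      have h2 : (∫ s in T0..t₃, (α s + β s * R s)) ≤ ∫ s in T0..t₃, (α s + β s * Z s) := by
        refine intervalIntegral.integral_mono_ae_restrict ht₃T.1
          (hαint.intervalIntegrable.add (hβRii t₃ ht₃T))
          (hαint.intervalIntegrable.add (hβZii t₃ ht₃T)) ?_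
        have hmem := ae_restrict_mem (μ := volume) (s := Icc T0 t₃) measurableSet_Icc
        have hne2 : ∀ᵐ s ∂volume.restrict (Icc T0 t₃), s ≠ T0 ∧ s ≠ t₃ := by
          refine ae_restrict_of_ae ?_
          refine (ae_iff).2 ?_
          have he : {s : ℝ | ¬(s ≠ T0 ∧ s ≠ t₃)} = {T0, t₃} := by
            ext x; simp [not_and_or, or_comm]; tauto
          rw [he]
          exact Set.Finite.measure_zero (by simp) volume
        filter_upwards [hmem, hne2] with s hs hne
        have hs' : s ∈ Ioo T0 t₃ :=
          ⟨lt_of_le_of_ne hs.1 (Ne.symm hne.1), lt_of_le_of_ne hs.2 hne.2⟩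
        have hRZ := hRleZ s hs'
        have := mul_le_mul_of_nonneg_left hRZ (hβnn s)
        linarith
      have h3 : (∫ s in T0..t₃, (α s + β s * Z s)) ≤ Z t₃ - (c + ε) := by
        have hgint : IntegrableOn (fun u => β u * Z u + α u) (Ioc T0 t₃) :=
          (hβZI t₃ ht₃T).add hαint.integrableOn
        have h4 := integral_deriv_le_of_monotone Z (fun u => β u * Z u + α u)
          hZmono hZc hZ' hgnn ht₃T.1 hgint
        have h5 : (∫ s in T0..t₃, (α s + β s * Z s))
            = ∫ s in T0..t₃, (β s * Z s + α s) :=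
          intervalIntegral.integral_congr fun s _ => by ring
        rw [h5, hZT0] at *
        linarith [h4]
      linarith
    exact (hclaim t₁ ⟨hT0t₁, le_rfl⟩).le
  -- let ε → 0
  have hRK : R t₁ ≤ Real.exp (B t₁) * (c + A t₁) := by
    refine le_of_forall_pos_le_add fun ε' hε' => ?_
    have he : (0:ℝ) < Real.exp (B t₁) := Real.exp_pos _
    have h6 := hcross (ε' / Real.exp (B t₁)) (by positivity)
    have h7 : Real.exp (B t₁) * (c + ε' / Real.exp (B t₁) + A t₁)
        = Real.exp (B t₁) * (c + A t₁) + ε' := by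
      field_simp
      ring
    rw [h7] at h6
    exact h6
  -- rewrite the bound in the required form
  have ht₁Icc : t₁ ∈ Icc T0 T := ⟨hT0t₁, ht₁T⟩
  have hβub : ∀ᵐ τ ∂(volume : Measure ℝ), τ ∈ Icc T0 T → β τ = bmax τ :=
    ae_imp_of_ae_restrict hβae
  have haub : ∀ᵐ τ ∂(volume : Measure ℝ), τ ∈ Icc T0 T → α τ = a τ :=
    ae_imp_of_ae_restrict hαae
  have hIeq1 : (∫ τ in T0..t₁, bmax τ) = B t₁ := by
    refine (intervalIntegral.integral_congr_ae ?_).symm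
    filter_upwards [hβub] with τ hτ hmem
    refine hτ ?_
    rw [uIoc_of_le hT0t₁] at hmem
    exact ⟨hmem.1.le, hmem.2.trans ht₁T⟩
  have hcongr2 : (∫ s in T0..t₁, a s * Real.exp (∫ τ in s..t₁, bmax τ))
      = ∫ s in T0..t₁, Real.exp (B t₁) * ψ s := by
    refine intervalIntegral.integral_congr_ae ?_
    filter_upwards [haub] with s hsa hmem
    rw [uIoc_of_le hT0t₁] at hmem
    have hsIcc : s ∈ Icc T0 T := ⟨hmem.1.le, hmem.2.trans ht₁T⟩
    have hin : (∫ τ in s..t₁, bmax τ) = B t₁ - B s := by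
      rw [← hBadd s t₁]
      refine (intervalIntegral.integral_congr_ae ?_).symm
      filter_upwards [hβub] with τ hτ hmemτ
      refine hτ ?_
      rw [uIoc_of_le hmem.2] at hmemτ
      exact ⟨hmem.1.le.trans hmemτ.1.le, hmemτ.2.trans ht₁T⟩
    have hαa : α s = a s := hsa hsIcc
    rw [hin]
    simp only [hψdef]
    rw [sub_eq_add_neg, Real.exp_add, hαa]
    ring
  have hfinal : Real.exp (B t₁) * (c + A t₁)
      = c * Real.exp (∫ τ in T0..t₁, bmax τ)
        + ∫ s in T0..t₁, a s * Real.exp (∫ τ in s..t₁, bmax τ) := by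
    rw [hcongr2, hIeq1, intervalIntegral.integral_const_mul]
    simp only [hAdef]
    ring
  have hρR := hρleR t₁ ht₁Icc
  calc ρ t₁ ≤ R t₁ := hρR
    _ ≤ Real.exp (B t₁) * (c + A t₁) := hRK
    _ = c * Real.exp (∫ τ in T0..t₁, bmax τ)
        + ∫ s in T0..t₁, a s * Real.exp (∫ τ in s..t₁, bmax τ) := hfinal
end
end

section
/- Let ρ : [T0,T] → ℝ be a non-negative absolutely continuous function, let K1, K2, ε : [T0,T] → ℝ₊ be non-negative Lebesgue integrable functions, and let ϵ > 0. Suppose that ρ'(t) ≤ ε(t) + ϵ + K1(t)·ρ(t) + K2(t)·√(ρ(t))·∫_{T0}^t √(ρ(s)) ds for almost every t ∈ [T0,T]. Then for all t ∈ [T0,T] one has √(ρ(t)) ≤ √(ρ(T0)+ϵ)·exp(∫_{T0}^t (K(s)+1) ds) + (√ϵ/2)·∫_{T0}^t exp(∫_s^t (K(τ)+1) dτ) ds + 2·(√(∫_{T0}^t ε(s) ds + ϵ) − √ϵ·exp(∫_{T0}^t (K(τ)+1) dτ)) + 2·∫_{T0}^t (K(s)+1)·exp(∫_s^t (K(τ)+1)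 dτ)·√(∫_{T0}^s ε(τ) dτ + ϵ) ds, where K(t) := max{K1(t)/2, K2(t)/2} for almost every t ∈ [T0,T]. -/
open MeasureTheory Set
open scoped RealInnerProductSpace ENNReal Pointwise NNReal

noncomputable section

open intervalIntegral

/-- L1 approximation of an interval-integrable function by a continuous function. -/
lemma approx_cont (a b : ℝ) (hab : a ≤ b) (p : ℝ → ℝ)
    (hp : IntervalIntegrable p volume a b) {δ : ℝ} (hδ : 0 < δ) :
    ∃ g : ℝ → ℝ, Continuous g ∧ (∫ s in a..b, |p s - g s|) ≤ δ := by
  have hind : Integrable ((Ioc a b).indicator p) volume := by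
    rw [integrable_indicator_iff measurableSet_Ioc]
    exact (intervalIntegrable_iff_integrableOn_Ioc_of_le hab).mp hp
  obtain ⟨g, -, hgint, hgcont, hgi⟩ :=
    hind.exists_hasCompactSupport_integral_sub_le hδ
  refine ⟨g, hgcont, ?_⟩
  rw [intervalIntegral.integral_of_le hab]
  calc ∫ s in Ioc a b, |p s - g s| ∂volume
      = ∫ s in Ioc a b, ‖(Ioc a b).indicator p s - g s‖ ∂volume := by
        apply setIntegral_congr_fun measurableSet_Ioc
        intro s hs
        simp only [indicator_of_mem hs, Real.norm_eq_abs]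
    _ ≤ ∫ s, ‖(Ioc a b).indicator p s - g s‖ ∂volume := by
        apply setIntegral_le_integral ((hind.sub hgi).norm)
        filter_upwards with s using norm_nonneg _
    _ ≤ δ := hgint

lemma prim_hasDerivAt {g : ℝ → ℝ} (hg : Continuous g) (a x : ℝ) :
    HasDerivAt (fun u => ∫ s in a..u, g s) (g x) x :=
  integral_hasDerivAt_right (hg.intervalIntegrable a x)
    (hg.stronglyMeasurable.stronglyMeasurableAtFilter) hg.continuousAt

/-- Chain rule in integral form for primitives of integrable functions. -/
lemma integral_chain_rule (a b : ℝ) (hab : a ≤ b) (p : ℝ → ℝ)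
    (hp : IntervalIntegrable p volume a b) (c : ℝ) (φ φ' : ℝ → ℝ)
    (hφ : ∀ x, HasDerivAt φ (φ' x) x) (M : ℝ≥0) (hM : ∀ x, |φ' x| ≤ M)
    (L : ℝ≥0) (hL : LipschitzWith L φ') {t : ℝ} (ht : t ∈ Icc a b) :
    φ (c + ∫ s in a..t, p s) = φ c + ∫ s in a..t, φ' (c + ∫ u in a..s, p u) * p s := by
  obtain ⟨hat, htb⟩ := ht
  set P : ℝ → ℝ := fun s => c + ∫ u in a..s, p u with hPdef
  have hPc : ContinuousOn P (Icc a b) := by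
    apply ContinuousOn.add continuousOn_const
    have := intervalIntegral.continuousOn_primitive_interval
      (f := p) (μ := volume) (a := a) (b := b) ?_
    · rwa [uIcc_of_le hab] at this
    · rw [uIcc_of_le hab]
      exact (intervalIntegrable_iff_integrableOn_Icc_of_le hab).mp hp
  have hφ'c : Continuous φ' := hL.continuous
  have hpt : IntervalIntegrable p volume a t :=
    hp.mono_set (by rw [uIcc_of_le hab, uIcc_of_le hat]; exact Icc_subset_Icc le_rfl htb)
  have hsub : uIcc a t ⊆ Icc a b := by
    rw [uIcc_of_le hat]; exact Icc_subset_Icc le_rfl htb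
  have hint : IntervalIntegrable (fun s => φ' (P s) * p s) volume a t := by
    apply hpt.continuousOn_mul
    exact hφ'c.comp_continuousOn (hPc.mono hsub)
  have hφlip : LipschitzWith M φ := by
    apply lipschitzWith_of_nnnorm_deriv_le (fun x => (hφ x).differentiableAt)
    intro x
    rw [← NNReal.coe_le_coe, coe_nnnorm, (hφ x).deriv, Real.norm_eq_abs]
    exact hM x
  have hsubu : uIcc a t ⊆ uIcc a b := by
    rw [uIcc_of_le hab, uIcc_of_le hat]; exact Icc_subset_Icc le_rfl htb
  set Np : ℝ := ∫ s in a..b, |p s| with hNp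
  have hNpnn : 0 ≤ Np := intervalIntegral.integral_nonneg hab (fun x _ => abs_nonneg _)
  set X : ℝ := φ (P t) - φ c - ∫ s in a..t, φ' (P s) * p s with hX
  have key : ∀ δ : ℝ, 0 < δ → |X| ≤ (2 * M + L * Np) * δ := by
    intro δ hδ
    obtain ⟨g, hgc, hgδ⟩ := approx_cont a b hab p hp hδ
    set Pg : ℝ → ℝ := fun s => c + ∫ u in a..s, g u with hPgdef
    have hgib : IntervalIntegrable g volume a b := hgc.intervalIntegrable a b
    have hdiffi : IntervalIntegrable (fun s => |g s - p s|) volume a b :=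
      (hgib.sub hp).abs
    have hflip : (∫ u in a..b, |g u - p u|) ≤ δ := by
      refine le_trans (le_of_eq ?_) hgδ
      exact intervalIntegral.integral_congr (fun x _ => abs_sub_comm _ _)
    have hclose : ∀ s, a ≤ s → s ≤ b → |Pg s - P s| ≤ δ := by
      intro s has hsb
      have hps : IntervalIntegrable p volume a s := hp.mono_set
        (by rw [uIcc_of_le hab, uIcc_of_le has]; exact Icc_subset_Icc le_rfl hsb)
      have heq : Pg s - P s = ∫ u in a..s, (g u - p u) := by
        simp only [hPgdef, hPdef]
        rw [intervalIntegral.integral_sub (hgc.intervalIntegrable a s) hps]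
        ring
      rw [heq]
      calc |∫ u in a..s, (g u - p u)| ≤ ∫ u in a..s, |g u - p u| :=
            intervalIntegral.abs_integral_le_integral_abs has
        _ ≤ ∫ u in a..b, |g u - p u| := by
            apply intervalIntegral.integral_mono_interval le_rfl has hsb ?_ hdiffi
            filter_upwards with x using abs_nonneg _
        _ ≤ δ := hflip
    have hPgd : ∀ s, HasDerivAt Pg (g s) s :=
      fun s => ((prim_hasDerivAt hgc a s).const_add c)
    have hPgcont : Continuous Pg :=
      continuous_iff_continuousAt.mpr (fun s => (hPgd s).continuousAt)
    have hcomp : ∀ s, HasDerivAt (fun u => φ (Pg u)) (φ' (Pg s) * g s) s :=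
      fun s => (hφ (Pg s)).comp s (hPgd s)
    have hFTC : ∫ s in a..t, φ' (Pg s) * g s = φ (Pg t) - φ (Pg a) :=
      intervalIntegral.integral_eq_sub_of_hasDerivAt (fun x _ => hcomp x)
        (((hφ'c.comp hPgcont).mul hgc).intervalIntegrable a t)
    have hPga : Pg a = c := by simp [hPgdef]
    have hXeq : X = (φ (P t) - φ (Pg t)) +
        ((∫ s in a..t, φ' (Pg s) * g s) - ∫ s in a..t, φ' (P s) * p s) := by
      rw [hFTC, hPga]; ring
    have hterm1 : |φ (P t) - φ (Pg t)| ≤ M * δ := by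
      have := hφlip.dist_le_mul (P t) (Pg t)
      rw [Real.dist_eq, Real.dist_eq] at this
      refine this.trans ?_
      have := hclose t hat htb
      rw [abs_sub_comm] at this
      exact mul_le_mul_of_nonneg_left this M.coe_nonneg
    have hint2 : IntervalIntegrable (fun s => φ' (Pg s) * g s) volume a t :=
      ((hφ'c.comp hPgcont).mul hgc).intervalIntegrable a t
    have hterm2 : |(∫ s in a..t, φ' (Pg s) * g s) - ∫ s in a..t, φ' (P s) * p s|
        ≤ M * δ + L * δ * Np := by
      rw [← intervalIntegral.integral_sub hint2 hint]
      have hptw : ∀ x ∈ Icc a t,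
          |φ' (Pg x) * g x - φ' (P x) * p x| ≤ M * |g x - p x| + (L * δ) * |p x| := by
        intro x hx
        have hxb : x ∈ Icc a b := ⟨hx.1, hx.2.trans htb⟩
        have h1 : |φ' (Pg x)| ≤ M := hM _
        have h2 : |φ' (Pg x) - φ' (P x)| ≤ L * δ := by
          have := hL.dist_le_mul (Pg x) (P x)
          rw [Real.dist_eq, Real.dist_eq] at this
          refine this.trans ?_
          exact mul_le_mul_of_nonneg_left (hclose x hxb.1 hxb.2) L.coe_nonneg
        calc |φ' (Pg x) * g x - φ' (P x) * p x|
            = |φ' (Pg x) * (g x - p x) + (φ' (Pg x) - φ' (P x)) * p x| := by ring_nf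
          _ ≤ |φ' (Pg x) * (g x - p x)| + |(φ' (Pg x) - φ' (P x)) * p x| := abs_add_le _ _
          _ = |φ' (Pg x)| * |g x - p x| + |φ' (Pg x) - φ' (P x)| * |p x| := by
              rw [abs_mul, abs_mul]
          _ ≤ M * |g x - p x| + (L * δ) * |p x| :=
              add_le_add (mul_le_mul_of_nonneg_right h1 (abs_nonneg _))
                (mul_le_mul_of_nonneg_right h2 (abs_nonneg _))
      calc |∫ s in a..t, (φ' (Pg s) * g s - φ' (P s) * p s)|
          ≤ ∫ s in a..t, |φ' (Pg s) * g s - φ' (P s) * p s| :=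
            intervalIntegral.abs_integral_le_integral_abs hat
        _ ≤ ∫ s in a..t, (M * |g s - p s| + (L * δ) * |p s|) := by
            apply intervalIntegral.integral_mono_on hat (hint2.sub hint).abs
            · exact ((hdiffi.mono_set hsubu).const_mul _).add ((hp.abs.mono_set hsubu).const_mul _)
            · exact hptw
        _ = M * (∫ s in a..t, |g s - p s|) + (L * δ) * ∫ s in a..t, |p s| := by
            rw [intervalIntegral.integral_add ((hdiffi.mono_set hsubu).const_mul _)
              ((hp.abs.mono_set hsubu).const_mul _),
              intervalIntegral.integral_const_mul, intervalIntegral.integral_const_mul]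
        _ ≤ M * δ + (L * δ) * Np := by
            gcongr
            · refine le_trans ?_ hflip
              apply intervalIntegral.integral_mono_interval le_rfl hat htb ?_ hdiffi
              filter_upwards with x using abs_nonneg _
            · apply intervalIntegral.integral_mono_interval le_rfl hat htb ?_ hp.abs
              filter_upwards with x using abs_nonneg _
    calc |X| ≤ |φ (P t) - φ (Pg t)| +
        |(∫ s in a..t, φ' (Pg s) * g s) - ∫ s in a..t, φ' (P s) * p s| := by
          rw [hXeq]; exact abs_add_le _ _
      _ ≤ M * δ + (M * δ + L * δ * Np) := add_le_add hterm1 hterm2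
      _ = (2 * M + L * Np) * δ := by ring
  have hX0 : X = 0 := by
    rw [← abs_nonpos_iff]
    apply le_of_forall_pos_le_add
    intro η hη
    rcases le_or_gt (2 * (M:ℝ) + L * Np) 0 with hC | hC
    · have := key 1 one_pos
      nlinarith
    · have := key (η / (2 * M + L * Np)) (div_pos hη hC)
      rw [mul_div_cancel₀ _ hC.ne'] at this
      linarith
  have : φ (P t) - φ c - (∫ s in a..t, φ' (P s) * p s) = 0 := hX0
  simp only [hPdef] at this ⊢
  linarith

lemma prim_continuousOn {p : ℝ → ℝ} {a b : ℝ} (hab : a ≤ b)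
    (hp : IntervalIntegrable p volume a b) (c : ℝ) :
    ContinuousOn (fun s => c + ∫ u in a..s, p u) (Icc a b) := by
  apply ContinuousOn.add continuousOn_const
  have := intervalIntegral.continuousOn_primitive_interval
    (f := p) (μ := volume) (a := a) (b := b) ?_
  · rwa [uIcc_of_le hab] at this
  · rw [uIcc_of_le hab]
    exact (intervalIntegrable_iff_integrableOn_Icc_of_le hab).mp hp

/-- Product rule in integral form for primitives of integrable functions. -/
lemma integral_product_rule (a b : ℝ) (hab : a ≤ b) (p q : ℝ → ℝ)
    (hp : IntervalIntegrable p volume a b) (hq : IntervalIntegrable q volume a b)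
    (c d : ℝ) {t : ℝ} (ht : t ∈ Icc a b) :
    (c + ∫ s in a..t, p s) * (d + ∫ s in a..t, q s) =
      c * d + ∫ s in a..t,
        (p s * (d + ∫ u in a..s, q u) + (c + ∫ u in a..s, p u) * q s) := by
  obtain ⟨hat, htb⟩ := ht
  have hmono : ∀ s, a ≤ s → s ≤ b → uIcc a s ⊆ uIcc a b := by
    intro s has hsb
    rw [uIcc_of_le hab, uIcc_of_le has]; exact Icc_subset_Icc le_rfl hsb
  have hpn : 0 ≤ ∫ s in a..b, |p s| :=
    intervalIntegral.integral_nonneg hab fun x _ => abs_nonneg _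
  have hqn : 0 ≤ ∫ s in a..b, |q s| :=
    intervalIntegral.integral_nonneg hab fun x _ => abs_nonneg _
  set R : ℝ := |c| + |d| + ((∫ s in a..b, |p s|) + ∫ s in a..b, |q s|) with hR
  have hR0 : 0 ≤ R := by positivity
  set cl : ℝ → ℝ := fun v => max (min v R) (-R) with hcl
  have hclle : ∀ v, |cl v| ≤ R := by
    intro v
    rw [abs_le]
    exact ⟨le_max_right _ _, max_le (min_le_right _ _) (neg_le_self hR0)⟩
  have hcleq : ∀ v, |v| ≤ R → cl v = v := by
    intro v hv
    rw [abs_le] at hv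
    simp only [hcl]
    rw [min_eq_left hv.2, max_eq_left hv.1]
  have hcllip : ∀ u v : ℝ, |cl u - cl v| ≤ |u - v| := by
    intro u v
    refine (abs_max_sub_max_le_abs _ _ _).trans ?_
    refine (abs_min_sub_min_le_max _ _ _ _).trans ?_
    simp
  set φ' : ℝ → ℝ := fun v => 2 * cl v with hφ'
  have hφ'cont : Continuous φ' := by
    apply continuous_const.mul
    exact (continuous_id.min continuous_const).max continuous_const
  set φ : ℝ → ℝ := fun u => ∫ v in (0:ℝ)..u, φ' v with hφdef
  have hφd : ∀ x, HasDerivAt φ (φ' x) x := fun x => prim_hasDerivAt hφ'cont 0 x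
  have hM : ∀ x, |φ' x| ≤ ((2*R).toNNReal : ℝ) := by
    intro x
    rw [Real.coe_toNNReal _ (by positivity)]
    rw [hφ', abs_mul, abs_two]
    nlinarith [hclle x, abs_nonneg (cl x)]
  have hL : LipschitzWith 2 φ' := by
    apply LipschitzWith.of_dist_le_mul
    intro u v
    rw [Real.dist_eq, Real.dist_eq]
    have := hcllip u v
    have h2 : |φ' u - φ' v| = 2 * |cl u - cl v| := by
      have : φ' u - φ' v = 2 * (cl u - cl v) := by simp only [hφ']; ring
      rw [this, abs_mul, abs_two]
    rw [h2]
    push_cast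
    nlinarith [abs_nonneg (cl u - cl v)]
  have hsq : ∀ u : ℝ, |u| ≤ R → φ u = u^2 := by
    intro u hu
    have h1 : φ u = ∫ v in (0:ℝ)..u, 2 * v := by
      apply intervalIntegral.integral_congr
      intro v hv
      have hvu : |v| ≤ |u| := by
        rw [abs_le] at *
        rcases mem_uIcc.mp hv with ⟨h1, h2⟩ | ⟨h1, h2⟩ <;>
          constructor <;> linarith [hu.1, hu.2, neg_abs_le u, le_abs_self u]
      simp only [hφ']
      rw [hcleq v (hvu.trans hu)]
    rw [h1]
    have : ∀ v : ℝ, HasDerivAt (fun x : ℝ => x^2) (2*v) v := by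
      intro v
      simpa [mul_comm] using hasDerivAt_pow 2 v
    rw [intervalIntegral.integral_eq_sub_of_hasDerivAt (fun v _ => this v)
      ((continuous_const.mul continuous_id).intervalIntegrable 0 u)]
    norm_num
  set P : ℝ → ℝ := fun s => c + ∫ u in a..s, p u with hP
  set Q : ℝ → ℝ := fun s => d + ∫ u in a..s, q u with hQ
  set PQ : ℝ → ℝ := fun s => (c + d) + ∫ u in a..s, (p u + q u) with hPQdef
  have hPQ : ∀ s, a ≤ s → s ≤ b → PQ s = P s + Q s := by
    intro s has hsb
    simp only [hPQdef, hP, hQ]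
    rw [intervalIntegral.integral_add (hp.mono_set (hmono s has hsb))
      (hq.mono_set (hmono s has hsb))]
    ring
  -- bounds
  have hbnd : ∀ (r : ℝ → ℝ), IntervalIntegrable r volume a b →
      ∀ s, a ≤ s → s ≤ b → |∫ u in a..s, r u| ≤ ∫ u in a..b, |r u| := by
    intro r hr s has hsb
    calc |∫ u in a..s, r u| ≤ ∫ u in a..s, |r u| :=
        intervalIntegral.abs_integral_le_integral_abs has
      _ ≤ ∫ u in a..b, |r u| := by
          apply intervalIntegral.integral_mono_interval le_rfl has hsb ?_ hr.abs
          filter_upwards with x using abs_nonneg _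
  have hPb : ∀ s, a ≤ s → s ≤ b → |P s| ≤ R := by
    intro s has hsb
    have := hbnd p hp s has hsb
    calc |P s| ≤ |c| + |∫ u in a..s, p u| := abs_add_le _ _
      _ ≤ R := by rw [hR]; linarith [abs_nonneg d, hqn]
  have hQb : ∀ s, a ≤ s → s ≤ b → |Q s| ≤ R := by
    intro s has hsb
    have := hbnd q hq s has hsb
    calc |Q s| ≤ |d| + |∫ u in a..s, q u| := abs_add_le _ _
      _ ≤ R := by rw [hR]; linarith [abs_nonneg c, hpn]
  have hPQb : ∀ s, a ≤ s → s ≤ b → |PQ s| ≤ R := by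
    intro s has hsb
    have h1 := hbnd (fun u => p u + q u) (hp.add hq) s has hsb
    have h2 : (∫ u in a..b, |p u + q u|) ≤ (∫ u in a..b, |p u|) + ∫ u in a..b, |q u| := by
      rw [← intervalIntegral.integral_add hp.abs hq.abs]
      apply intervalIntegral.integral_mono_on hab (hp.add hq).abs (hp.abs.add hq.abs)
      intro x _
      exact abs_add_le _ _
    calc |PQ s| ≤ |c + d| + |∫ u in a..s, (p u + q u)| := abs_add_le _ _
      _ ≤ (|c| + |d|) + ((∫ u in a..b, |p u|) + ∫ u in a..b, |q u|) := by
          have := abs_add_le c d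
          linarith
      _ = R := by rw [hR]
  -- chain rule applications
  have e1 := integral_chain_rule a b hab (fun s => p s + q s) (hp.add hq) (c + d)
    φ φ' hφd _ hM 2 hL ⟨hat, htb⟩
  have e2 := integral_chain_rule a b hab p hp c φ φ' hφd _ hM 2 hL ⟨hat, htb⟩
  have e3 := integral_chain_rule a b hab q hq d φ φ' hφd _ hM 2 hL ⟨hat, htb⟩
  -- rewrite the φ values as squares
  beta_reduce at e1
  rw [show ((c+d) + ∫ s in a..t, (p s + q s)) = PQ t from rfl] at e1
  rw [show (c + ∫ s in a..t, p s) = P t from rfl] at e2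
  rw [show (d + ∫ s in a..t, q s) = Q t from rfl] at e3
  rw [hsq _ (hPQb t hat htb), hsq (c+d) (by rw [hR]; have := abs_add_le c d; linarith)] at e1
  rw [hsq _ (hPb t hat htb), hsq c (by rw [hR]; linarith [abs_nonneg d])] at e2
  rw [hsq _ (hQb t hat htb), hsq d (by rw [hR]; linarith [abs_nonneg c])] at e3
  -- integrabilities on a..t
  have hIccu : uIcc a t ⊆ uIcc a b := by
    rw [uIcc_of_le hab, uIcc_of_le hat]; exact Icc_subset_Icc le_rfl htb
  have hIcc : uIcc a t ⊆ Icc a b := by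
    rw [uIcc_of_le hat]; exact Icc_subset_Icc le_rfl htb
  have hPcont : ContinuousOn P (Icc a b) := prim_continuousOn hab hp c
  have hQcont : ContinuousOn Q (Icc a b) := prim_continuousOn hab hq d
  have hPQcont : ContinuousOn PQ (Icc a b) := prim_continuousOn hab (hp.add hq) (c + d)
  have I1 : IntervalIntegrable
      (fun s => φ' ((c + d) + ∫ u in a..s, (p u + q u)) * (p s + q s)) volume a t :=
    ((hp.add hq).mono_set hIccu).continuousOn_mul
      (hφ'cont.comp_continuousOn (hPQcont.mono hIcc))
  have I2 : IntervalIntegrable (fun s => φ' (c + ∫ u in a..s, p u) * p s) volume a t :=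
    (hp.mono_set hIccu).continuousOn_mul
      (hφ'cont.comp_continuousOn (hPcont.mono hIcc))
  have I3 : IntervalIntegrable (fun s => φ' (d + ∫ u in a..s, q u) * q s) volume a t :=
    (hq.mono_set hIccu).continuousOn_mul
      (hφ'cont.comp_continuousOn (hQcont.mono hIcc))
  have I4 : IntervalIntegrable (fun s => p s * Q s + P s * q s) volume a t :=
    ((hp.mono_set hIccu).mul_continuousOn (hQcont.mono hIcc)).add
      ((hq.mono_set hIccu).continuousOn_mul (hPcont.mono hIcc))
  have hcomb : (∫ s in a..t, φ' ((c + d) + ∫ u in a..s, (p u + q u)) * (p s + q s))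
      - (∫ s in a..t, φ' (c + ∫ u in a..s, p u) * p s)
      - (∫ s in a..t, φ' (d + ∫ u in a..s, q u) * q s)
      = 2 * ∫ s in a..t, (p s * Q s + P s * q s) := by
    rw [← intervalIntegral.integral_sub I1 I2, ← intervalIntegral.integral_sub (I1.sub I2) I3,
      ← intervalIntegral.integral_const_mul]
    apply intervalIntegral.integral_congr
    intro s hs
    have hsIcc : s ∈ Icc a b := hIcc hs
    have h1 : φ' ((c + d) + ∫ u in a..s, (p u + q u)) = 2 * (P s + Q s) := by
      have h0 : (c + d) + ∫ u in a..s, (p u + q u) = PQ s := rfl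
      rw [h0]
      simp only [hφ']
      rw [hcleq _ (hPQb s hsIcc.1 hsIcc.2), hPQ s hsIcc.1 hsIcc.2]
    have h2 : φ' (c + ∫ u in a..s, p u) = 2 * P s := by
      have h0 : c + ∫ u in a..s, p u = P s := rfl
      rw [h0]
      simp only [hφ']
      rw [hcleq _ (hPb s hsIcc.1 hsIcc.2)]
    have h3 : φ' (d + ∫ u in a..s, q u) = 2 * Q s := by
      have h0 : d + ∫ u in a..s, q u = Q s := rfl
      rw [h0]
      simp only [hφ']
      rw [hcleq _ (hQb s hsIcc.1 hsIcc.2)]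
    simp only [h1, h2, h3]
    ring
  have e4 : (PQ t)^2 = (P t)^2 + 2 * (P t * Q t) + (Q t)^2 := by
    rw [hPQ t hat htb]; ring
  show P t * Q t = c * d + ∫ s in a..t, (p s * Q s + P s * q s)
  linarith [e1, e2, e3, hcomb, e4]

/-- Square root of a primitive staying above `ϵ>0`, in integral form. -/
lemma sqrt_primitive (a b : ℝ) (hab : a ≤ b) (p : ℝ → ℝ)
    (hp : IntervalIntegrable p volume a b) (c ϵ : ℝ) (hϵ : 0 < ϵ) (hc : ϵ ≤ c)
    (hlow : ∀ s ∈ Icc a b, ϵ ≤ c + ∫ u in a..s, p u) {t : ℝ} (ht : t ∈ Icc a b) :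
    Real.sqrt (c + ∫ s in a..t, p s) =
      Real.sqrt c + ∫ s in a..t, p s / (2 * Real.sqrt (c + ∫ u in a..s, p u)) := by
  obtain ⟨hat, htb⟩ := ht
  have hse : 0 < Real.sqrt ϵ := Real.sqrt_pos.mpr hϵ
  set g₁ : ℝ → ℝ := fun v => 1 / (2 * Real.sqrt (max v ϵ)) with hg₁
  have hmaxpos : ∀ v : ℝ, 0 < Real.sqrt (max v ϵ) := fun v =>
    Real.sqrt_pos.mpr (lt_of_lt_of_le hϵ (le_max_right _ _))
  have hmaxge : ∀ v : ℝ, Real.sqrt ϵ ≤ Real.sqrt (max v ϵ) := fun v =>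
    Real.sqrt_le_sqrt (le_max_right _ _)
  have hg₁cont : Continuous g₁ := by
    apply continuous_const.div
    · exact continuous_const.mul ((continuous_id.max continuous_const).sqrt)
    · intro v
      exact ne_of_gt (by positivity)
  set ψ : ℝ → ℝ := fun u => Real.sqrt ϵ + ∫ v in ϵ..u, g₁ v with hψ
  have hψd : ∀ x, HasDerivAt ψ (g₁ x) x := fun x =>
    (prim_hasDerivAt hg₁cont ϵ x).const_add _
  have hψeq : ∀ u, ϵ ≤ u → ψ u = Real.sqrt u := by
    intro u hu
    have hderiv : ∀ v ∈ uIcc ϵ u, HasDerivAt Real.sqrt (g₁ v) v := by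
      intro v hv
      rw [uIcc_of_le hu] at hv
      have hv0 : ϵ ≤ v := hv.1
      have := Real.hasDerivAt_sqrt (ne_of_gt (lt_of_lt_of_le hϵ hv0))
      convert this using 1
      rw [hg₁]
      simp only
      rw [max_eq_left hv0]
    have := intervalIntegral.integral_eq_sub_of_hasDerivAt hderiv
      (hg₁cont.intervalIntegrable ϵ u)
    rw [hψ]
    simp only
    rw [this]
    ring
  have hM : ∀ x, |g₁ x| ≤ ((1 / (2 * Real.sqrt ϵ)).toNNReal : ℝ) := by
    intro x
    rw [Real.coe_toNNReal _ (by positivity)]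
    rw [abs_of_pos (by positivity : (0:ℝ) < g₁ x)]
    rw [hg₁]
    simp only
    apply div_le_div_of_nonneg_left one_pos.le (by positivity)
    have := hmaxge x
    nlinarith
  have hL : LipschitzWith ((1 / (4 * ϵ * Real.sqrt ϵ)).toNNReal) g₁ := by
    apply LipschitzWith.of_dist_le_mul
    intro u v
    rw [Real.dist_eq, Real.dist_eq, Real.coe_toNNReal _ (by positivity)]
    set A := Real.sqrt (max u ϵ)
    set B := Real.sqrt (max v ϵ)
    have hA : Real.sqrt ϵ ≤ A := hmaxge u
    have hB : Real.sqrt ϵ ≤ B := hmaxge v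
    have hA2 : A^2 = max u ϵ := Real.sq_sqrt (le_trans hϵ.le (le_max_right _ _))
    have hB2 : B^2 = max v ϵ := Real.sq_sqrt (le_trans hϵ.le (le_max_right _ _))
    have hmax : |max u ϵ - max v ϵ| ≤ |u - v| := abs_max_sub_max_le_abs _ _ _
    have he2 : (Real.sqrt ϵ)^2 = ϵ := Real.sq_sqrt hϵ.le
    have hA0 : A ≠ 0 := ne_of_gt (lt_of_lt_of_le hse hA)
    have hB0 : B ≠ 0 := ne_of_gt (lt_of_lt_of_le hse hB)
    have hdiff : g₁ u - g₁ v = (B - A) / (2 * A * B) := by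
      rw [hg₁]
      simp only
      field_simp
      ring
    rw [hdiff, abs_div, abs_of_pos (by positivity : (0:ℝ) < 2 * A * B)]
    have hBA : |B - A| * (A + B) ≤ |u - v| := by
      have : |B - A| * (A + B) = |B^2 - A^2| := by
        rw [← abs_of_pos (by positivity : (0:ℝ) < A + B), ← abs_mul]
        congr 1
        ring
      rw [this, hA2, hB2, abs_sub_comm]
      exact hmax
    have hABden : 2 * ϵ ≤ 2 * A * B := by nlinarith
    have hAB2e : 2 * Real.sqrt ϵ ≤ A + B := by linarith
    have h1 : |B - A| ≤ |u - v| / (2 * Real.sqrt ϵ) := by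
      rw [le_div_iff₀ (by positivity)]
      calc |B - A| * (2 * Real.sqrt ϵ) ≤ |B - A| * (A + B) := by
            apply mul_le_mul_of_nonneg_left hAB2e (abs_nonneg _)
        _ ≤ |u - v| := hBA
    calc |B - A| / (2 * A * B) ≤ (|u - v| / (2 * Real.sqrt ϵ)) / (2 * ϵ) := by
          apply div_le_div₀ (by positivity) h1 (by positivity) hABden
      _ = |u - v| / (2 * Real.sqrt ϵ * (2 * ϵ)) := div_div _ _ _
      _ = 1 / (4 * ϵ * Real.sqrt ϵ) * |u - v| := by
          rw [one_div_mul_eq_div]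
          congr 1
          ring
  have e := integral_chain_rule a b hab p hp c ψ g₁ hψd _ hM _ hL ⟨hat, htb⟩
  rw [hψeq _ (by simpa using hlow t ⟨hat, htb⟩), hψeq c hc] at e
  rw [e]
  congr 1
  apply intervalIntegral.integral_congr
  intro s hs
  have hsIcc : s ∈ Icc a b := by
    rw [uIcc_of_le hat] at hs
    exact ⟨hs.1, hs.2.trans htb⟩
  have hP : ϵ ≤ c + ∫ u in a..s, p u := hlow s hsIcc
  simp only [hg₁]
  rw [max_eq_left hP]
  rw [div_eq_mul_one_div (p s), mul_comm]

/-- Exponential of minus a primitive, in integral form. -/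
lemma expneg_primitive (a b : ℝ) (hab : a ≤ b) (p : ℝ → ℝ)
    (hp : IntervalIntegrable p volume a b) {t : ℝ} (ht : t ∈ Icc a b) :
    Real.exp (-(∫ s in a..t, p s)) =
      1 + ∫ s in a..t, -(Real.exp (-(∫ u in a..s, p u)) * p s) := by
  obtain ⟨hat, htb⟩ := ht
  set C : ℝ := ∫ s in a..b, |p s| with hC
  have hC0 : 0 ≤ C := intervalIntegral.integral_nonneg hab fun x _ => abs_nonneg _
  have hbd : ∀ s, a ≤ s → s ≤ b → |∫ u in a..s, p u| ≤ C := by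
    intro s has hsb
    calc |∫ u in a..s, p u| ≤ ∫ u in a..s, |p u| :=
        intervalIntegral.abs_integral_le_integral_abs has
      _ ≤ C := by
          apply intervalIntegral.integral_mono_interval le_rfl has hsb ?_ hp.abs
          filter_upwards with x using abs_nonneg _
  set cl : ℝ → ℝ := fun v => max (min v C) (-C) with hcl
  have hclbd : ∀ v, -C ≤ cl v ∧ cl v ≤ C :=
    fun v => ⟨le_max_right _ _, max_le (min_le_right _ _) (neg_le_self hC0)⟩
  have hcleq : ∀ v, |v| ≤ C → cl v = v := by
    intro v hv
    rw [abs_le] at hv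
    simp only [hcl]
    rw [min_eq_left hv.2, max_eq_left hv.1]
  have hcllip : ∀ u v : ℝ, |cl u - cl v| ≤ |u - v| := by
    intro u v
    refine (abs_max_sub_max_le_abs _ _ _).trans ?_
    refine (abs_min_sub_min_le_max _ _ _ _).trans ?_
    simp
  set g₂ : ℝ → ℝ := fun v => -Real.exp (-(cl v)) with hg₂
  have hg₂cont : Continuous g₂ := by
    apply Continuous.neg
    exact (((continuous_id.min continuous_const).max continuous_const).neg).rexp
  set ψ : ℝ → ℝ := fun u => Real.exp C + ∫ v in (-C)..u, g₂ v with hψ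
  have hψd : ∀ x, HasDerivAt ψ (g₂ x) x := fun x =>
    (prim_hasDerivAt hg₂cont (-C) x).const_add _
  have hψeq : ∀ u, -C ≤ u → u ≤ C → ψ u = Real.exp (-u) := by
    intro u hu1 hu2
    have hderiv : ∀ v ∈ uIcc (-C) u, HasDerivAt (fun x => Real.exp (-x)) (g₂ v) v := by
      intro v hv
      rw [uIcc_of_le hu1] at hv
      have h1 : HasDerivAt (fun x : ℝ => Real.exp (-x)) (-Real.exp (-v)) v := by
        simpa using ((hasDerivAt_neg v).exp)
      convert h1 using 1
      simp only [hg₂]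
      rw [hcleq v (abs_le.mpr ⟨hv.1, hv.2.trans hu2⟩)]
    have := intervalIntegral.integral_eq_sub_of_hasDerivAt hderiv
      (hg₂cont.intervalIntegrable (-C) u)
    rw [hψ]
    simp only
    rw [this]
    ring
  have hM : ∀ x, |g₂ x| ≤ ((Real.exp C).toNNReal : ℝ) := by
    intro x
    rw [Real.coe_toNNReal _ (Real.exp_pos C).le]
    rw [hg₂]
    simp only [abs_neg, Real.abs_exp]
    apply Real.exp_le_exp.mpr
    linarith [(hclbd x).1]
  have hexplip : ∀ x y : ℝ, x ≤ C → y ≤ C → |Real.exp x - Real.exp y| ≤ Real.exp C * |x - y| := by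
    have key : ∀ x y : ℝ, x ≤ y → y ≤ C → Real.exp y - Real.exp x ≤ Real.exp C * (y - x) := by
      intro x y hxy hyC
      have h1 : 1 + (x - y) ≤ Real.exp (x - y) := by
        have := Real.add_one_le_exp (x - y)
        linarith
      have h2 : Real.exp y * (1 + (x - y)) ≤ Real.exp y * Real.exp (x - y) := by
        apply mul_le_mul_of_nonneg_left h1 (Real.exp_pos y).le
      rw [← Real.exp_add] at h2
      simp only [add_sub_cancel] at h2
      have h3 : Real.exp y ≤ Real.exp C := Real.exp_le_exp.mpr hyC
      nlinarith [(Real.exp_pos y).le]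
    intro x y hx hy
    rcases le_total x y with h | h
    · rw [abs_sub_comm, abs_of_nonneg (sub_nonneg.mpr (Real.exp_le_exp.mpr h)),
        abs_sub_comm, abs_of_nonneg (sub_nonneg.mpr h)]
      exact key x y h hy
    · rw [abs_of_nonneg (sub_nonneg.mpr (Real.exp_le_exp.mpr h)),
        abs_of_nonneg (sub_nonneg.mpr h)]
      exact key y x h hx
  have hL : LipschitzWith ((Real.exp C).toNNReal) g₂ := by
    apply LipschitzWith.of_dist_le_mul
    intro u v
    rw [Real.dist_eq, Real.dist_eq, Real.coe_toNNReal _ (Real.exp_pos C).le]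
    have h1 : |g₂ u - g₂ v| = |Real.exp (-(cl u)) - Real.exp (-(cl v))| := by
      simp only [hg₂]
      rw [← abs_neg]
      congr 1
      ring
    rw [h1]
    calc |Real.exp (-(cl u)) - Real.exp (-(cl v))|
        ≤ Real.exp C * |(-(cl u)) - (-(cl v))| := by
          apply hexplip _ _ (by linarith [(hclbd u).1]) (by linarith [(hclbd v).1])
      _ ≤ Real.exp C * |u - v| := by
          apply mul_le_mul_of_nonneg_left ?_ (Real.exp_pos C).le
          rw [show (-(cl u)) - (-(cl v)) = -(cl u - cl v) by ring, abs_neg]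
          exact hcllip u v
  have e := integral_chain_rule a b hab p hp 0 ψ g₂ hψd _ hM _ hL ⟨hat, htb⟩
  simp only [zero_add] at e
  rw [hψeq _ (by linarith [abs_le.mp (hbd t hat htb)] : -C ≤ ∫ s in a..t, p s)
      (by linarith [abs_le.mp (hbd t hat htb)])] at e
  have hψ0 : ψ 0 = 1 := by
    rw [hψeq 0 (neg_nonpos.mpr hC0) hC0, neg_zero, Real.exp_zero]
  rw [hψ0] at e
  rw [e]
  congr 1
  apply intervalIntegral.integral_congr
  intro s hs
  have hsIcc : s ∈ Icc a b := by
    rw [uIcc_of_le hat] at hs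
    exact ⟨hs.1, hs.2.trans htb⟩
  have hb := abs_le.mp (hbd s hsIcc.1 hsIcc.2)
  simp only [hg₂]
  rw [hcleq _ (abs_le.mpr hb)]
  ring

set_option maxHeartbeats 2000000 in
/-- Gronwall-like differential inequality (Lemma 3.3). -/
theorem gronwall_like_differential_inequality (T0 T : ℝ) (hT : T0 < T)
    (ρ ρ' K1 K2 ε : ℝ → ℝ) (ϵ : ℝ) (hϵ : 0 < ϵ)
    (hρnn : ∀ t ∈ Icc T0 T, 0 ≤ ρ t)
    (hρint : IntervalIntegrable ρ' volume T0 T)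
    (hρAC : ∀ t ∈ Icc T0 T, ρ t = ρ T0 + ∫ s in T0..t, ρ' s)
    (hK1int : IntervalIntegrable K1 volume T0 T) (hK1nn : ∀ t ∈ Icc T0 T, 0 ≤ K1 t)
    (hK2int : IntervalIntegrable K2 volume T0 T) (hK2nn : ∀ t ∈ Icc T0 T, 0 ≤ K2 t)
    (hεint : IntervalIntegrable ε volume T0 T) (hεnn : ∀ t ∈ Icc T0 T, 0 ≤ ε t)
    (hineq : ∀ᵐ t ∂volume, t ∈ Icc T0 T →
      ρ' t ≤ ε t + ϵ + K1 t * ρ t + K2 t * Real.sqrt (ρ t) * ∫ s in T0..t, Real.sqrt (ρ s)) :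
    ∀ t ∈ Icc T0 T,
      Real.sqrt (ρ t) ≤
        Real.sqrt (ρ T0 + ϵ) * Real.exp (∫ s in T0..t, (max (K1 s / 2) (K2 s / 2) + 1)) +
        Real.sqrt ϵ / 2 *
          (∫ s in T0..t, Real.exp (∫ τ in s..t, (max (K1 τ / 2) (K2 τ / 2) + 1))) +
        2 * (Real.sqrt ((∫ s in T0..t, ε s) + ϵ) -
          Real.sqrt ϵ * Real.exp (∫ τ in T0..t, (max (K1 τ / 2) (K2 τ / 2) + 1))) +
        2 * ∫ s in T0..t, (max (K1 s / 2) (K2 s / 2) + 1) *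
          Real.exp (∫ τ in s..t, (max (K1 τ / 2) (K2 τ / 2) + 1)) *
          Real.sqrt ((∫ τ in T0..s, ε τ) + ϵ) := by
  intro t ht
  obtain ⟨hat, htb⟩ := ht
  have hab : T0 ≤ T := hT.le
  have huIcc : uIcc T0 T = Icc T0 T := uIcc_of_le hab
  have hmono : ∀ s, T0 ≤ s → s ≤ T → uIcc T0 s ⊆ uIcc T0 T := by
    intro s has hsb
    rw [uIcc_of_le hab, uIcc_of_le has]; exact Icc_subset_Icc le_rfl hsb
  have hmonoI : ∀ s, T0 ≤ s → s ≤ T → uIcc T0 s ⊆ Icc T0 T := by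
    intro s has hsb
    rw [uIcc_of_le has]; exact Icc_subset_Icc le_rfl hsb
  -- the coefficient κ = K + 1
  set κ : ℝ → ℝ := fun s => max (K1 s / 2) (K2 s / 2) + 1 with hκdef
  have hκint : IntervalIntegrable κ volume T0 T := by
    have h1 := hK1int.div_const 2
    have h2 := hK2int.div_const 2
    have hmax : IntervalIntegrable (fun s => max (K1 s / 2) (K2 s / 2)) volume T0 T :=
      ⟨h1.1.sup h2.1, h1.2.sup h2.2⟩
    exact hmax.add (intervalIntegrable_const)
  have hκ1 : ∀ s ∈ Icc T0 T, 1 ≤ κ s := by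
    intro s hs
    have := hK1nn s hs
    have h1 : (0:ℝ) ≤ K1 s / 2 := by linarith
    simp only [hκdef]
    have := le_max_left (K1 s / 2) (K2 s / 2)
    linarith
  -- basic data
  set p : ℝ → ℝ := fun s => ρ' s + ε s with hpdef
  have hpint : IntervalIntegrable p volume T0 T := hρint.add hεint
  set c : ℝ := ρ T0 + ϵ with hcdef
  have hc : ϵ ≤ c := by
    have := hρnn T0 ⟨le_rfl, hab⟩; simp only [hcdef]; linarith
  set P : ℝ → ℝ := fun s => c + ∫ u in T0..s, p u with hPdef
  set F : ℝ → ℝ := fun s => ∫ u in T0..s, ε u with hFdef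
  have hF0 : ∀ s ∈ Icc T0 T, 0 ≤ F s := by
    intro s hs
    apply intervalIntegral.integral_nonneg hs.1
    intro u hu
    exact hεnn u ⟨hu.1, hu.2.trans hs.2⟩
  have hPeq : ∀ s ∈ Icc T0 T, P s = ρ s + (F s + ϵ) := by
    intro s hs
    simp only [hPdef, hpdef, hFdef]
    rw [intervalIntegral.integral_add (hρint.mono_set (hmono s hs.1 hs.2))
      (hεint.mono_set (hmono s hs.1 hs.2))]
    rw [hρAC s hs]
    simp only [hcdef]
    ring
  have hPlow : ∀ s ∈ Icc T0 T, ϵ ≤ P s := by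
    intro s hs
    rw [hPeq s hs]
    linarith [hρnn s hs, hF0 s hs]
  set y : ℝ → ℝ := fun s => Real.sqrt (P s) with hydef
  set q : ℝ → ℝ := fun u => p u / (2 * Real.sqrt (P u)) with hqdef
  -- integral form of y
  have hy : ∀ s ∈ Icc T0 T, y s = Real.sqrt c + ∫ u in T0..s, q u := by
    intro s hs
    exact sqrt_primitive T0 T hab p hpint c ϵ hϵ hc hPlow hs
  -- E and its integral form
  set E : ℝ → ℝ := fun s => Real.sqrt (ϵ + ∫ u in T0..s, ε u) with hEdef
  set eI : ℝ → ℝ := fun u => ε u / (2 * Real.sqrt (ϵ + ∫ v in T0..u, ε v)) with heIdef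
  have hElow2 : ∀ s ∈ Icc T0 T, ϵ ≤ ϵ + ∫ u in T0..s, ε u := by
    intro s hs
    have := hF0 s hs
    simp only [hFdef] at this
    linarith
  have hE : ∀ s ∈ Icc T0 T, E s = Real.sqrt ϵ + ∫ u in T0..s, eI u := by
    intro s hs
    exact sqrt_primitive T0 T hab ε hεint ϵ ϵ hϵ le_rfl hElow2 hs
  -- B and G
  set B : ℝ → ℝ := fun s => ∫ u in T0..s, κ u with hBdef
  set gI : ℝ → ℝ := fun s => -(Real.exp (-(∫ u in T0..s, κ u)) * κ s) with hgIdef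
  set G : ℝ → ℝ := fun s => 1 + ∫ u in T0..s, gI u with hGdef
  have hG : ∀ s ∈ Icc T0 T, G s = Real.exp (-(B s)) := by
    intro s hs
    exact (expneg_primitive T0 T hab κ hκint hs).symm
  -- Y
  set Y : ℝ → ℝ := fun s => Real.sqrt c + ∫ u in T0..s, (q u + y u) with hYdef
    -- continuity facts
  have hPc : ContinuousOn P (Icc T0 T) := prim_continuousOn hab hpint c
  have hycont : ContinuousOn y (Icc T0 T) := hPc.sqrt
  have hyint : IntervalIntegrable y volume T0 T := by
    apply ContinuousOn.intervalIntegrable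
    rw [huIcc]; exact hycont
  have hqint : IntervalIntegrable q volume T0 T := by
    have hinv : ContinuousOn (fun u => (2 * Real.sqrt (P u))⁻¹) (Icc T0 T) := by
      apply ContinuousOn.inv₀ (continuousOn_const.mul hPc.sqrt)
      intro x hx
      have : 0 < Real.sqrt (P x) := Real.sqrt_pos.mpr (lt_of_lt_of_le hϵ (hPlow x hx))
      show 2 * Real.sqrt (P x) ≠ 0
      positivity
    exact hpint.mul_continuousOn (by rw [huIcc]; exact hinv)
  have hrint : IntervalIntegrable (fun u => q u + y u) volume T0 T := hqint.add hyint
  have hYcont : ContinuousOn Y (Icc T0 T) := prim_continuousOn hab hrint (Real.sqrt c)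
  have hBc : ContinuousOn B (Icc T0 T) := by
    have := prim_continuousOn hab hκint 0
    simp only [zero_add] at this
    exact this
  have hexpBc : ContinuousOn (fun s => Real.exp (-(B s))) (Icc T0 T) :=
    Real.continuous_exp.comp_continuousOn hBc.neg
  have hgIint : IntervalIntegrable gI volume T0 T := by
    have : IntervalIntegrable (fun s => Real.exp (-(B s)) * κ s) volume T0 T :=
      hκint.continuousOn_mul (by rw [huIcc]; exact hexpBc)
    exact this.neg
  have hGcont : ContinuousOn G (Icc T0 T) := prim_continuousOn hab hgIint 1
  have hEcont : ContinuousOn E (Icc T0 T) :=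
    (prim_continuousOn hab hεint ϵ).sqrt
  have hρcont : ContinuousOn ρ (Icc T0 T) := by
    have h1 : ContinuousOn (fun s => ρ T0 + ∫ u in T0..s, ρ' u) (Icc T0 T) :=
      prim_continuousOn hab hρint (ρ T0)
    exact h1.congr hρAC
  have hsqrtρint : IntervalIntegrable (fun u => Real.sqrt (ρ u)) volume T0 T := by
    apply ContinuousOn.intervalIntegrable
    rw [huIcc]; exact hρcont.sqrt
  -- pointwise facts
  have hypos : ∀ s ∈ Icc T0 T, Real.sqrt ϵ ≤ y s := by
    intro s hs
    exact Real.sqrt_le_sqrt (hPlow s hs)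
  have hsε : 0 < Real.sqrt ϵ := Real.sqrt_pos.mpr hϵ
  have hyE : ∀ s ∈ Icc T0 T, E s ≤ y s := by
    intro s hs
    apply Real.sqrt_le_sqrt
    rw [hPeq s hs]
    simp only [hFdef]
    have := hρnn s hs
    linarith
  have hElow : ∀ s ∈ Icc T0 T, Real.sqrt ϵ ≤ E s := by
    intro s hs
    apply Real.sqrt_le_sqrt
    linarith [hF0 s hs]
  have hsqρy : ∀ s ∈ Icc T0 T, Real.sqrt (ρ s) ≤ y s := by
    intro s hs
    apply Real.sqrt_le_sqrt
    rw [hPeq s hs]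
    linarith [hF0 s hs]
  -- Y equals y + ∫ y
  have hYy : ∀ s ∈ Icc T0 T, Y s = y s + ∫ u in T0..s, y u := by
    intro s hs
    simp only [hYdef]
    rw [intervalIntegral.integral_add (hqint.mono_set (hmono s hs.1 hs.2))
      (hyint.mono_set (hmono s hs.1 hs.2))]
    rw [hy s hs]
    ring
  have hyY : ∀ s ∈ Icc T0 T, y s ≤ Y s := by
    intro s hs
    rw [hYy s hs]
    have : 0 ≤ ∫ u in T0..s, y u := by
      apply intervalIntegral.integral_nonneg hs.1
      intro u hu
      exact Real.sqrt_nonneg _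
    linarith
    -- fI
  set fI : ℝ → ℝ := fun s => ε s / E s + Real.sqrt ϵ / 2 with hfIdef
  -- the a.e. pointwise inequality
  have haept : ∀ᵐ s ∂volume, s ∈ Icc T0 T →
      (q s + y s) * G s + Y s * gI s ≤ fI s * G s := by
    filter_upwards [hineq] with s hineqs hs
    have hEs : 0 < E s := lt_of_lt_of_le hsε (hElow s hs)
    have hys : 0 < y s := lt_of_lt_of_le hsε (hypos s hs)
    have hρs : 0 ≤ ρ s := hρnn s hs
    have hIsnn : 0 ≤ ∫ u in T0..s, Real.sqrt (ρ u) :=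
      intervalIntegral.integral_nonneg hs.1 (fun u _ => Real.sqrt_nonneg _)
    have hIyIs : (∫ u in T0..s, Real.sqrt (ρ u)) ≤ ∫ u in T0..s, y u := by
      apply intervalIntegral.integral_mono_on hs.1
        (hsqrtρint.mono_set (hmono s hs.1 hs.2)) (hyint.mono_set (hmono s hs.1 hs.2))
      intro u hu
      exact hsqρy u ⟨hu.1, hu.2.trans hs.2⟩
    set Is : ℝ := ∫ u in T0..s, Real.sqrt (ρ u) with hIs
    set Iy : ℝ := ∫ u in T0..s, y u with hIy
    have hIynn : 0 ≤ Iy := le_trans hIsnn hIyIs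
    have hKmax : K1 s ≤ 2 * (κ s - 1) ∧ K2 s ≤ 2 * (κ s - 1) := by
      constructor
      · simp only [hκdef]
        have := le_max_left (K1 s / 2) (K2 s / 2); linarith
      · simp only [hκdef]
        have := le_max_right (K1 s / 2) (K2 s / 2); linarith
    have hκnn1 : 1 ≤ κ s := hκ1 s hs
    have hy2 : y s ^ 2 = P s := Real.sq_sqrt (le_trans hϵ.le (hPlow s hs))
    have hρley2 : ρ s ≤ y s ^ 2 := by
      rw [hy2, hPeq s hs]; linarith [hF0 s hs]
    have hsqρley : Real.sqrt (ρ s) ≤ y s := hsqρy s hs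
    have hps : p s ≤ 2 * ε s + ϵ + K1 s * ρ s + K2 s * Real.sqrt (ρ s) * Is := by
      simp only [hpdef]
      linarith [hineqs hs]
    have hq_le : q s ≤ ε s / E s + Real.sqrt ϵ / 2 + (κ s - 1) * (y s + Iy) := by
      have hq1 : q s ≤ (2 * ε s + ϵ + K1 s * ρ s + K2 s * Real.sqrt (ρ s) * Is) / (2 * y s) := by
        simp only [hqdef]
        exact div_le_div_of_nonneg_right hps (by positivity) |>.trans_eq (by rfl)
      have hsplit : (2 * ε s + ϵ + K1 s * ρ s + K2 s * Real.sqrt (ρ s) * Is) / (2 * y s) =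
          ε s / y s + ϵ / (2 * y s) + (K1 s * ρ s) / (2 * y s) +
            (K2 s * Real.sqrt (ρ s) * Is) / (2 * y s) := by
        field_simp
      have hb1 : ε s / y s ≤ ε s / E s :=
        div_le_div_of_nonneg_left (hεnn s hs) hEs (hyE s hs)
      have hb2 : ϵ / (2 * y s) ≤ Real.sqrt ϵ / 2 := by
        have h1 : ϵ / (2 * y s) ≤ ϵ / (2 * Real.sqrt ϵ) := by
          apply div_le_div_of_nonneg_left hϵ.le (by positivity)
          have := hypos s hs; linarith
        have hmul : Real.sqrt ϵ * Real.sqrt ϵ = ϵ := Real.mul_self_sqrt hϵ.le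
        have h2 : ϵ / (2 * Real.sqrt ϵ) = Real.sqrt ϵ / 2 := by
          rw [div_eq_div_iff (by positivity) (two_ne_zero)]; linear_combination (-2 : ℝ) * hmul
        linarith
      have hκm0 : 0 ≤ 2 * (κ s - 1) := by linarith [hκ1 s hs]
      have hb3 : (K1 s * ρ s) / (2 * y s) ≤ (κ s - 1) * y s := by
        rw [div_le_iff₀ (by positivity)]
        have hK1nn' := hK1nn s hs
        have step : K1 s * ρ s ≤ (2 * (κ s - 1)) * (y s ^ 2) :=
          mul_le_mul hKmax.1 hρley2 hρs hκm0
        have hrw : (κ s - 1) * y s * (2 * y s) = (2 * (κ s - 1)) * (y s ^ 2) := by ring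
        rw [hrw]
        exact step
      have hb4 : (K2 s * Real.sqrt (ρ s) * Is) / (2 * y s) ≤ (κ s - 1) * Iy := by
        rw [div_le_iff₀ (by positivity)]
        have hK2nn' := hK2nn s hs
        have step1 : K2 s * Real.sqrt (ρ s) ≤ (2 * (κ s - 1)) * y s :=
          mul_le_mul hKmax.2 hsqρley (Real.sqrt_nonneg _) hκm0
        have step2 : (K2 s * Real.sqrt (ρ s)) * Is ≤ ((2 * (κ s - 1)) * y s) * Iy :=
          mul_le_mul step1 hIyIs hIsnn (by positivity)
        have hrw : (κ s - 1) * Iy * (2 * y s) = ((2 * (κ s - 1)) * y s) * Iy := by ring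
        rw [hrw]
        exact step2
      have h := hq1
      rw [hsplit] at h
      linarith
    have hYs : Y s = y s + Iy := hYy s hs
    have hr_le : q s + y s ≤ fI s + κ s * Y s := by
      have hyYs : y s ≤ Y s := hyY s hs
      have h6 : (κ s - 1) * Y s + Y s = κ s * Y s := by ring
      have hq_le' : q s ≤ ε s / E s + Real.sqrt ϵ / 2 + (κ s - 1) * Y s := by
        rw [hYs]; exact hq_le
      show q s + y s ≤ ε s / E s + Real.sqrt ϵ / 2 + κ s * Y s
      calc q s + y s ≤ (ε s / E s + Real.sqrt ϵ / 2 + (κ s - 1) * Y s) + Y s :=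
            add_le_add hq_le' hyYs
        _ = ε s / E s + Real.sqrt ϵ / 2 + κ s * Y s := by ring
    have hGs : G s = Real.exp (-(B s)) := hG s hs
    have hgIs : gI s = -(Real.exp (-(B s)) * κ s) := rfl
    calc (q s + y s) * G s + Y s * gI s
        = ((q s + y s) - κ s * Y s) * Real.exp (-(B s)) := by rw [hGs, hgIs]; ring
      _ ≤ fI s * Real.exp (-(B s)) := by
          apply mul_le_mul_of_nonneg_right ?_ (Real.exp_pos _).le
          linarith [hr_le]
      _ = fI s * G s := by rw [hGs]
    -- apply the product rule to Y·G at t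
  have htIcc : t ∈ Icc T0 T := ⟨hat, htb⟩
  have hsubu : uIcc T0 t ⊆ uIcc T0 T := hmono t hat htb
  have hsubIcc : uIcc T0 t ⊆ Icc T0 T := hmonoI t hat htb
  have hut : uIcc T0 t = Icc T0 t := uIcc_of_le hat
  have hIccsub : Icc T0 t ⊆ Icc T0 T := Icc_subset_Icc le_rfl htb
  have hYG' : Y t * G t = Real.sqrt c * 1 +
      ∫ s in T0..t, ((q s + y s) * G s + Y s * gI s) :=
    integral_product_rule T0 T hab (fun u => q u + y u) gI hrint hgIint
      (Real.sqrt c) 1 htIcc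
  have ILHS : IntervalIntegrable (fun s => (q s + y s) * G s + Y s * gI s) volume T0 t := by
    apply IntervalIntegrable.add
    · exact (hrint.mono_set hsubu).mul_continuousOn
        (by rw [hut]; exact hGcont.mono hIccsub)
    · exact (hgIint.mono_set hsubu).continuousOn_mul
        (by rw [hut]; exact hYcont.mono hIccsub)
  have hEinvcont : ContinuousOn (fun s => (E s)⁻¹) (Icc T0 T) := by
    apply hEcont.inv₀
    intro x hx
    exact ne_of_gt (lt_of_lt_of_le hsε (hElow x hx))
  have hfIint : IntervalIntegrable fI volume T0 T := by
    have h1 : IntervalIntegrable (fun s => ε s * (E s)⁻¹) volume T0 T :=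
      hεint.mul_continuousOn (by rw [huIcc]; exact hEinvcont)
    exact h1.add intervalIntegrable_const
  have hfIGint : IntervalIntegrable (fun s => fI s * G s) volume T0 t :=
    (hfIint.mono_set hsubu).mul_continuousOn (by rw [hut]; exact hGcont.mono hIccsub)
  have hmonoae : (fun s => (q s + y s) * G s + Y s * gI s)
      ≤ᵐ[volume.restrict (Icc T0 t)] (fun s => fI s * G s) := by
    filter_upwards [ae_restrict_of_ae haept, ae_restrict_mem measurableSet_Icc] with s h1 h2
    exact h1 ⟨h2.1, h2.2.trans htb⟩
  have hWle : Y t * G t ≤ Real.sqrt c + ∫ s in T0..t, fI s * G s := by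
    rw [hYG']
    have := intervalIntegral.integral_mono_ae_restrict hat ILHS hfIGint hmonoae
    linarith
  -- the identity for the E-part
  have heIint : IntervalIntegrable eI volume T0 T := by
    have hinv : ContinuousOn (fun u => (2 * Real.sqrt (ϵ + ∫ v in T0..u, ε v))⁻¹) (Icc T0 T) := by
      apply ContinuousOn.inv₀ (continuousOn_const.mul (prim_continuousOn hab hεint ϵ).sqrt)
      intro x hx
      have : 0 < E x := lt_of_lt_of_le hsε (hElow x hx)
      have hEx : Real.sqrt (ϵ + ∫ v in T0..x, ε v) = E x := rfl
      show 2 * Real.sqrt (ϵ + ∫ v in T0..x, ε v) ≠ 0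
      rw [hEx]
      positivity
    exact hεint.mul_continuousOn (by rw [huIcc]; exact hinv)
  have hEG0 : (Real.sqrt ϵ + ∫ s in T0..t, eI s) * G t = Real.sqrt ϵ * 1 +
      ∫ s in T0..t, (eI s * G s + (Real.sqrt ϵ + ∫ u in T0..s, eI u) * gI s) :=
    integral_product_rule T0 T hab eI gI heIint hgIint (Real.sqrt ϵ) 1 htIcc
  have hEG1 : E t * G t = Real.sqrt ϵ +
      ∫ s in T0..t, (eI s * G s + (Real.sqrt ϵ + ∫ u in T0..s, eI u) * gI s) := by
    rw [hE t htIcc, hEG0]; ring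
  have IeIG : IntervalIntegrable (fun s => (ε s / E s) * G s) volume T0 t := by
    have h1 : IntervalIntegrable (fun s => (ε s * (E s)⁻¹) * G s) volume T0 t :=
      ((hεint.mul_continuousOn (by rw [huIcc]; exact hEinvcont)).mono_set hsubu).mul_continuousOn
        (by rw [hut]; exact hGcont.mono hIccsub)
    exact h1
  have IκEG : IntervalIntegrable (fun s => κ s * (E s * G s)) volume T0 t :=
    (hκint.mono_set hsubu).mul_continuousOn
      (by rw [hut]; exact ((hEcont.mono hIccsub).mul (hGcont.mono hIccsub)))
  have hEG2 : E t * G t = Real.sqrt ϵ +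
      ((1/2) * (∫ s in T0..t, (ε s / E s) * G s) - ∫ s in T0..t, κ s * (E s * G s)) := by
    rw [hEG1]
    congr 1
    rw [← intervalIntegral.integral_const_mul, ← intervalIntegral.integral_sub
      (IeIG.const_mul _) IκEG]
    apply intervalIntegral.integral_congr
    intro s hs
    have hsI : s ∈ Icc T0 T := hsubIcc hs
    have hEs' : (Real.sqrt ϵ + ∫ u in T0..s, eI u) = E s := (hE s hsI).symm
    have hgIs : gI s = -(Real.exp (-(B s)) * κ s) := rfl
    have hGs : G s = Real.exp (-(B s)) := hG s hsI
    have heIs : eI s = ε s / (2 * E s) := rfl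
    have hEspos : 0 < E s := lt_of_lt_of_le hsε (hElow s hsI)
    show eI s * G s + (Real.sqrt ϵ + ∫ u in T0..s, eI u) * gI s =
      1 / 2 * (ε s / E s * G s) - κ s * (E s * G s)
    rw [hEs', heIs, hgIs, ← hGs]
    field_simp
    ring
    -- assembling the final bound
  have hGint : IntervalIntegrable G volume T0 t :=
    ContinuousOn.intervalIntegrable (by rw [hut]; exact hGcont.mono hIccsub)
  have hsplitfI : (∫ s in T0..t, fI s * G s) =
      (∫ s in T0..t, ε s / E s * G s) + Real.sqrt ϵ / 2 * ∫ s in T0..t, G s := by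
    rw [← intervalIntegral.integral_const_mul, ← intervalIntegral.integral_add IeIG
      (hGint.const_mul _)]
    apply intervalIntegral.integral_congr
    intro s hs
    show fI s * G s = ε s / E s * G s + Real.sqrt ϵ / 2 * G s
    show (ε s / E s + Real.sqrt ϵ / 2) * G s = _
    ring
  have hexp_eq : ∀ s ∈ uIcc T0 t, Real.exp (B t) * G s = Real.exp (∫ τ in s..t, κ τ) := by
    intro s hs
    have hsI : s ∈ Icc T0 T := hsubIcc hs
    rw [hG s hsI, ← Real.exp_add]
    congr 1
    have h := intervalIntegral.integral_interval_sub_left (hκint.mono_set hsubu)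
      (hκint.mono_set (hmono s hsI.1 hsI.2))
    show (∫ u in T0..t, κ u) + -(∫ u in T0..s, κ u) = ∫ τ in s..t, κ τ
    linarith [h]
  have hterm2 : Real.exp (B t) * ∫ s in T0..t, G s
      = ∫ s in T0..t, Real.exp (∫ τ in s..t, κ τ) := by
    rw [← intervalIntegral.integral_const_mul]
    exact intervalIntegral.integral_congr hexp_eq
  have hterm4 : Real.exp (B t) * ∫ s in T0..t, κ s * (E s * G s)
      = ∫ s in T0..t, κ s * Real.exp (∫ τ in s..t, κ τ) *
          Real.sqrt ((∫ τ in T0..s, ε τ) + ϵ) := by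
    rw [← intervalIntegral.integral_const_mul]
    apply intervalIntegral.integral_congr
    intro s hs
    have h1 := hexp_eq s hs
    have h2 : E s = Real.sqrt ((∫ τ in T0..s, ε τ) + ϵ) := by
      show Real.sqrt (ϵ + ∫ u in T0..s, ε u) = _
      rw [add_comm]
    show Real.exp (B t) * (κ s * (E s * G s)) =
      κ s * Real.exp (∫ τ in s..t, κ τ) * Real.sqrt ((∫ τ in T0..s, ε τ) + ϵ)
    rw [← h2, ← h1]
    ring
  have hGtexp : G t * Real.exp (B t) = 1 := by
    rw [hG t htIcc, ← Real.exp_add]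
    simp
  have hEt : E t = Real.sqrt ((∫ s in T0..t, ε s) + ϵ) := by
    show Real.sqrt (ϵ + ∫ u in T0..t, ε u) = _
    rw [add_comm]
  have hYt : Y t ≤ (Real.sqrt c + ∫ s in T0..t, fI s * G s) * Real.exp (B t) := by
    have h0 : Y t = (Y t * G t) * Real.exp (B t) := by
      rw [mul_assoc, hGtexp, mul_one]
    rw [h0]
    exact mul_le_mul_of_nonneg_right hWle (Real.exp_pos _).le
  have hI1 : (∫ s in T0..t, ε s / E s * G s) = 2 * (E t * G t) - 2 * Real.sqrt ϵ
      + 2 * (∫ s in T0..t, κ s * (E s * G s)) := by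
    linarith [hEG2]
  show Real.sqrt (ρ t) ≤
      Real.sqrt c * Real.exp (B t) +
      Real.sqrt ϵ / 2 * (∫ s in T0..t, Real.exp (∫ τ in s..t, κ τ)) +
      2 * (Real.sqrt ((∫ s in T0..t, ε s) + ϵ) - Real.sqrt ϵ * Real.exp (B t)) +
      2 * ∫ s in T0..t, κ s * Real.exp (∫ τ in s..t, κ τ) *
        Real.sqrt ((∫ τ in T0..s, ε τ) + ϵ)
  calc Real.sqrt (ρ t) ≤ y t := hsqρy t htIcc
    _ ≤ Y t := hyY t htIcc
    _ ≤ (Real.sqrt c + ∫ s in T0..t, fI s * G s) * Real.exp (B t) := hYt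
    _ = Real.sqrt c * Real.exp (B t) +
        Real.sqrt ϵ / 2 * (∫ s in T0..t, Real.exp (∫ τ in s..t, κ τ)) +
        2 * (Real.sqrt ((∫ s in T0..t, ε s) + ϵ) - Real.sqrt ϵ * Real.exp (B t)) +
        2 * ∫ s in T0..t, κ s * Real.exp (∫ τ in s..t, κ τ) *
          Real.sqrt ((∫ τ in T0..s, ε τ) + ϵ) := by
        rw [hsplitfI]
        linear_combination (Real.exp (B t)) * hI1 + (Real.sqrt ϵ / 2) * hterm2
          + 2 * hterm4 + 2 * (E t) * hGtexp + 2 * hEt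
end
end

section
/- Let H be a real Hilbert space, assume (H1), (H2) and (H3), and let x : [T0,T] → H be an absolutely continuous mapping with x(t) ∈ C(t) for all t ∈ [T0,T] and −x'(t) ∈ N_{C(t)}(x(t)) + f1(t, x(t)) + ∫_{T0}^t f2(t, s, x(s)) ds for almost every t ∈ [T0,T]. Then for almost every t ∈ [T0,T] one has ‖x'(t) + f1(t, x(t)) + ∫_{T0}^t f2(t, s, x(s)) ds‖ ≤ |υ'(t)| + ‖f1(t, x(t))‖ + ∫_{T0}^t ‖f2(t, s, x(s))‖ ds. -/
open MeasureTheory Set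
open scoped RealInnerProductSpace ENNReal Pointwise NNReal

noncomputable section

variable {H : Type*} [NormedAddCommGroup H] [InnerProductSpace ℝ H]

/-- The proximal normal cone of `S` at `x`. -/
def proxNormalCone (S : Set H) (x : H) : Set H :=
  {v | ∃ σ : ℝ, 0 ≤ σ ∧ ∃ δ : ℝ, 0 < δ ∧
    ∀ y ∈ S ∩ Metric.ball x δ, ⟪v, y - x⟫ ≤ σ * ‖y - x‖ ^ 2}

/-- Uniform `r`-prox-regularity, `r ∈ (0, ∞]`. -/
def IsProxRegular (r : ℝ≥0∞) (S : Set H) : Prop :=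
  ∀ x ∈ S, ∀ v ∈ proxNormalCone S x, v ≠ 0 →
    ∀ y ∈ S, ⟪‖v‖⁻¹ • v, y - x⟫ ≤ ((2 * r)⁻¹).toReal * ‖y - x‖ ^ 2

variable [CompleteSpace H]

/-- Absolutely continuous solution of the integro-differential sweeping process
`-x'(t) ∈ N_{C(t)}(x(t)) + f1(t, x(t)) + ∫_{T0}^t f2(t, s, x(s)) ds`. -/
def IsIDSweepingSol (T0 T : ℝ) (C : ℝ → Set H) (f1 : ℝ → H → H)
    (f2 : ℝ → ℝ → H → H) (x x' : ℝ → H) : Prop :=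
  IntervalIntegrable x' volume T0 T ∧
  (∀ t ∈ Icc T0 T, x t = x T0 + ∫ s in T0..t, x' s) ∧
  (∀ t ∈ Icc T0 T, x t ∈ C t) ∧
  (∀ᵐ t ∂volume, t ∈ Icc T0 T →
    (-x' t - f1 t (x t) - ∫ s in T0..t, f2 t s (x s)) ∈ proxNormalCone (C t) (x t))

open Filter Metric in
private lemma ae_avg_tendsto' {E : Type*} [NormedAddCommGroup E] {g : ℝ → E}
    (hg : Integrable g (volume : Measure ℝ)) :
    ∀ᵐ t : ℝ, Filter.Tendsto
      (fun n : ℕ => ⨍ y in Metric.closedBall t (((n : ℝ) + 1)⁻¹), ‖g y - g t‖)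
      Filter.atTop (nhds 0) := by
  filter_upwards [IsUnifLocDoublingMeasure.ae_tendsto_average_norm_sub
    volume hg.locallyIntegrable 1] with t ht
  have hδ : Tendsto (fun n : ℕ => ((n : ℝ) + 1)⁻¹) atTop (nhdsWithin (0 : ℝ) (Set.Ioi 0)) := by
    refine tendsto_nhdsWithin_of_tendsto_nhds_of_eventually_within _ ?_
      (Eventually.of_forall fun n => Set.mem_Ioi.2 (by positivity))
    have := tendsto_one_div_add_atTop_nhds_zero_nat (𝕜 := ℝ)
    simpa [one_div] using this
  exact ht (ι := ℕ) (l := atTop) (fun _ => t) (fun n : ℕ => ((n : ℝ) + 1)⁻¹) hδ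
    (Eventually.of_forall fun n => by
      simp only [Metric.mem_closedBall, dist_self, one_mul]
      positivity)

set_option maxHeartbeats 1600000

/-- Estimate (30) for solutions of the integro-differential sweeping process. -/
theorem integro_differential_sweeping_estimate
    (T0 T : ℝ) (hT : T0 < T)
    (r : ℝ≥0∞) (hr : 0 < r)
    (C : ℝ → Set H)
    (hC : ∀ t ∈ Icc T0 T, (C t).Nonempty ∧ IsClosed (C t) ∧ IsProxRegular r (C t))
    (υ υ' : ℝ → ℝ)
    (hυint : IntervalIntegrable υ' volume T0 T)
    (hυAC : ∀ t ∈ Icc T0 T, υ t = υ T0 + ∫ s in T0..t, υ' s)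
    (hmove : ∀ s ∈ Icc T0 T, ∀ t ∈ Icc T0 T,
      C t ⊆ C s + |υ s - υ t| • Metric.closedBall (0 : H) 1)
    (f1 : ℝ → H → H)
    (hf1meas : ∀ x : H, StronglyMeasurable fun t => f1 t x)
    (β1 : ℝ → ℝ)
    (hβ1int : IntervalIntegrable β1 volume T0 T)
    (hβ1nn : ∀ t ∈ Icc T0 T, 0 ≤ β1 t)
    (hf1grow : ∀ t ∈ Icc T0 T, ∀ x ∈ ⋃ s ∈ Icc T0 T, C s, ‖f1 t x‖ ≤ β1 t * (1 + ‖x‖))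
    (hf1lip : ∀ η : ℝ, 0 < η → ∃ L1 : ℝ → ℝ, IntervalIntegrable L1 volume T0 T ∧
      (∀ t ∈ Icc T0 T, 0 ≤ L1 t) ∧
      ∀ t ∈ Icc T0 T, ∀ x ∈ Metric.closedBall (0 : H) η,
        ∀ y ∈ Metric.closedBall (0 : H) η, ‖f1 t x - f1 t y‖ ≤ L1 t * ‖x - y‖)
    (f2 : ℝ → ℝ → H → H)
    (hf2meas : ∀ x : H, StronglyMeasurable fun p : ℝ × ℝ => f2 p.1 p.2 x)
    (β2 : ℝ → ℝ → ℝ)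
    (hβ2int : IntegrableOn (fun p : ℝ × ℝ => β2 p.1 p.2)
      {p : ℝ × ℝ | p.1 ∈ Icc T0 T ∧ p.2 ∈ Icc T0 T ∧ p.2 ≤ p.1} volume)
    (hβ2nn : ∀ t ∈ Icc T0 T, ∀ s ∈ Icc T0 t, 0 ≤ β2 t s)
    (hf2grow : ∀ t ∈ Icc T0 T, ∀ s ∈ Icc T0 t, ∀ x ∈ ⋃ u ∈ Icc T0 T, C u,
      ‖f2 t s x‖ ≤ β2 t s * (1 + ‖x‖))
    (hf2lip : ∀ η : ℝ, 0 < η → ∃ L2 : ℝ → ℝ, IntervalIntegrable L2 volume T0 T ∧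
      (∀ t ∈ Icc T0 T, 0 ≤ L2 t) ∧
      ∀ t ∈ Icc T0 T, ∀ s ∈ Icc T0 t, ∀ x ∈ Metric.closedBall (0 : H) η,
        ∀ y ∈ Metric.closedBall (0 : H) η, ‖f2 t s x - f2 t s y‖ ≤ L2 t * ‖x - y‖)
    (x x' : ℝ → H)
    (hx : IsIDSweepingSol T0 T C f1 f2 x x') :
    ∀ᵐ t ∂volume, t ∈ Icc T0 T →
      ‖x' t + f1 t (x t) + ∫ s in T0..t, f2 t s (x s)‖ ≤
        |υ' t| + ‖f1 t (x t)‖ + ∫ s in T0..t, ‖f2 t s (x s)‖ := by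
  classical
  obtain ⟨hx'int, hxeq, hxC, hcone⟩ := hx
  set g1 : ℝ → H := (Icc T0 T).indicator x' with hg1def
  set g2 : ℝ → ℝ := (Icc T0 T).indicator υ' with hg2def
  have hg1int : Integrable g1 (volume : Measure ℝ) := by
    refine (IntegrableOn.integrable_indicator ?_ measurableSet_Icc)
    exact (integrableOn_Icc_iff_integrableOn_Ioc).2
      ((intervalIntegrable_iff_integrableOn_Ioc_of_le hT.le).1 hx'int)
  have hg2int : Integrable g2 (volume : Measure ℝ) := by
    refine (IntegrableOn.integrable_indicator ?_ measurableSet_Icc)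
    exact (integrableOn_Icc_iff_integrableOn_Ioc).2
      ((intervalIntegrable_iff_integrableOn_Ioc_of_le hT.le).1 hυint)
  have hends : ∀ᵐ t : ℝ ∂volume, t ∉ ({T0, T} : Set ℝ) := by
    have : volume ({T0, T} : Set ℝ) = 0 := (Set.toFinite _).countable.measure_zero _
    exact (MeasureTheory.measure_eq_zero_iff_ae_notMem (s := ({T0, T} : Set ℝ))).1 this
  filter_upwards [hcone, ae_avg_tendsto' hg1int, ae_avg_tendsto' hg2int, hends]
    with t hconet hAlim hBlim hnotend
  intro htIcc
  have htT0 : T0 < t := lt_of_le_of_ne htIcc.1 (fun h => hnotend (by simp [← h]))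
  have htT : t < T := lt_of_le_of_ne htIcc.2 (fun h => hnotend (by simp [h]))
  set v : H := -x' t - f1 t (x t) - ∫ s in T0..t, f2 t s (x s) with hv
  obtain ⟨σ, hσ, δ, hδ, hconeineq⟩ := hconet htIcc
  set ε : ℕ → ℝ := fun n => ((n : ℝ) + 1)⁻¹ with hε
  set A : ℕ → ℝ := fun n => ⨍ y in Metric.closedBall t (ε n), ‖g1 y - g1 t‖ with hA
  set B : ℕ → ℝ := fun n => ⨍ y in Metric.closedBall t (ε n), ‖g2 y - g2 t‖ with hB
  set K : ℕ → ℝ := fun n => |υ' t| + 2 * B n + ‖x' t‖ + 2 * A n with hK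
  set ρ : ℕ → ℝ := fun n => ε n * K n with hρ
  set Φ : ℕ → ℝ := fun n => ‖v‖ * (|υ' t| + 2 * B n) + σ * (ρ n * K n) + 2 * ‖v‖ * A n with hΦ
  have hεpos : ∀ n, 0 < ε n := fun n => by positivity
  have hεlim : Filter.Tendsto ε Filter.atTop (nhds 0) := by
    have := tendsto_one_div_add_atTop_nhds_zero_nat (𝕜 := ℝ)
    simpa [hε, one_div] using this
  have hKlim : Filter.Tendsto K Filter.atTop (nhds (|υ' t| + 2 * 0 + ‖x' t‖ + 2 * 0)) := by
    exact ((tendsto_const_nhds.add (hBlim.const_mul 2)).add tendsto_const_nhds).add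
      (hAlim.const_mul 2)
  have hρlim : Filter.Tendsto ρ Filter.atTop (nhds 0) := by
    have := hεlim.mul hKlim
    simpa using this
  have hΦlim : Filter.Tendsto Φ Filter.atTop (nhds (‖v‖ * |υ' t|)) := by
    have h1 : Filter.Tendsto (fun n => ‖v‖ * (|υ' t| + 2 * B n)) Filter.atTop
        (nhds (‖v‖ * (|υ' t| + 2 * 0))) :=
      (tendsto_const_nhds.add (hBlim.const_mul 2)).const_mul ‖v‖
    have h2 : Filter.Tendsto (fun n => σ * (ρ n * K n)) Filter.atTop
        (nhds (σ * (0 * (|υ' t| + 2 * 0 + ‖x' t‖ + 2 * 0)))) :=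
      (hρlim.mul hKlim).const_mul σ
    have h3 : Filter.Tendsto (fun n => 2 * ‖v‖ * A n) Filter.atTop
        (nhds (2 * ‖v‖ * 0)) := hAlim.const_mul (2 * ‖v‖)
    have := (h1.add h2).add h3
    simpa using this
  -- the key per-n estimate
  have main : ∀ n : ℕ, ε n < t - T0 → ρ n < δ → ⟪v, -x' t⟫ ≤ Φ n := by
    intro n hn1 hn2
    have hε0 : 0 < ε n := hεpos n
    have hs0 : T0 < t - ε n := by linarith
    have hs0Icc : t - ε n ∈ Icc T0 T := ⟨hs0.le, by linarith⟩
    have hsub : t - ε n ≤ t := by linarith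
    have uIccsub : Set.uIcc (t - ε n) t ⊆ Set.uIcc T0 T := by
      rw [Set.uIcc_of_le hsub, Set.uIcc_of_le hT.le]
      exact Icc_subset_Icc hs0.le htIcc.2
    have uIccsub1 : Set.uIcc T0 (t - ε n) ⊆ Set.uIcc T0 T := by
      rw [Set.uIcc_of_le hs0.le, Set.uIcc_of_le hT.le]
      exact Icc_subset_Icc le_rfl hs0Icc.2
    have uIccsub2 : Set.uIcc T0 t ⊆ Set.uIcc T0 T := by
      rw [Set.uIcc_of_le htIcc.1, Set.uIcc_of_le hT.le]
      exact Icc_subset_Icc le_rfl htIcc.2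
    have hx'sub : IntervalIntegrable x' volume (t - ε n) t := hx'int.mono_set uIccsub
    have hυsub : IntervalIntegrable υ' volume (t - ε n) t := hυint.mono_set uIccsub
    have hIocIcc : Set.Ioc (t - ε n) t ⊆ Icc T0 T := fun u hu =>
      ⟨le_of_lt (lt_of_le_of_lt hs0.le hu.1), le_trans hu.2 htIcc.2⟩
    have hIocBall : Set.Ioc (t - ε n) t ⊆ Metric.closedBall t (ε n) := by
      intro u hu
      rw [Metric.mem_closedBall, Real.dist_eq, abs_le]
      constructor <;> [linarith [hu.1.le]; linarith [hu.2]]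
    have hg1t : g1 t = x' t := Set.indicator_of_mem htIcc x'
    have hg2t : g2 t = υ' t := Set.indicator_of_mem htIcc υ'
    have hvolball : (volume (Metric.closedBall t (ε n))).toReal = 2 * ε n := by
      rw [Real.volume_closedBall, ENNReal.toReal_ofReal (by positivity)]
    have hint1 : IntegrableOn (fun u => ‖g1 u - g1 t‖) (Metric.closedBall t (ε n)) volume :=
      (hg1int.integrableOn.sub ((integrableOn_const_iff).2
        (Or.inr measure_closedBall_lt_top))).norm
    have hint2 : IntegrableOn (fun u => ‖g2 u - g2 t‖) (Metric.closedBall t (ε n)) volume :=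
      (hg2int.integrableOn.sub ((integrableOn_const_iff).2
        (Or.inr measure_closedBall_lt_top))).norm
    -- ∫ over closedBall = 2 ε A n
    have hAeq : ∫ u in Metric.closedBall t (ε n), ‖g1 u - g1 t‖ = 2 * ε n * A n := by
      have h0 : A n = (volume (Metric.closedBall t (ε n))).toReal⁻¹
          • ∫ u in Metric.closedBall t (ε n), ‖g1 u - g1 t‖ := by
        simp only [hA]; exact setAverage_eq volume _ _
      rw [h0, hvolball, smul_eq_mul]
      field_simp
    have hBeq : ∫ u in Metric.closedBall t (ε n), ‖g2 u - g2 t‖ = 2 * ε n * B n := by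
      have h0 : B n = (volume (Metric.closedBall t (ε n))).toReal⁻¹
          • ∫ u in Metric.closedBall t (ε n), ‖g2 u - g2 t‖ := by
        simp only [hB]; exact setAverage_eq volume _ _
      rw [h0, hvolball, smul_eq_mul]
      field_simp
    -- difference of x
    have hxdiff : x (t - ε n) - x t = -∫ u in (t - ε n)..t, x' u := by
      have h12 : (∫ u in T0..(t - ε n), x' u) - ∫ u in T0..t, x' u
          = ∫ u in t..(t - ε n), x' u :=
        intervalIntegral.integral_interval_sub_left (hx'int.mono_set uIccsub1)
          (hx'int.mono_set uIccsub2)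
      have h13 : (∫ u in T0..(t - ε n), x' u) - ∫ u in T0..t, x' u
          = -∫ u in (t - ε n)..t, x' u := h12.trans (intervalIntegral.integral_symm _ _)
      rw [hxeq _ hs0Icc, hxeq t htIcc, ← h13]
      abel
    have hkey : x (t - ε n) - x t + (ε n) • x' t = -∫ u in (t - ε n)..t, (x' u - x' t) := by
      rw [intervalIntegral.integral_sub hx'sub intervalIntegrable_const, hxdiff,
        intervalIntegral.integral_const, show t - (t - ε n) = ε n by ring]
      abel
    have hE2 : ‖x (t - ε n) - x t + (ε n) • x' t‖ ≤ 2 * ε n * A n := by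
      rw [hkey, norm_neg]
      calc ‖∫ u in (t - ε n)..t, (x' u - x' t)‖
          ≤ ∫ u in (t - ε n)..t, ‖x' u - x' t‖ :=
            intervalIntegral.norm_integral_le_integral_norm hsub
        _ = ∫ u in Set.Ioc (t - ε n) t, ‖x' u - x' t‖ :=
            intervalIntegral.integral_of_le hsub
        _ = ∫ u in Set.Ioc (t - ε n) t, ‖g1 u - g1 t‖ := by
            refine setIntegral_congr_fun measurableSet_Ioc fun u hu => ?_
            rw [hg1t, hg1def, Set.indicator_of_mem (hIocIcc hu)]
        _ ≤ ∫ u in Metric.closedBall t (ε n), ‖g1 u - g1 t‖ :=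
            setIntegral_mono_set hint1
              (Filter.Eventually.of_forall fun u => norm_nonneg _)
              (Filter.Eventually.of_forall hIocBall)
        _ = 2 * ε n * A n := hAeq
    -- difference of υ
    have hυdiff : υ t - υ (t - ε n) = ∫ u in (t - ε n)..t, υ' u := by
      have h12 : (∫ u in T0..(t - ε n), υ' u) - ∫ u in T0..t, υ' u
          = ∫ u in t..(t - ε n), υ' u :=
        intervalIntegral.integral_interval_sub_left (hυint.mono_set uIccsub1)
          (hυint.mono_set uIccsub2)
      have h13 : (∫ u in T0..(t - ε n), υ' u) - ∫ u in T0..t, υ' u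
          = -∫ u in (t - ε n)..t, υ' u := h12.trans (intervalIntegral.integral_symm _ _)
      rw [hυAC _ hs0Icc, hυAC t htIcc]
      have h14 : ∫ u in (t - ε n)..t, υ' u
          = (∫ u in T0..t, υ' u) - ∫ u in T0..(t - ε n), υ' u := by linarith
      rw [h14]; ring
    have hE3 : |υ t - υ (t - ε n)| ≤ ε n * |υ' t| + 2 * ε n * B n := by
      rw [hυdiff]
      have step1 : |∫ u in (t - ε n)..t, υ' u| ≤ ∫ u in (t - ε n)..t, |υ' u| :=
        intervalIntegral.abs_integral_le_integral_abs hsub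
      have hIocInt : IntegrableOn (fun u => |υ' u|) (Set.Ioc (t - ε n) t) volume :=
        ((intervalIntegrable_iff_integrableOn_Ioc_of_le hsub).1 hυsub).abs
      have hRHSInt : IntegrableOn (fun u => ‖g2 u - g2 t‖ + |υ' t|)
          (Set.Ioc (t - ε n) t) volume := by
        refine (hint2.mono_set hIocBall).add ?_
        exact (integrableOn_const_iff).2 (Or.inr measure_Ioc_lt_top)
      have step2 : ∫ u in Set.Ioc (t - ε n) t, |υ' u|
          ≤ ∫ u in Set.Ioc (t - ε n) t, (‖g2 u - g2 t‖ + |υ' t|) := by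
        refine setIntegral_mono_on hIocInt hRHSInt measurableSet_Ioc fun u hu => ?_
        have : υ' u = g2 u := (Set.indicator_of_mem (hIocIcc hu) υ').symm
        rw [this, ← hg2t]
        calc |g2 u| = |g2 u - g2 t + g2 t| := by ring_nf
          _ ≤ |g2 u - g2 t| + |g2 t| := abs_add_le _ _
          _ = ‖g2 u - g2 t‖ + |g2 t| := by rw [Real.norm_eq_abs]
      have step3 : ∫ u in Set.Ioc (t - ε n) t, (‖g2 u - g2 t‖ + |υ' t|)
          = (∫ u in Set.Ioc (t - ε n) t, ‖g2 u - g2 t‖)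
            + (volume (Set.Ioc (t - ε n) t)).toReal * |υ' t| := by
        rw [integral_add (hint2.mono_set hIocBall)
          ((integrableOn_const_iff).2 (Or.inr measure_Ioc_lt_top)), setIntegral_const,
          smul_eq_mul, measureReal_def]
      have hvolIoc : (volume (Set.Ioc (t - ε n) t)).toReal = ε n := by
        rw [Real.volume_Ioc, show t - (t - ε n) = ε n by ring,
          ENNReal.toReal_ofReal hε0.le]
      have step4 : ∫ u in Set.Ioc (t - ε n) t, ‖g2 u - g2 t‖
          ≤ ∫ u in Metric.closedBall t (ε n), ‖g2 u - g2 t‖ :=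
        setIntegral_mono_set hint2 (Filter.Eventually.of_forall fun u => norm_nonneg _)
          (Filter.Eventually.of_forall hIocBall)
      calc |∫ u in (t - ε n)..t, υ' u| ≤ ∫ u in (t - ε n)..t, |υ' u| := step1
        _ = ∫ u in Set.Ioc (t - ε n) t, |υ' u| := intervalIntegral.integral_of_le hsub
        _ ≤ ∫ u in Set.Ioc (t - ε n) t, (‖g2 u - g2 t‖ + |υ' t|) := step2
        _ = _ := step3
        _ ≤ 2 * ε n * B n + ε n * |υ' t| := by
            rw [hvolIoc]
            have := step4.trans_eq hBeq
            linarith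
        _ = ε n * |υ' t| + 2 * ε n * B n := by ring
    -- the moving set condition
    have hmemC : x (t - ε n)
        ∈ C t + |υ t - υ (t - ε n)| • Metric.closedBall (0 : H) 1 :=
      hmove t htIcc (t - ε n) hs0Icc (hxC _ hs0Icc)
    obtain ⟨y, hyC, z, hz, hyz⟩ := Set.mem_add.1 hmemC
    have hznorm : ‖z‖ ≤ |υ t - υ (t - ε n)| := by
      obtain ⟨w, hw, rfl⟩ := hz
      rw [norm_smul, Real.norm_eq_abs, abs_abs]
      have hw1 : ‖w‖ ≤ 1 := by simpa using hw
      nlinarith [abs_nonneg (υ t - υ (t - ε n)), norm_nonneg w]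
    have hzeq : x (t - ε n) - y = z := by rw [← hyz]; abel
    have hynear : ‖y - x t‖ ≤ ρ n := by
      have h1 : ‖y - x t‖ ≤ ‖z‖ + ‖x (t - ε n) - x t‖ := by
        calc ‖y - x t‖ = ‖(x (t - ε n) - x t) - z‖ := by rw [← hzeq]; congr 1; abel
          _ ≤ ‖x (t - ε n) - x t‖ + ‖z‖ := norm_sub_le _ _
          _ = ‖z‖ + ‖x (t - ε n) - x t‖ := by ring
      have h2 : ‖x (t - ε n) - x t‖ ≤ 2 * ε n * A n + ε n * ‖x' t‖ := by
        calc ‖x (t - ε n) - x t‖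
            ≤ ‖x (t - ε n) - x t + (ε n) • x' t‖ + ‖(ε n) • x' t‖ := by
              have := norm_sub_le (x (t - ε n) - x t + (ε n) • x' t) ((ε n) • x' t)
              simpa using this
          _ ≤ 2 * ε n * A n + ε n * ‖x' t‖ := by
              rw [norm_smul, Real.norm_eq_abs, abs_of_pos hε0]
              exact add_le_add_left hE2 _
      have h3 : ‖z‖ ≤ ε n * |υ' t| + 2 * ε n * B n := hznorm.trans hE3
      rw [hρ, hK]
      simp only
      nlinarith
    have hball : y ∈ C t ∩ Metric.ball (x t) δ := by
      refine ⟨hyC, ?_⟩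
      rw [Metric.mem_ball, dist_eq_norm]
      exact lt_of_le_of_lt hynear hn2
    have hcy : ⟪v, y - x t⟫ ≤ σ * ‖y - x t‖ ^ 2 := hconeineq y hball
    have hcy2 : σ * ‖y - x t‖ ^ 2 ≤ σ * ρ n ^ 2 := by
      refine mul_le_mul_of_nonneg_left ?_ hσ
      exact pow_le_pow_left₀ (norm_nonneg _) hynear 2
    -- assemble
    have hsplit : x (t - ε n) - x t = (y - x t) + z := by rw [← hzeq]; abel
    have hI1 : ⟪v, x (t - ε n) - x t⟫ ≤ ‖v‖ * |υ t - υ (t - ε n)| + σ * ρ n ^ 2 := by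
      rw [hsplit, inner_add_right]
      have hz1 : ⟪v, z⟫ ≤ ‖v‖ * ‖z‖ := real_inner_le_norm v z
      have hz2 : ‖v‖ * ‖z‖ ≤ ‖v‖ * |υ t - υ (t - ε n)| :=
        mul_le_mul_of_nonneg_left hznorm (norm_nonneg v)
      linarith [hcy.trans hcy2]
    set D : H := x (t - ε n) - x t + (ε n) • x' t with hD
    have hDsplit : (ε n) • (-x' t) = (x (t - ε n) - x t) - D := by rw [hD, smul_neg]; abel
    have hI2 : -⟪v, D⟫ ≤ ‖v‖ * (2 * ε n * A n) := by
      have := abs_real_inner_le_norm v D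
      have h2 : ‖v‖ * ‖D‖ ≤ ‖v‖ * (2 * ε n * A n) :=
        mul_le_mul_of_nonneg_left hE2 (norm_nonneg v)
      have h3 : -⟪v, D⟫ ≤ |⟪v, D⟫| := neg_le_abs _
      linarith
    have hIfinal : ε n * ⟪v, -x' t⟫ ≤ ε n * Φ n := by
      have e1 : ε n * ⟪v, -x' t⟫ = ⟪v, x (t - ε n) - x t⟫ - ⟪v, D⟫ := by
        rw [← real_inner_smul_right, hDsplit, inner_sub_right]
      have e2 : ‖v‖ * |υ t - υ (t - ε n)| ≤ ‖v‖ * (ε n * |υ' t| + 2 * ε n * B n) :=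
        mul_le_mul_of_nonneg_left hE3 (norm_nonneg v)
      have e3 : ρ n ^ 2 = ε n * (ρ n * K n) := by rw [hρ]; ring
      rw [e1]
      have : ε n * Φ n = ‖v‖ * (ε n * |υ' t| + 2 * ε n * B n)
          + σ * (ε n * (ρ n * K n)) + ‖v‖ * (2 * ε n * A n) := by
        rw [hΦ]; ring
      rw [this]
      have h4 : σ * ρ n ^ 2 = σ * (ε n * (ρ n * K n)) := by rw [e3]
      linarith [hI1, hI2]
    exact le_of_mul_le_mul_left (by linarith [hIfinal]) hε0
  have hev : ∀ᶠ n in Filter.atTop, ⟪v, -x' t⟫ ≤ Φ n := by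
    filter_upwards [hεlim.eventually_lt_const (sub_pos.2 htT0),
      hρlim.eventually_lt_const hδ] with n h1 h2
    exact main n h1 h2
  have hinner : ⟪v, -x' t⟫ ≤ ‖v‖ * |υ' t| := ge_of_tendsto hΦlim hev
  -- conclude
  set F : H := f1 t (x t) + ∫ s in T0..t, f2 t s (x s) with hF
  have hvF : v = -x' t - F := by rw [hv, hF]; abel
  have hsq : ‖v‖ ^ 2 ≤ ‖v‖ * (|υ' t| + ‖F‖) := by
    have h1 : ⟪v, v⟫ = ⟪v, -x' t⟫ + ⟪v, -F⟫ := by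
      rw [← inner_add_right]
      congr 1
      rw [hvF]; abel
    have h2 : ⟪v, -F⟫ ≤ ‖v‖ * ‖F‖ := by
      have := real_inner_le_norm v (-F)
      simpa using this
    have h3 : ⟪v, v⟫ = ‖v‖ ^ 2 := real_inner_self_eq_norm_sq v
    have h4 : ‖v‖ * (|υ' t| + ‖F‖) = ‖v‖ * |υ' t| + ‖v‖ * ‖F‖ := by ring
    linarith
  have hnormv : ‖v‖ ≤ |υ' t| + ‖F‖ := by
    rcases eq_or_lt_of_le (norm_nonneg v) with h0 | h0
    · rw [← h0]; positivity
    · nlinarith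
  have hgoal1 : ‖x' t + f1 t (x t) + ∫ s in T0..t, f2 t s (x s)‖ = ‖v‖ := by
    have : -(x' t + f1 t (x t) + ∫ s in T0..t, f2 t s (x s)) = v := by rw [hv]; abel
    rw [← this, norm_neg]
  have hgoal2 : ‖F‖ ≤ ‖f1 t (x t)‖ + ‖∫ s in T0..t, f2 t s (x s)‖ := norm_add_le _ _
  have hgoal3 : ‖∫ s in T0..t, f2 t s (x s)‖ ≤ ∫ s in T0..t, ‖f2 t s (x s)‖ :=
    intervalIntegral.norm_integral_le_integral_norm htIcc.1
  rw [hgoal1]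
  linarith
end
end

section
/- Let H be a real Hilbert space, assume (H1), (H2) and (H3), and suppose moreover that ∫_{T0}^T [β1(τ) + ∫_{T0}^τ β2(τ,s) ds] dτ < 1/4. Let x0 ∈ C(T0) and let x : [T0,T] → H be the absolutely continuous solution with x(T0) = x0, x(t) ∈ C(t) for all t, and −x'(t) ∈ N_{C(t)}(x(t)) + f1(t,x(t)) + ∫_{T0}^t f2(t,s,x(s)) ds a.e. Set M := 2(‖x0‖ + ∫_{T0}^T |υ'(τ)| dτ + 1/2). Then: ‖f1(t, x(t))‖ ≤ (1 + M)·β1(t) for all t ∈ [T0,T]; ‖f2(t, s, x(s))‖ ≤ (1 + M)·β2(t,s) for all (t,s) ∈ Q_Δ; and ‖x'(t) + f1(t,x(t)) + ∫_{T0}^t f2(t,s,x(s)) ds‖ ≤ (1 + M)·(β1(t) + ∫_{T0}^t β2(t,s) ds) + |υ'(t)| for almost every t ∈ [T0,T]. -/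
open MeasureTheory Set
open scoped RealInnerProductSpace ENNReal Pointwise NNReal

noncomputable section

variable {H : Type*} [NormedAddCommGroup H] [InnerProductSpace ℝ H]

variable [CompleteSpace H]

open Filter
open scoped Topology

lemma aux_ae_left_deriv {E : Type*} [NormedAddCommGroup E] [NormedSpace ℝ E] [CompleteSpace E]
    {f : ℝ → E} (hf : Integrable f volume) :
    ∀ᵐ t ∂(volume : Measure ℝ),
      Tendsto (fun h : ℝ => h⁻¹ • ∫ s in t-h..t, f s) (𝓝[>] 0) (𝓝 (f t)) := by
  have hloc : LocallyIntegrable f volume := hf.locallyIntegrable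
  filter_upwards [IsUnifLocDoublingMeasure.ae_tendsto_average_norm_sub (volume : Measure ℝ) hloc 1]
    with t ht
  have hδ : Tendsto (fun h : ℝ => h / 2) (𝓝[>] 0) (𝓝[>] 0) := by
    apply tendsto_nhdsWithin_of_tendsto_nhds_of_eventually_within
    · have : Tendsto (fun h : ℝ => h / 2) (𝓝 0) (𝓝 (0 / 2)) := (tendsto_id (α := ℝ)).div_const 2
      simpa using this.mono_left nhdsWithin_le_nhds
    · filter_upwards [self_mem_nhdsWithin] with h (hh : (0:ℝ) < h)
      exact div_pos hh two_pos
  have hmem : ∀ᶠ h in 𝓝[>] (0:ℝ), t ∈ Metric.closedBall (t - h / 2) (1 * (h / 2)) := by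
    filter_upwards [self_mem_nhdsWithin] with h (hh : (0:ℝ) < h)
    have : dist t (t - h / 2) = h / 2 := by
      rw [Real.dist_eq, show t - (t - h / 2) = h / 2 by ring, abs_of_pos (by linarith)]
    rw [Metric.mem_closedBall, this, one_mul]
  have haux := ht (fun h : ℝ => t - h / 2) (fun h : ℝ => h / 2) hδ hmem
  rw [tendsto_iff_norm_sub_tendsto_zero]
  apply squeeze_zero' (Filter.Eventually.of_forall fun h => norm_nonneg _) _ haux
  filter_upwards [self_mem_nhdsWithin] with h (hh : (0:ℝ) < h)
  have hball : Metric.closedBall (t - h / 2) (h / 2) = Icc (t - h) t := by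
    rw [Real.closedBall_eq_Icc]; ring_nf
  have hint1 : IntervalIntegrable f volume (t - h) t := hf.intervalIntegrable
  have key : (fun h : ℝ => h⁻¹ • ∫ s in t-h..t, f s) h - f t
      = h⁻¹ • ∫ s in t-h..t, (f s - f t) := by
    rw [intervalIntegral.integral_sub hint1 intervalIntegrable_const,
      intervalIntegral.integral_const, sub_sub_cancel, smul_sub, smul_smul,
      inv_mul_cancel₀ hh.ne', one_smul]
  rw [key, norm_smul, norm_inv, Real.norm_eq_abs, abs_of_pos hh]
  have h1 : ‖∫ s in t-h..t, (f s - f t)‖ ≤ ∫ s in t-h..t, ‖f s - f t‖ :=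
    intervalIntegral.norm_integral_le_integral_norm (by linarith)
  have h2 : (∫ s in t-h..t, ‖f s - f t‖) = ∫ s in Icc (t-h) t, ‖f s - f t‖ := by
    rw [intervalIntegral.integral_of_le (by linarith), ← integral_Icc_eq_integral_Ioc]
  have h3 : ⨍ y in Metric.closedBall (t - h / 2) (h / 2), ‖f y - f t‖ ∂volume
      = h⁻¹ * ∫ s in Icc (t-h) t, ‖f s - f t‖ := by
    rw [hball, setAverage_eq, measureReal_def, Real.volume_Icc, smul_eq_mul]
    congr 2
    rw [show t - (t - h) = h by ring, ENNReal.toReal_ofReal (by linarith)]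
  rw [h3]
  exact mul_le_mul_of_nonneg_left (h1.trans_eq h2) (inv_nonneg.2 hh.le)
set_option maxHeartbeats 1000000 in
/-- Estimates (31)-(33) under the smallness condition on the data. -/
theorem integro_differential_sweeping_estimates_small
    (T0 T : ℝ) (hT : T0 < T)
    (r : ℝ≥0∞) (hr : 0 < r)
    (C : ℝ → Set H)
    (hC : ∀ t ∈ Icc T0 T, (C t).Nonempty ∧ IsClosed (C t) ∧ IsProxRegular r (C t))
    (υ υ' : ℝ → ℝ)
    (hυint : IntervalIntegrable υ' volume T0 T)
    (hυAC : ∀ t ∈ Icc T0 T, υ t = υ T0 + ∫ s in T0..t, υ' s)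
    (hmove : ∀ s ∈ Icc T0 T, ∀ t ∈ Icc T0 T,
      C t ⊆ C s + |υ s - υ t| • Metric.closedBall (0 : H) 1)
    (f1 : ℝ → H → H)
    (hf1meas : ∀ x : H, StronglyMeasurable fun t => f1 t x)
    (β1 : ℝ → ℝ)
    (hβ1int : IntervalIntegrable β1 volume T0 T)
    (hβ1nn : ∀ t ∈ Icc T0 T, 0 ≤ β1 t)
    (hf1grow : ∀ t ∈ Icc T0 T, ∀ x ∈ ⋃ s ∈ Icc T0 T, C s, ‖f1 t x‖ ≤ β1 t * (1 + ‖x‖))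
    (hf1lip : ∀ η : ℝ, 0 < η → ∃ L1 : ℝ → ℝ, IntervalIntegrable L1 volume T0 T ∧
      (∀ t ∈ Icc T0 T, 0 ≤ L1 t) ∧
      ∀ t ∈ Icc T0 T, ∀ x ∈ Metric.closedBall (0 : H) η,
        ∀ y ∈ Metric.closedBall (0 : H) η, ‖f1 t x - f1 t y‖ ≤ L1 t * ‖x - y‖)
    (f2 : ℝ → ℝ → H → H)
    (hf2meas : ∀ x : H, StronglyMeasurable fun p : ℝ × ℝ => f2 p.1 p.2 x)
    (β2 : ℝ → ℝ → ℝ)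
    (hβ2int : IntegrableOn (fun p : ℝ × ℝ => β2 p.1 p.2)
      {p : ℝ × ℝ | p.1 ∈ Icc T0 T ∧ p.2 ∈ Icc T0 T ∧ p.2 ≤ p.1} volume)
    (hβ2nn : ∀ t ∈ Icc T0 T, ∀ s ∈ Icc T0 t, 0 ≤ β2 t s)
    (hf2grow : ∀ t ∈ Icc T0 T, ∀ s ∈ Icc T0 t, ∀ x ∈ ⋃ u ∈ Icc T0 T, C u,
      ‖f2 t s x‖ ≤ β2 t s * (1 + ‖x‖))
    (hf2lip : ∀ η : ℝ, 0 < η → ∃ L2 : ℝ → ℝ, IntervalIntegrable L2 volume T0 T ∧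
      (∀ t ∈ Icc T0 T, 0 ≤ L2 t) ∧
      ∀ t ∈ Icc T0 T, ∀ s ∈ Icc T0 t, ∀ x ∈ Metric.closedBall (0 : H) η,
        ∀ y ∈ Metric.closedBall (0 : H) η, ‖f2 t s x - f2 t s y‖ ≤ L2 t * ‖x - y‖)
    (hsmall : (∫ τ in T0..T, (β1 τ + ∫ s in T0..τ, β2 τ s)) < 1 / 4)
    (x0 : H) (hx0 : x0 ∈ C T0)
    (x x' : ℝ → H) (hinit : x T0 = x0)
    (hx : IsIDSweepingSol T0 T C f1 f2 x x') :
    (∀ t ∈ Icc T0 T, ‖f1 t (x t)‖ ≤ (1 + 2 * (‖x0‖ + (∫ τ in T0..T, |υ' τ|) + 1 / 2)) * β1 t) ∧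
    (∀ t ∈ Icc T0 T, ∀ s ∈ Icc T0 t, ‖f2 t s (x s)‖ ≤ (1 + 2 * (‖x0‖ + (∫ τ in T0..T, |υ' τ|) + 1 / 2)) * β2 t s) ∧
    (∀ᵐ t ∂volume, t ∈ Icc T0 T →
      ‖x' t + f1 t (x t) + ∫ s in T0..t, f2 t s (x s)‖ ≤
        (1 + 2 * (‖x0‖ + (∫ τ in T0..T, |υ' τ|) + 1 / 2)) * (β1 t + ∫ s in T0..t, β2 t s) + |υ' t|) := by
  obtain ⟨hx'int, hxInt, hxC, hincl⟩ := hx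
  set V : ℝ := ∫ τ in T0..T, |υ' τ| with hV
  have hV0 : 0 ≤ V := intervalIntegral.integral_nonneg hT.le fun u _ => abs_nonneg _
  set M : ℝ := 2 * (‖x0‖ + V + 1 / 2) with hM
  have hM0 : 0 ≤ M := by positivity
  -- continuity of x on [T0, T]
  have hx'Icc : IntegrableOn x' (Icc T0 T) volume :=
    (intervalIntegrable_iff_integrableOn_Icc_of_le hT.le).1 hx'int
  have hxcont : ContinuousOn x (Icc T0 T) := by
    have h1 : ContinuousOn (fun u => x T0 + ∫ s in T0..u, x' s) (Icc T0 T) := by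
      apply continuousOn_const.add
      have h2 := intervalIntegral.continuousOn_primitive_interval
        (a := T0) (b := T) (μ := volume) (f := x') (by rwa [uIcc_of_le hT.le])
      rwa [uIcc_of_le hT.le] at h2
    exact h1.congr fun t ht => hxInt t ht
  -- sup of ‖x‖ on [T0, T]
  obtain ⟨tm, htm, hmax⟩ := isCompact_Icc.exists_isMaxOn (nonempty_Icc.2 hT.le) hxcont.norm
  set A : ℝ := ‖x tm‖ with hA
  have hA0 : 0 ≤ A := norm_nonneg _
  have hAle : ∀ t ∈ Icc T0 T, ‖x t‖ ≤ A := fun t ht => hmax ht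
  -- the triangle set and truncated kernel
  set S : Set (ℝ × ℝ) := {p : ℝ × ℝ | p.1 ∈ Icc T0 T ∧ p.2 ∈ Icc T0 T ∧ p.2 ≤ p.1} with hS
  have hSmeas : MeasurableSet S := by
    have : S = (Icc T0 T ×ˢ Icc T0 T) ∩ {p : ℝ × ℝ | p.2 ≤ p.1} := by
      ext p; simp only [hS, mem_setOf_eq, mem_inter_iff, mem_prod]; tauto
    rw [this]
    exact (measurableSet_Icc.prod measurableSet_Icc).inter
      (measurableSet_le measurable_snd measurable_fst)
  set G : ℝ × ℝ → ℝ := S.indicator (fun p => β2 p.1 p.2) with hG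
  have hGnn : ∀ p, 0 ≤ G p := by
    intro p
    rw [hG, Set.indicator_apply]
    split
    · next hp => exact hβ2nn p.1 hp.1 p.2 ⟨hp.2.1.1, hp.2.2⟩
    · exact le_refl _
  have hGint : Integrable G volume := (integrable_indicator_iff hSmeas).2 hβ2int
  have hGprod : Integrable G (volume.prod volume) := by rwa [← MeasureTheory.Measure.volume_eq_prod ℝ ℝ]
  have hGsec : ∀ᵐ t : ℝ ∂volume, Integrable (fun s => G (t, s)) volume := hGprod.prod_right_ae
  set F : ℝ → ℝ := fun t => ∫ s, G (t, s) with hF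
  have hFint : Integrable F volume := hGprod.integral_prod_left
  have hFnn : ∀ t, 0 ≤ F t := fun t => integral_nonneg fun s => hGnn _
  -- section facts
  have hsec : ∀ t ∈ Icc T0 T, Integrable (fun s => G (t, s)) volume →
      IntervalIntegrable (fun s => β2 t s) volume T0 t ∧
      F t = (∫ s in T0..t, β2 t s) ∧ 0 ≤ ∫ s in T0..t, β2 t s := by
    intro t ht hti
    have hEq : EqOn (fun s => G (t, s)) (fun s => β2 t s) (Ioc T0 t) := by
      intro s hs
      simp only [hG, Set.indicator_apply]
      rw [if_pos]
      exact ⟨ht, ⟨hs.1.le, hs.2.trans ht.2⟩, hs.2⟩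
    have hIOn : IntegrableOn (fun s => β2 t s) (Ioc T0 t) volume :=
      (hti.integrableOn.congr_fun hEq measurableSet_Ioc : _)
    have hii : IntervalIntegrable (fun s => β2 t s) volume T0 t :=
      (intervalIntegrable_iff_integrableOn_Ioc_of_le ht.1).2 hIOn
    have hind : (fun s => G (t, s)) = (Icc T0 t).indicator (fun s => G (t, s)) := by
      funext s
      rw [Set.indicator_apply]
      split
      · rfl
      · next hs =>
        simp only [hG, Set.indicator_apply]
        rw [if_neg]
        intro hc
        exact hs ⟨hc.2.1.1, hc.2.2⟩
    have hFeq : F t = ∫ s in T0..t, β2 t s := by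
      rw [hF]
      simp only []
      conv_lhs => rw [hind]
      rw [integral_indicator measurableSet_Icc, integral_Icc_eq_integral_Ioc,
        intervalIntegral.integral_of_le ht.1]
      exact setIntegral_congr_fun measurableSet_Ioc hEq
    have hnn : 0 ≤ ∫ s in T0..t, β2 t s := hFeq ▸ hFnn t
    exact ⟨hii, hFeq, hnn⟩
  -- growth bounds along the solution
  have hxmem : ∀ s ∈ Icc T0 T, x s ∈ ⋃ u ∈ Icc T0 T, C u := fun s hs =>
    mem_biUnion hs (hxC s hs)
  have hf1b : ∀ K : ℝ, 0 ≤ K → (∀ s ∈ Icc T0 T, ‖x s‖ ≤ K) →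
      ∀ t ∈ Icc T0 T, ‖f1 t (x t)‖ ≤ (1 + K) * β1 t := by
    intro K hK hKle t ht
    calc ‖f1 t (x t)‖ ≤ β1 t * (1 + ‖x t‖) := hf1grow t ht _ (hxmem t ht)
    _ ≤ β1 t * (1 + K) :=
      mul_le_mul_of_nonneg_left (by linarith [hKle t ht]) (hβ1nn t ht)
    _ = (1 + K) * β1 t := mul_comm _ _
  have hf2b : ∀ K : ℝ, 0 ≤ K → (∀ s ∈ Icc T0 T, ‖x s‖ ≤ K) →
      ∀ t ∈ Icc T0 T, ∀ s ∈ Icc T0 t, ‖f2 t s (x s)‖ ≤ (1 + K) * β2 t s := by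
    intro K hK hKle t ht s hs
    have hsIcc : s ∈ Icc T0 T := ⟨hs.1, hs.2.trans ht.2⟩
    calc ‖f2 t s (x s)‖ ≤ β2 t s * (1 + ‖x s‖) := hf2grow t ht s hs _ (hxmem s hsIcc)
    _ ≤ β2 t s * (1 + K) :=
      mul_le_mul_of_nonneg_left (by linarith [hKle s hsIcc]) (hβ2nn t ht s hs)
    _ = (1 + K) * β2 t s := mul_comm _ _
  have hIb : ∀ K : ℝ, 0 ≤ K → (∀ s ∈ Icc T0 T, ‖x s‖ ≤ K) → ∀ t ∈ Icc T0 T,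
      IntervalIntegrable (fun s => β2 t s) volume T0 t → (0 ≤ ∫ s in T0..t, β2 t s) →
      ‖∫ s in T0..t, f2 t s (x s)‖ ≤ (1 + K) * ∫ s in T0..t, β2 t s := by
    intro K hK hKle t ht hii hnn
    have hb : ∀ᵐ s ∂volume.restrict (uIoc T0 t), ‖f2 t s (x s)‖ ≤ (1 + K) * β2 t s := by
      rw [uIoc_of_le ht.1]
      refine (ae_restrict_iff' measurableSet_Ioc).2 (Filter.Eventually.of_forall fun s hs => ?_)
      exact hf2b K hK hKle t ht s ⟨hs.1.le, hs.2⟩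
    have h1 := intervalIntegral.norm_integral_le_abs_of_norm_le hb (hii.const_mul (1 + K))
    have h2 : (∫ s in T0..t, (1 + K) * β2 t s) = (1 + K) * ∫ s in T0..t, β2 t s :=
      intervalIntegral.integral_const_mul _ _
    rw [h2, abs_of_nonneg (by positivity)] at h1
    exact h1
  have hg_bound : ∀ K : ℝ, 0 ≤ K → (∀ s ∈ Icc T0 T, ‖x s‖ ≤ K) → ∀ t ∈ Icc T0 T,
      Integrable (fun s => G (t, s)) volume →
      ‖f1 t (x t) + ∫ s in T0..t, f2 t s (x s)‖ ≤
        (1 + K) * (β1 t + ∫ s in T0..t, β2 t s) := by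
    intro K hK hKle t ht hti
    obtain ⟨hii, hFeq, hnn⟩ := hsec t ht hti
    calc ‖f1 t (x t) + ∫ s in T0..t, f2 t s (x s)‖
        ≤ ‖f1 t (x t)‖ + ‖∫ s in T0..t, f2 t s (x s)‖ := norm_add_le _ _
    _ ≤ (1 + K) * β1 t + (1 + K) * ∫ s in T0..t, β2 t s :=
      add_le_add (hf1b K hK hKle t ht) (hIb K hK hKle t ht hii hnn)
    _ = (1 + K) * (β1 t + ∫ s in T0..t, β2 t s) := by ring
  -- a.e. one-sided (left) differentiability
  have hxslope : ∀ᵐ t ∂(volume : Measure ℝ), t ∈ Ioo T0 T →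
      Filter.Tendsto (fun h : ℝ => h⁻¹ • (x t - x (t - h))) (nhdsWithin 0 (Ioi 0))
        (nhds (x' t)) := by
    have hxe : Integrable ((Icc T0 T).indicator x') volume :=
      (integrable_indicator_iff measurableSet_Icc).2 hx'Icc
    filter_upwards [aux_ae_left_deriv hxe] with t htt ht
    have hte : (Icc T0 T).indicator x' t = x' t :=
      indicator_of_mem (Ioo_subset_Icc_self ht) _
    rw [← hte]
    apply htt.congr'
    filter_upwards [Ioo_mem_nhdsGT_of_mem
      (show (0:ℝ) ∈ Ico 0 (t - T0) from ⟨le_refl _, sub_pos.2 ht.1⟩)] with h hh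
    have hthIcc : t - h ∈ Icc T0 T := ⟨by linarith [hh.2], by linarith [ht.2.le, hh.1.le]⟩
    have htIcc : t ∈ Icc T0 T := Ioo_subset_Icc_self ht
    have hsub1 : IntervalIntegrable x' volume T0 t := by
      apply hx'int.mono_set
      rw [uIcc_of_le ht.1.le, uIcc_of_le hT.le]
      exact Icc_subset_Icc le_rfl htIcc.2
    have hsub2 : IntervalIntegrable x' volume T0 (t - h) := by
      apply hx'int.mono_set
      rw [uIcc_of_le hthIcc.1, uIcc_of_le hT.le]
      exact Icc_subset_Icc le_rfl hthIcc.2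
    have hdiff : x t - x (t - h) = ∫ s in t-h..t, x' s := by
      rw [hxInt t htIcc, hxInt (t - h) hthIcc, add_sub_add_left_eq_sub]
      exact intervalIntegral.integral_interval_sub_left hsub1 hsub2
    have hintcongr : (∫ s in t-h..t, (Icc T0 T).indicator x' s) = ∫ s in t-h..t, x' s := by
      apply intervalIntegral.integral_congr
      intro s hs
      rw [uIcc_of_le (by linarith [hh.1.le] : t - h ≤ t)] at hs
      exact indicator_of_mem
        (mem_Icc.mpr ⟨le_trans hthIcc.1 hs.1, le_trans hs.2 htIcc.2⟩) _
    rw [hintcongr, hdiff]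
  have hυslope : ∀ᵐ t ∂(volume : Measure ℝ), t ∈ Ioo T0 T →
      Filter.Tendsto (fun h : ℝ => h⁻¹ * (υ t - υ (t - h))) (nhdsWithin 0 (Ioi 0))
        (nhds (υ' t)) := by
    have hυIcc : IntegrableOn υ' (Icc T0 T) volume :=
      (intervalIntegrable_iff_integrableOn_Icc_of_le hT.le).1 hυint
    have hυe : Integrable ((Icc T0 T).indicator υ') volume :=
      (integrable_indicator_iff measurableSet_Icc).2 hυIcc
    filter_upwards [aux_ae_left_deriv hυe] with t htt ht
    have hte : (Icc T0 T).indicator υ' t = υ' t :=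
      indicator_of_mem (Ioo_subset_Icc_self ht) _
    rw [← hte]
    apply htt.congr'
    filter_upwards [Ioo_mem_nhdsGT_of_mem
      (show (0:ℝ) ∈ Ico 0 (t - T0) from ⟨le_refl _, sub_pos.2 ht.1⟩)] with h hh
    have hthIcc : t - h ∈ Icc T0 T := ⟨by linarith [hh.2], by linarith [ht.2.le, hh.1.le]⟩
    have htIcc : t ∈ Icc T0 T := Ioo_subset_Icc_self ht
    have hsub1 : IntervalIntegrable υ' volume T0 t := by
      apply hυint.mono_set
      rw [uIcc_of_le ht.1.le, uIcc_of_le hT.le]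
      exact Icc_subset_Icc le_rfl htIcc.2
    have hsub2 : IntervalIntegrable υ' volume T0 (t - h) := by
      apply hυint.mono_set
      rw [uIcc_of_le hthIcc.1, uIcc_of_le hT.le]
      exact Icc_subset_Icc le_rfl hthIcc.2
    have hdiff : υ t - υ (t - h) = ∫ s in t-h..t, υ' s := by
      rw [hυAC t htIcc, hυAC (t - h) hthIcc, add_sub_add_left_eq_sub]
      exact intervalIntegral.integral_interval_sub_left hsub1 hsub2
    have hintcongr : (∫ s in t-h..t, (Icc T0 T).indicator υ' s) = ∫ s in t-h..t, υ' s := by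
      apply intervalIntegral.integral_congr
      intro s hs
      rw [uIcc_of_le (by linarith [hh.1.le] : t - h ≤ t)] at hs
      exact indicator_of_mem
        (mem_Icc.mpr ⟨le_trans hthIcc.1 hs.1, le_trans hs.2 htIcc.2⟩) _
    rw [hintcongr, hdiff, smul_eq_mul]
  -- the key normal-cone estimate
  have hkey : ∀ᵐ t ∂(volume : Measure ℝ), t ∈ Ioo T0 T →
      ‖x' t + (f1 t (x t) + ∫ s in T0..t, f2 t s (x s))‖ ≤
        ‖f1 t (x t) + ∫ s in T0..t, f2 t s (x s)‖ + |υ' t| := by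
    filter_upwards [hxslope, hυslope, hincl] with t hxs hυs hin ht
    have htIcc : t ∈ Icc T0 T := Ioo_subset_Icc_self ht
    have hinc := hin htIcc
    set g : H := f1 t (x t) + ∫ s in T0..t, f2 t s (x s) with hgdef
    set ζ : H := -x' t - f1 t (x t) - ∫ s in T0..t, f2 t s (x s) with hζdef
    have hζeq : x' t + g = -ζ := by rw [hζdef, hgdef]; abel
    rcases eq_or_ne ζ 0 with h0 | h0
    · rw [hζeq, h0, norm_neg, norm_zero]
      positivity
    have hζn : (0:ℝ) < ‖ζ‖ := norm_pos_iff.2 h0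
    have hinner : -⟪ζ, x' t⟫ ≤ ‖ζ‖ * |υ' t| := by
      set K : ℝ := ((2 * r)⁻¹).toReal with hK
      have hK0 : 0 ≤ K := ENNReal.toReal_nonneg
      have hreg := (hC t htIcc).2.2 (x t) (hxC t htIcc) ζ hinc h0
      have hprox : ∀ y ∈ C t, ⟪ζ, y - x t⟫ ≤ ‖ζ‖ * (K * ‖y - x t‖ ^ 2) := by
        intro y hy
        have h1 := hreg y hy
        rw [real_inner_smul_left] at h1
        calc ⟪ζ, y - x t⟫ = ‖ζ‖ * (‖ζ‖⁻¹ * ⟪ζ, y - x t⟫) := by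
              field_simp
        _ ≤ ‖ζ‖ * (K * ‖y - x t‖ ^ 2) := mul_le_mul_of_nonneg_left h1 hζn.le
      have hxs' := hxs ht
      have hυs' := hυs ht
      have hev : ∀ᶠ h in nhdsWithin (0:ℝ) (Ioi 0),
          -⟪ζ, h⁻¹ • (x t - x (t - h))⟫ ≤
          ‖ζ‖ * (K * (h * (‖h⁻¹ • (x t - x (t - h))‖ + |h⁻¹ * (υ t - υ (t - h))|) ^ 2)
            + |h⁻¹ * (υ t - υ (t - h))|) := by
        filter_upwards [Ioo_mem_nhdsGT_of_mem
          (show (0:ℝ) ∈ Ico 0 (t - T0) from ⟨le_refl _, sub_pos.2 ht.1⟩)] with h hh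
        obtain ⟨hh0, hhT⟩ := hh
        have hthIcc : t - h ∈ Icc T0 T := ⟨by linarith, by linarith [ht.2.le]⟩
        obtain ⟨y, hy, b, hb, hxy⟩ := hmove t htIcc (t - h) hthIcc (hxC (t - h) hthIcc)
        obtain ⟨b', hb', rfl⟩ := hb
        set c : ℝ := |υ t - υ (t - h)| with hc
        have hbn : ‖c • b'‖ ≤ |υ t - υ (t - h)| := by
          rw [norm_smul, Real.norm_eq_abs, hc, abs_abs]
          calc |υ t - υ (t - h)| * ‖b'‖ ≤ |υ t - υ (t - h)| * 1 :=
            mul_le_mul_of_nonneg_left (mem_closedBall_zero_iff.1 hb') (abs_nonneg _)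
          _ = |υ t - υ (t - h)| := mul_one _
        have hyx : y - x t = (x (t - h) - x t) - c • b' := by
          rw [← hxy]; dsimp only; abel
        have hynorm : ‖y - x t‖ ≤ ‖x t - x (t - h)‖ + |υ t - υ (t - h)| := by
          rw [hyx]
          refine (norm_sub_le _ _).trans ?_
          rw [norm_sub_rev]
          linarith [hbn]
        have hsplit : ⟪ζ, x (t - h) - x t⟫ = ⟪ζ, y - x t⟫ + ⟪ζ, c • b'⟫ := by
          rw [← inner_add_right]
          congr 1
          rw [hyx]; abel
        have hib : ⟪ζ, c • b'⟫ ≤ ‖ζ‖ * |υ t - υ (t - h)| := by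
          calc ⟪ζ, c • b'⟫ ≤ ‖ζ‖ * ‖c • b'‖ := real_inner_le_norm _ _
          _ ≤ ‖ζ‖ * |υ t - υ (t - h)| := mul_le_mul_of_nonneg_left hbn hζn.le
        have hsq : ‖y - x t‖ ^ 2 ≤ (‖x t - x (t - h)‖ + |υ t - υ (t - h)|) ^ 2 :=
          pow_le_pow_left₀ (norm_nonneg _) hynorm 2
        have hmain : ⟪ζ, x (t - h) - x t⟫ ≤
            ‖ζ‖ * (K * (‖x t - x (t - h)‖ + |υ t - υ (t - h)|) ^ 2 + |υ t - υ (t - h)|) := by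
          have h3 := hprox y hy
          have h4 : ‖ζ‖ * (K * ‖y - x t‖ ^ 2) ≤
              ‖ζ‖ * (K * (‖x t - x (t - h)‖ + |υ t - υ (t - h)|) ^ 2) :=
            mul_le_mul_of_nonneg_left (mul_le_mul_of_nonneg_left hsq hK0) hζn.le
          rw [hsplit]
          nlinarith [h3, h4, hib]
        have hneg : -⟪ζ, h⁻¹ • (x t - x (t - h))⟫ = h⁻¹ * ⟪ζ, x (t - h) - x t⟫ := by
          rw [real_inner_smul_right, ← mul_neg]
          congr 1
          rw [← inner_neg_right]
          congr 1
          abel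
        rw [hneg]
        simp only [norm_smul, Real.norm_eq_abs, abs_mul, abs_inv, abs_of_pos hh0]
        calc h⁻¹ * ⟪ζ, x (t - h) - x t⟫ ≤
            h⁻¹ * (‖ζ‖ * (K * (‖x t - x (t - h)‖ + |υ t - υ (t - h)|) ^ 2
              + |υ t - υ (t - h)|)) :=
          mul_le_mul_of_nonneg_left hmain (inv_pos.2 hh0).le
        _ = ‖ζ‖ * (K * (h * (h⁻¹ * ‖x t - x (t - h)‖ + h⁻¹ * |υ t - υ (t - h)|) ^ 2)
              + h⁻¹ * |υ t - υ (t - h)|) := by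
          field_simp
      have hlim1 : Filter.Tendsto (fun h : ℝ => -⟪ζ, h⁻¹ • (x t - x (t - h))⟫)
          (nhdsWithin 0 (Ioi 0)) (nhds (-⟪ζ, x' t⟫)) :=
        (Filter.Tendsto.inner tendsto_const_nhds hxs').neg
      have hid0 : Filter.Tendsto (fun h : ℝ => h) (nhdsWithin (0:ℝ) (Ioi 0)) (nhds 0) :=
        tendsto_id.mono_left nhdsWithin_le_nhds
      have hlim2 : Filter.Tendsto (fun h : ℝ =>
          ‖ζ‖ * (K * (h * (‖h⁻¹ • (x t - x (t - h))‖ + |h⁻¹ * (υ t - υ (t - h))|) ^ 2)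
            + |h⁻¹ * (υ t - υ (t - h))|))
          (nhdsWithin 0 (Ioi 0))
          (nhds (‖ζ‖ * (K * (0 * (‖x' t‖ + |υ' t|) ^ 2) + |υ' t|))) := by
        apply Filter.Tendsto.const_mul
        exact ((Filter.Tendsto.const_mul K ((hid0.mul
          ((hxs'.norm.add hυs'.abs).pow 2)))).add hυs'.abs)
      have hfin := le_of_tendsto_of_tendsto hlim1 hlim2 hev
      have hz : ‖ζ‖ * (K * (0 * (‖x' t‖ + |υ' t|) ^ 2) + |υ' t|) = ‖ζ‖ * |υ' t| := by ring
      linarith [hfin, hz.le, hz.ge]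
    -- conclude from the inner product bound
    have h4 : -⟪ζ, g⟫ ≤ ‖ζ‖ * ‖g‖ := by
      have ha := abs_real_inner_le_norm ζ g
      have hb := neg_abs_le ⟪ζ, g⟫
      linarith
    have e1 : ⟪ζ, x' t + g⟫ = ⟪ζ, x' t⟫ + ⟪ζ, g⟫ := inner_add_right ζ (x' t) g
    rw [hζeq, inner_neg_right, real_inner_self_eq_norm_sq] at e1
    have h6 : ‖ζ‖ * ‖ζ‖ ≤ ‖ζ‖ * (|υ' t| + ‖g‖) := by nlinarith [e1, h4, hinner]
    have h7 : ‖ζ‖ ≤ |υ' t| + ‖g‖ := le_of_mul_le_mul_left h6 hζn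
    rw [hζeq, norm_neg]
    linarith
  -- derivative bound
  have hx'bound : ∀ᵐ t ∂(volume : Measure ℝ), t ∈ Ioo T0 T →
      ‖x' t‖ ≤ |υ' t| + 2 * (1 + A) * (β1 t + F t) := by
    filter_upwards [hkey, hGsec] with t hk hsect ht
    have htIcc : t ∈ Icc T0 T := Ioo_subset_Icc_self ht
    obtain ⟨hii, hFeq, hnn⟩ := hsec t htIcc hsect
    have hgb := hg_bound A hA0 hAle t htIcc hsect
    have hk' := hk ht
    have h1 : ‖x' t‖ ≤ ‖x' t + (f1 t (x t) + ∫ s in T0..t, f2 t s (x s))‖ +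
        ‖f1 t (x t) + ∫ s in T0..t, f2 t s (x s)‖ := by
      have := norm_sub_le (x' t + (f1 t (x t) + ∫ s in T0..t, f2 t s (x s)))
        (f1 t (x t) + ∫ s in T0..t, f2 t s (x s))
      simpa using this
    rw [hFeq]
    linarith
  -- integral smallness
  have hQeq : (∫ τ in T0..T, (β1 τ + F τ)) = ∫ τ in T0..T, (β1 τ + ∫ s in T0..τ, β2 τ s) := by
    apply intervalIntegral.integral_congr_ae
    rw [uIoc_of_le hT.le]
    filter_upwards [hGsec] with τ hsect hτ
    rw [(hsec τ ⟨hτ.1.le, hτ.2⟩ hsect).2.1]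
  have hQlt : (∫ τ in T0..T, (β1 τ + F τ)) < 1 / 4 := by rw [hQeq]; exact hsmall
  have hβFint : IntervalIntegrable (fun τ => β1 τ + F τ) volume T0 T :=
    hβ1int.add hFint.intervalIntegrable
  have hBint : IntervalIntegrable (fun τ => |υ' τ| + 2 * (1 + A) * (β1 τ + F τ)) volume T0 T :=
    hυint.abs.add (hβFint.const_mul _)
  have hIx' : (∫ τ in T0..T, ‖x' τ‖) ≤ V + 2 * (1 + A) * ∫ τ in T0..T, (β1 τ + F τ) := by
    have hmono : (∫ τ in T0..T, ‖x' τ‖) ≤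
        ∫ τ in T0..T, (|υ' τ| + 2 * (1 + A) * (β1 τ + F τ)) := by
      apply intervalIntegral.integral_mono_ae_restrict hT.le hx'int.norm hBint
      refine (ae_restrict_iff' measurableSet_Icc).2 ?_
      have hne1 : ∀ᵐ τ : ℝ ∂volume, τ ≠ T0 := by
        rw [Filter.Eventually, mem_ae_iff]
        have h : {τ : ℝ | τ ≠ T0}ᶜ = {T0} := by ext u; simp
        rw [h]; exact measure_singleton _
      have hne2 : ∀ᵐ τ : ℝ ∂volume, τ ≠ T := by
        rw [Filter.Eventually, mem_ae_iff]
        have h : {τ : ℝ | τ ≠ T}ᶜ = {T} := by ext u; simp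
        rw [h]; exact measure_singleton _
      filter_upwards [hx'bound, hne1, hne2] with τ hb hn1 hn2 hτ
      exact hb ⟨lt_of_le_of_ne hτ.1 (Ne.symm hn1), lt_of_le_of_ne hτ.2 hn2⟩
    calc (∫ τ in T0..T, ‖x' τ‖) ≤ ∫ τ in T0..T, (|υ' τ| + 2 * (1 + A) * (β1 τ + F τ)) := hmono
    _ = V + 2 * (1 + A) * ∫ τ in T0..T, (β1 τ + F τ) := by
      rw [intervalIntegral.integral_add hυint.abs (hβFint.const_mul _),
        intervalIntegral.integral_const_mul]
  have hAM : A ≤ M := by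
    have h1 : A ≤ ‖x0‖ + ∫ τ in T0..T, ‖x' τ‖ := by
      have e := hxInt tm htm
      calc A = ‖x tm‖ := rfl
      _ ≤ ‖x T0‖ + ‖∫ s in T0..tm, x' s‖ := by rw [e]; exact norm_add_le _ _
      _ ≤ ‖x0‖ + ∫ s in T0..tm, ‖x' s‖ := by
        rw [hinit]
        exact add_le_add_right (intervalIntegral.norm_integral_le_integral_norm htm.1) _
      _ ≤ ‖x0‖ + ∫ s in T0..T, ‖x' s‖ := by
        apply add_le_add_right
        apply intervalIntegral.integral_mono_interval le_rfl htm.1 htm.2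
        · exact Filter.Eventually.of_forall fun s => norm_nonneg _
        · exact hx'int.norm
    have h2 : 2 * (1 + A) * (∫ τ in T0..T, (β1 τ + F τ)) ≤ 2 * (1 + A) * (1 / 4) :=
      mul_le_mul_of_nonneg_left hQlt.le (by positivity)
    rw [hM]
    nlinarith [hIx', h1, h2]
  have hxb : ∀ t ∈ Icc T0 T, ‖x t‖ ≤ M := fun t ht => (hAle t ht).trans hAM
  -- conclusions
  refine ⟨fun t ht => hf1b M hM0 hxb t ht, fun t ht s hs => hf2b M hM0 hxb t ht s hs, ?_⟩
  have hne1 : ∀ᵐ t : ℝ ∂volume, t ≠ T0 := by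
    rw [Filter.Eventually]
    rw [mem_ae_iff]
    have : {t : ℝ | t ≠ T0}ᶜ = {T0} := by ext u; simp
    rw [this]
    exact measure_singleton _
  have hne2 : ∀ᵐ t : ℝ ∂volume, t ≠ T := by
    rw [Filter.Eventually, mem_ae_iff]
    have : {t : ℝ | t ≠ T}ᶜ = {T} := by ext u; simp
    rw [this]
    exact measure_singleton _
  filter_upwards [hkey, hGsec, hne1, hne2] with t hk hsect hn1 hn2 ht
  have htIoo : t ∈ Ioo T0 T := ⟨lt_of_le_of_ne ht.1 (Ne.symm hn1), lt_of_le_of_ne ht.2 hn2⟩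
  have hk' := hk htIoo
  have hgb := hg_bound M hM0 hxb t ht hsect
  calc ‖x' t + f1 t (x t) + ∫ s in T0..t, f2 t s (x s)‖
      = ‖x' t + (f1 t (x t) + ∫ s in T0..t, f2 t s (x s))‖ := by rw [add_assoc]
  _ ≤ ‖f1 t (x t) + ∫ s in T0..t, f2 t s (x s)‖ + |υ' t| := hk'
  _ ≤ (1 + M) * (β1 t + ∫ s in T0..t, β2 t s) + |υ' t| := add_le_add_left hgb _
end
end

section
/- Let H be a real Hilbert space and assume (H1), (H2) and (H3). If x1, x2 : [T0,T] → H are two absolutely continuous mappings with x1(T0) = x2(T0), x_i(t) ∈ C(t) for all t ∈ [T0,T] (i = 1,2), and −x_i'(t) ∈ N_{C(t)}(x_i(t)) + f1(t, x_i(t)) + ∫_{T0}^t f2(t, s, x_i(s)) ds for almost every t ∈ [T0,T] (i = 1,2), then x1(t) = x2(t) for all t ∈ [T0,T]. -/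
open MeasureTheory Set
open scoped RealInnerProductSpace ENNReal Pointwise NNReal

noncomputable section

variable {H : Type*} [NormedAddCommGroup H] [InnerProductSpace ℝ H]

set_option linter.unusedSectionVars false
set_option maxHeartbeats 1600000

lemma sm_comp_countable {F : ℝ → H → H} (hF : ∀ c : H, StronglyMeasurable fun σ => F σ c)
    {y : ℝ → H} (hcount : (range y).Countable)
    (hfib : ∀ c : H, MeasurableSet (y ⁻¹' {c})) :
    StronglyMeasurable fun σ => F σ (y σ) := by
  borelize H
  rw [stronglyMeasurable_iff_measurable_separable]
  constructor
  · intro E hE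
    have hset : (fun σ => F σ (y σ)) ⁻¹' E
        = ⋃ c ∈ range y, (y ⁻¹' {c} ∩ (fun σ => F σ c) ⁻¹' E) := by
      ext σ
      simp only [mem_preimage, mem_iUnion, mem_inter_iff, mem_singleton_iff]
      constructor
      · intro h; exact ⟨y σ, ⟨σ, rfl⟩, rfl, h⟩
      · rintro ⟨c, -, h1, h2⟩; rw [h1]; exact h2
    rw [hset]
    exact MeasurableSet.biUnion hcount
      (fun c _ => (hfib c).inter ((hF c).measurable hE))
  · have hsub : range (fun σ => F σ (y σ)) ⊆ ⋃ c ∈ range y, range fun σ => F σ c := by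
      rintro - ⟨σ, rfl⟩
      exact mem_biUnion ⟨σ, rfl⟩ ⟨σ, rfl⟩
    refine TopologicalSpace.IsSeparable.mono ?_ hsub
    have := hcount.to_subtype
    rw [biUnion_eq_iUnion]
    exact TopologicalSpace.IsSeparable.iUnion fun c => (hF c).isSeparable_range

lemma aesm_comp {F : ℝ → H → H} {x : ℝ → H} {a b : ℝ}
    (hF : ∀ c : H, StronglyMeasurable fun σ => F σ c)
    (hx : ContinuousOn x (Icc a b))
    (hlip : ∀ σ ∈ Icc a b, ∃ L : ℝ, ∀ y ∈ x '' Icc a b,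
      ‖F σ y - F σ (x σ)‖ ≤ L * ‖y - x σ‖) :
    AEStronglyMeasurable (fun σ => F σ (x σ)) (volume.restrict (Icc a b)) := by
  rcases le_or_gt b a with hba | hab
  · have h0 : volume.restrict (Icc a b) = 0 := by
      rw [Measure.restrict_eq_zero]
      exact measure_mono_null (fun z hz => show z ∈ ({a} : Set ℝ) from
        le_antisymm (le_trans hz.2 hba) hz.1) (measure_singleton a)
    rw [h0]
    exact aestronglyMeasurable_zero_measure _
  · -- a < b
    set q : ℕ → ℝ → ℝ := fun n σ => a + (⌊(σ - a) * (n + 1) / (b - a)⌋ : ℝ) * (b - a) / (n + 1)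
      with hq_def
    have hba' : (0:ℝ) < b - a := by linarith
    have hqmeas : ∀ n, Measurable (q n) := by
      intro n
      apply Measurable.add measurable_const
      apply Measurable.div _ measurable_const
      apply Measurable.mul _ measurable_const
      exact Measurable.comp (measurable_of_countable _) (Measurable.floor
        (((measurable_id.sub_const a).mul_const _).div_const _))
    have hqrange : ∀ n, (range (q n)).Countable := by
      intro n
      have : range (q n) ⊆ range (fun k : ℤ => a + (k : ℝ) * (b - a) / (n + 1)) := by
        rintro - ⟨σ, rfl⟩
        exact ⟨⌊(σ - a) * (n + 1) / (b - a)⌋, rfl⟩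
      exact (countable_range _).mono this
    have hqmem : ∀ n, ∀ σ ∈ Icc a b, q n σ ∈ Icc a b ∧ q n σ ≤ σ ∧ σ - (b-a)/(n+1) ≤ q n σ := by
      intro n σ hσ
      have hn1 : (0:ℝ) < (n:ℝ) + 1 := by positivity
      set u := (σ - a) * (n + 1) / (b - a) with hu
      have hu0 : 0 ≤ u := by
        apply div_nonneg _ hba'.le
        have h1 := hσ.1
        have : (0:ℝ) ≤ (n:ℝ) + 1 := by positivity
        nlinarith
      have hfl0 : (0:ℝ) ≤ (⌊u⌋ : ℝ) := by
        exact_mod_cast Int.le_floor.mpr (by exact_mod_cast hu0)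
      have hfl_le : (⌊u⌋ : ℝ) ≤ u := Int.floor_le u
      have hfl_gt : u - 1 ≤ (⌊u⌋ : ℝ) := by
        have := Int.sub_one_lt_floor u
        linarith
      have hqle : q n σ ≤ σ := by
        have : (⌊u⌋ : ℝ) * (b - a) / (n + 1) ≤ u * (b - a) / (n + 1) := by
          gcongr
        have hueq : u * (b - a) / (n + 1) = σ - a := by
          rw [hu]; field_simp
        simp only [hq_def]
        linarith
      have hqge : a ≤ q n σ := by
        simp only [hq_def]
        have : 0 ≤ (⌊u⌋ : ℝ) * (b - a) / (n + 1) := by positivity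
        linarith
      refine ⟨⟨hqge, le_trans hqle hσ.2⟩, hqle, ?_⟩
      have : (u - 1) * (b - a) / (n + 1) ≤ (⌊u⌋ : ℝ) * (b - a) / (n + 1) := by
        gcongr
      have hueq : u * (b - a) / (n + 1) = σ - a := by rw [hu]; field_simp
      have hexp : (u - 1) * (b - a) / (n + 1) = (σ - a) - (b-a)/(n+1) := by
        rw [sub_mul, sub_div, hueq]; ring
      simp only [hq_def]
      linarith [hexp ▸ this]
    -- the approximating maps
    have hsm : ∀ n, StronglyMeasurable fun σ => F σ (x (q n σ)) := by
      intro n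
      apply sm_comp_countable hF
      · exact ((hqrange n).image x).mono (by rintro - ⟨σ, rfl⟩; exact ⟨q n σ, ⟨σ, rfl⟩, rfl⟩)
      · intro c
        have : (fun σ => x (q n σ)) ⁻¹' {c} = (q n) ⁻¹' (range (q n) ∩ x ⁻¹' {c}) := by
          ext σ
          simp only [mem_preimage, mem_singleton_iff, mem_inter_iff]
          exact ⟨fun h => ⟨⟨σ, rfl⟩, h⟩, fun h => h.2⟩
        rw [this]
        exact hqmeas n (((hqrange n).mono inter_subset_left).measurableSet)
    refine aestronglyMeasurable_of_tendsto_ae Filter.atTop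
      (fun n => (hsm n).aestronglyMeasurable) ?_
    refine (ae_restrict_mem measurableSet_Icc).mono (fun σ hσ => ?_)
    -- q n σ → σ
    have htq : Filter.Tendsto (fun n => q n σ) Filter.atTop (nhds σ) := by
      have h1 : Filter.Tendsto (fun n : ℕ => σ - (b-a)/(n+1)) Filter.atTop (nhds σ) := by
        have : Filter.Tendsto (fun n : ℕ => (b-a) * (1/(n+1))) Filter.atTop (nhds 0) := by
          simpa using (tendsto_one_div_add_atTop_nhds_zero_nat.const_mul (b-a))
        have h2 := Filter.Tendsto.const_sub σ this
        simpa [mul_one_div, div_eq_mul_inv] using h2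
      exact tendsto_of_tendsto_of_tendsto_of_le_of_le h1 tendsto_const_nhds
        (fun n => (hqmem n σ hσ).2.2) (fun n => (hqmem n σ hσ).2.1)
    have htx : Filter.Tendsto (fun n => x (q n σ)) Filter.atTop (nhds (x σ)) := by
      have : Filter.Tendsto (fun n => q n σ) Filter.atTop (nhdsWithin σ (Icc a b)) := by
        rw [tendsto_nhdsWithin_iff]
        exact ⟨htq, Filter.Eventually.of_forall fun n => (hqmem n σ hσ).1⟩
      exact (hx.continuousWithinAt hσ).tendsto.comp this
    obtain ⟨L, hL⟩ := hlip σ hσ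
    have hdist : Filter.Tendsto (fun n => dist (F σ (x (q n σ))) (F σ (x σ)))
        Filter.atTop (nhds 0) := by
      have hb : ∀ n, dist (F σ (x (q n σ))) (F σ (x σ)) ≤ L * dist (x (q n σ)) (x σ) := by
        intro n
        rw [dist_eq_norm, dist_eq_norm]
        exact hL _ ⟨q n σ, (hqmem n σ hσ).1, rfl⟩
      have hL0 : Filter.Tendsto (fun n => L * dist (x (q n σ)) (x σ)) Filter.atTop (nhds 0) := by
        have := (tendsto_iff_dist_tendsto_zero.mp htx).const_mul L
        simpa using this
      exact squeeze_zero (fun n => dist_nonneg) hb hL0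
    exact tendsto_iff_dist_tendsto_zero.mpr hdist

variable [CompleteSpace H]


lemma inner_primitive_integrable {u : ℝ → H} {a t : ℝ} (hat : a ≤ t)
    (hu : IntegrableOn u (Ioc a t) volume) :
    IntegrableOn (fun s => ⟪u s, ∫ σ in Ioc a s, u σ⟫) (Ioc a t) volume := by
  set F : ℝ → H := fun s => ∫ σ in Ioc a s, u σ with hF
  have hFc : ContinuousOn F (Icc a t) :=
    intervalIntegral.continuousOn_primitive ((integrableOn_Icc_iff_integrableOn_Ioc).mpr hu)
  obtain ⟨Cb, hCb⟩ := isCompact_Icc.exists_bound_of_continuousOn hFc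
  have hFm : AEStronglyMeasurable F (volume.restrict (Ioc a t)) :=
    (hFc.aestronglyMeasurable measurableSet_Icc).mono_measure
      (Measure.restrict_mono Ioc_subset_Icc_self le_rfl)
  refine Integrable.mono' (hu.norm.mul_const Cb) (hu.aestronglyMeasurable.inner hFm) ?_
  refine (ae_restrict_mem measurableSet_Ioc).mono (fun s hs => ?_)
  calc ‖⟪u s, F s⟫‖ ≤ ‖u s‖ * ‖F s‖ := norm_inner_le_norm _ _
    _ ≤ ‖u s‖ * Cb := by
        have := hCb s (Ioc_subset_Icc_self hs)
        have h0 : (0:ℝ) ≤ ‖u s‖ := norm_nonneg _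
        nlinarith [norm_nonneg (F s)]

lemma normsq_primitive {u : ℝ → H} {a t : ℝ} (hat : a ≤ t)
    (hu : IntegrableOn u (Ioc a t) volume) :
    ‖∫ s in Ioc a t, u s‖ ^ 2 = 2 * ∫ s in Ioc a t, ⟪u s, ∫ σ in Ioc a s, u σ⟫ := by
  set μ := volume.restrict (Ioc a t) with hμ
  set F : ℝ → H := fun s => ∫ σ in Ioc a s, u σ with hF
  have hμu : Integrable u μ := hu
  set g : ℝ → ℝ → ℝ := fun s σ => if s < σ then ⟪u σ, u s⟫ else 0 with hg
  -- integrability of pieces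
  have i2' : Integrable (fun s => ⟪u s, F s⟫) μ := inner_primitive_integrable hat hu
  have hcomm : (fun s => ⟪F s, u s⟫) = fun s => ⟪u s, F s⟫ := by
    funext s; exact real_inner_comm _ _
  have i2 : Integrable (fun s => ⟪F s, u s⟫) μ := by rw [hcomm]; exact i2'
  have i1 : Integrable (fun s => ⟪F t, u s⟫) μ := hμu.const_inner _
  have i3 : Integrable (fun s => ⟪F t - F s, u s⟫) μ := by
    have : (fun s => ⟪F t - F s, u s⟫) = fun s => ⟪F t, u s⟫ - ⟪F s, u s⟫ := by
      funext s; rw [inner_sub_left]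
    rw [this]; exact i1.sub i2
  -- product integrability
  have hGaesm : AEStronglyMeasurable (Function.uncurry g) (μ.prod μ) := by
    have hind : Function.uncurry g
        = Set.indicator {p : ℝ × ℝ | p.1 < p.2} (fun p => ⟪u p.2, u p.1⟫) := by
      funext p
      by_cases h : p.1 < p.2
      · simp [Function.uncurry, hg, h, Set.indicator_of_mem, mem_setOf_eq]
      · simp [Function.uncurry, hg, h, mem_setOf_eq]
    rw [hind]
    exact ((hμu.aestronglyMeasurable.comp_snd).inner
      (hμu.aestronglyMeasurable.comp_fst)).indicator
      (measurableSet_lt measurable_fst measurable_snd)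
  have hGint : Integrable (Function.uncurry g) (μ.prod μ) := by
    refine Integrable.mono' ((hμu.norm).mul_prod (hμu.norm)) hGaesm ?_
    refine Filter.Eventually.of_forall (fun p => ?_)
    by_cases h : p.1 < p.2
    · simp only [Function.uncurry, hg, if_pos h]
      calc ‖⟪u p.2, u p.1⟫‖ ≤ ‖u p.2‖ * ‖u p.1‖ := norm_inner_le_norm _ _
        _ = ‖u p.1‖ * ‖u p.2‖ := mul_comm _ _
    · simp only [Function.uncurry, hg, if_neg h, norm_zero]
      positivity
  -- pointwise identities
  have h4 : ∀ᵐ s ∂μ, ⟪F t - F s, u s⟫ = ∫ σ, g s σ ∂μ := by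
    refine (ae_restrict_mem measurableSet_Ioc).mono (fun s hs => ?_)
    have hsub1 : Ioc a s ⊆ Ioc a t := Ioc_subset_Ioc le_rfl hs.2
    have hsub2 : Ioc s t ⊆ Ioc a t := Ioc_subset_Ioc hs.1.le le_rfl
    have hsplit : F t = F s + ∫ σ in Ioc s t, u σ := by
      rw [hF]
      rw [← setIntegral_union (Set.Ioc_disjoint_Ioc_of_le le_rfl) measurableSet_Ioc
        (hu.mono_set hsub1) (hu.mono_set hsub2),
        Set.Ioc_union_Ioc_eq_Ioc hs.1.le hs.2]
    have h41 : ⟪F t - F s, u s⟫ = ∫ σ in Ioc s t, ⟪u s, u σ⟫ := by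
      rw [hsplit]
      simp only [add_sub_cancel_left]
      rw [real_inner_comm, integral_inner (hu.mono_set hsub2)]
    have h42 : ∫ σ, g s σ ∂μ = ∫ σ in Ioc s t, ⟪u s, u σ⟫ := by
      have hcg : ∀ᵐ σ ∂μ, g s σ = (Ioc s t).indicator (fun σ => ⟪u σ, u s⟫) σ := by
        refine (ae_restrict_mem measurableSet_Ioc).mono (fun σ hσ => ?_)
        by_cases h : s < σ
        · rw [hg]; simp only [if_pos h]
          rw [Set.indicator_of_mem (show σ ∈ Ioc s t from ⟨h, hσ.2⟩)]
        · rw [hg]; simp only [if_neg h]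
          rw [Set.indicator_of_notMem (fun hmem => h hmem.1)]
      rw [integral_congr_ae hcg, integral_indicator measurableSet_Ioc, hμ,
        Measure.restrict_restrict measurableSet_Ioc,
        inter_eq_self_of_subset_left hsub2]
      exact setIntegral_congr_fun measurableSet_Ioc (fun σ _ => real_inner_comm _ _)
    rw [h41, h42]
  have h6 : ∀ᵐ σ ∂μ, (∫ s, g s σ ∂μ) = ⟪u σ, F σ⟫ := by
    refine (ae_restrict_mem measurableSet_Ioc).mono (fun σ hσ => ?_)
    have hsub1 : Ioo a σ ⊆ Ioc a t := fun z hz => ⟨hz.1, le_trans hz.2.le hσ.2⟩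
    have hcg : ∀ᵐ s ∂μ, g s σ = (Ioo a σ).indicator (fun s => ⟪u σ, u s⟫) s := by
      refine (ae_restrict_mem measurableSet_Ioc).mono (fun s hs => ?_)
      by_cases h : s < σ
      · rw [hg]; simp only [if_pos h]
        rw [Set.indicator_of_mem (show s ∈ Ioo a σ from ⟨hs.1, h⟩)]
      · rw [hg]; simp only [if_neg h]
        rw [Set.indicator_of_notMem (fun hmem => h hmem.2)]
    rw [integral_congr_ae hcg, integral_indicator measurableSet_Ioo, hμ,
      Measure.restrict_restrict measurableSet_Ioo,
      inter_eq_self_of_subset_left hsub1,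
      setIntegral_congr_set Ioo_ae_eq_Ioc,
      integral_inner (hu.mono_set (Ioc_subset_Ioc le_rfl hσ.2))]
  -- assemble
  have key : ∫ s, ⟪F t, u s⟫ ∂μ = (∫ s, ⟪u s, F s⟫ ∂μ) + ∫ s, ⟪u s, F s⟫ ∂μ := by
    have e1 : ∫ s, ⟪F t, u s⟫ ∂μ
        = (∫ s, ⟪F s, u s⟫ ∂μ) + ∫ s, ⟪F t - F s, u s⟫ ∂μ := by
      rw [← integral_add i2 i3]
      refine integral_congr_ae (Filter.Eventually.of_forall (fun s => ?_))
      simp only [inner_sub_left]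
      ring
    have e2 : ∫ s, ⟪F t - F s, u s⟫ ∂μ = ∫ s, ⟪u s, F s⟫ ∂μ := by
      rw [integral_congr_ae h4, integral_integral_swap hGint, integral_congr_ae h6]
    rw [e1, e2, hcomm]
  have efin : ⟪F t, F t⟫ = 2 * ∫ s, ⟪u s, F s⟫ ∂μ := by
    rw [← integral_inner hμu, key]; ring
  rw [← real_inner_self_eq_norm_sq]
  exact efin



/-- Uniqueness for the integro-differential sweeping process. -/
theorem integro_differential_sweeping_uniqueness
    (T0 T : ℝ) (hT : T0 < T)
    (r : ℝ≥0∞) (hr : 0 < r)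
    (C : ℝ → Set H)
    (hC : ∀ t ∈ Icc T0 T, (C t).Nonempty ∧ IsClosed (C t) ∧ IsProxRegular r (C t))
    (υ υ' : ℝ → ℝ)
    (hυint : IntervalIntegrable υ' volume T0 T)
    (hυAC : ∀ t ∈ Icc T0 T, υ t = υ T0 + ∫ s in T0..t, υ' s)
    (hmove : ∀ s ∈ Icc T0 T, ∀ t ∈ Icc T0 T,
      C t ⊆ C s + |υ s - υ t| • Metric.closedBall (0 : H) 1)
    (f1 : ℝ → H → H)
    (hf1meas : ∀ x : H, StronglyMeasurable fun t => f1 t x)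
    (β1 : ℝ → ℝ)
    (hβ1int : IntervalIntegrable β1 volume T0 T)
    (hβ1nn : ∀ t ∈ Icc T0 T, 0 ≤ β1 t)
    (hf1grow : ∀ t ∈ Icc T0 T, ∀ x ∈ ⋃ s ∈ Icc T0 T, C s, ‖f1 t x‖ ≤ β1 t * (1 + ‖x‖))
    (hf1lip : ∀ η : ℝ, 0 < η → ∃ L1 : ℝ → ℝ, IntervalIntegrable L1 volume T0 T ∧
      (∀ t ∈ Icc T0 T, 0 ≤ L1 t) ∧
      ∀ t ∈ Icc T0 T, ∀ x ∈ Metric.closedBall (0 : H) η,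
        ∀ y ∈ Metric.closedBall (0 : H) η, ‖f1 t x - f1 t y‖ ≤ L1 t * ‖x - y‖)
    (f2 : ℝ → ℝ → H → H)
    (hf2meas : ∀ x : H, StronglyMeasurable fun p : ℝ × ℝ => f2 p.1 p.2 x)
    (β2 : ℝ → ℝ → ℝ)
    (hβ2int : IntegrableOn (fun p : ℝ × ℝ => β2 p.1 p.2)
      {p : ℝ × ℝ | p.1 ∈ Icc T0 T ∧ p.2 ∈ Icc T0 T ∧ p.2 ≤ p.1} volume)
    (hβ2nn : ∀ t ∈ Icc T0 T, ∀ s ∈ Icc T0 t, 0 ≤ β2 t s)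
    (hf2grow : ∀ t ∈ Icc T0 T, ∀ s ∈ Icc T0 t, ∀ x ∈ ⋃ u ∈ Icc T0 T, C u,
      ‖f2 t s x‖ ≤ β2 t s * (1 + ‖x‖))
    (hf2lip : ∀ η : ℝ, 0 < η → ∃ L2 : ℝ → ℝ, IntervalIntegrable L2 volume T0 T ∧
      (∀ t ∈ Icc T0 T, 0 ≤ L2 t) ∧
      ∀ t ∈ Icc T0 T, ∀ s ∈ Icc T0 t, ∀ x ∈ Metric.closedBall (0 : H) η,
        ∀ y ∈ Metric.closedBall (0 : H) η, ‖f2 t s x - f2 t s y‖ ≤ L2 t * ‖x - y‖)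
    (x1 x1' x2 x2' : ℝ → H) (hinit : x1 T0 = x2 T0)
    (h1 : IsIDSweepingSol T0 T C f1 f2 x1 x1')
    (h2 : IsIDSweepingSol T0 T C f1 f2 x2 x2') :
    ∀ t ∈ Icc T0 T, x1 t = x2 t := by
  obtain ⟨h1int, h1rep, h1mem, h1incl⟩ := h1
  obtain ⟨h2int, h2rep, h2mem, h2incl⟩ := h2
  have hTT : T0 ≤ T := hT.le
  set D : ℝ → ℝ := fun s => ‖x1 s - x2 s‖ with hD
  set u : ℝ → H := fun s => x1' s - x2' s with hu_def
  have hu_int : IntegrableOn u (Ioc T0 T) volume := h1int.1.sub h2int.1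
  have hD0 : ∀ s, 0 ≤ D s := fun s => norm_nonneg _
  -- continuity of solutions
  have hxc : ∀ (x : ℝ → H) (x' : ℝ → H), IntervalIntegrable x' volume T0 T →
      (∀ t ∈ Icc T0 T, x t = x T0 + ∫ s in T0..t, x' s) → ContinuousOn x (Icc T0 T) := by
    intro x x' hx'int hxrep
    have hprim : ContinuousOn (fun t => x T0 + ∫ σ in Ioc T0 t, x' σ) (Icc T0 T) :=
      continuousOn_const.add (intervalIntegral.continuousOn_primitive
        ((integrableOn_Icc_iff_integrableOn_Ioc).mpr hx'int.1))
    refine hprim.congr (fun t ht => ?_)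
    rw [hxrep t ht, intervalIntegral.integral_of_le ht.1]
  have hxc1 : ContinuousOn x1 (Icc T0 T) := hxc x1 x1' h1int h1rep
  have hxc2 : ContinuousOn x2 (Icc T0 T) := hxc x2 x2' h2int h2rep
  have hDcont : ContinuousOn D (Icc T0 T) := (hxc1.sub hxc2).norm
  have hDintIcc : IntegrableOn D (Icc T0 T) volume := hDcont.integrableOn_Icc
  -- the bound η
  obtain ⟨C1, hC1⟩ := isCompact_Icc.exists_bound_of_continuousOn hxc1
  obtain ⟨C2, hC2⟩ := isCompact_Icc.exists_bound_of_continuousOn hxc2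
  set η : ℝ := max C1 C2 + 1 with hη
  have hη0 : 0 < η := by
    have h0 := hC1 T0 ⟨le_rfl, hTT⟩
    have := norm_nonneg (x1 T0)
    have : (0:ℝ) ≤ max C1 C2 := le_trans (by linarith) (le_max_left _ _)
    linarith
  have hx1b : ∀ s ∈ Icc T0 T, ‖x1 s‖ ≤ η := fun s hs => by
    have := hC1 s hs; have := le_max_left C1 C2; simp only [hη]; linarith
  have hx2b : ∀ s ∈ Icc T0 T, ‖x2 s‖ ≤ η := fun s hs => by
    have := hC2 s hs; have := le_max_right C1 C2; simp only [hη]; linarith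
  have hx1ball : ∀ s ∈ Icc T0 T, x1 s ∈ Metric.closedBall (0 : H) η := fun s hs =>
    mem_closedBall_zero_iff.mpr (hx1b s hs)
  have hx2ball : ∀ s ∈ Icc T0 T, x2 s ∈ Metric.closedBall (0 : H) η := fun s hs =>
    mem_closedBall_zero_iff.mpr (hx2b s hs)
  obtain ⟨L1, hL1int, hL1nn, hL1lip⟩ := hf1lip η hη0
  obtain ⟨L2, hL2int, hL2nn, hL2lip⟩ := hf2lip η hη0
  -- the triangle set and the marginal γ
  set Sset : Set (ℝ × ℝ) := {p : ℝ × ℝ | p.1 ∈ Icc T0 T ∧ p.2 ∈ Icc T0 T ∧ p.2 ≤ p.1}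
    with hSset
  have hSmeas : MeasurableSet Sset := by
    have : Sset = (Prod.fst ⁻¹' Icc T0 T) ∩ ((Prod.snd ⁻¹' Icc T0 T) ∩
        {p : ℝ × ℝ | p.2 ≤ p.1}) := by
      ext p; simp [hSset, and_assoc]
    rw [this]
    exact (measurable_fst measurableSet_Icc).inter
      ((measurable_snd measurableSet_Icc).inter
        (measurableSet_le measurable_snd measurable_fst))
  set bfun : ℝ × ℝ → ℝ := Sset.indicator (fun p => β2 p.1 p.2) with hbfun
  have hbint : Integrable bfun (volume.prod volume) := by
    rw [← Measure.volume_eq_prod]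
    exact (integrable_indicator_iff hSmeas).mpr hβ2int
  have hbnn : ∀ p, 0 ≤ bfun p := by
    intro p
    refine indicator_nonneg (fun q hq => ?_) p
    exact hβ2nn q.1 hq.1 q.2 ⟨hq.2.1.1, hq.2.2⟩
  set γ : ℝ → ℝ := fun t => ∫ σ, bfun (t, σ) with hγ
  have hγint : Integrable γ volume := hbint.integral_prod_left
  have hγnn : ∀ t, 0 ≤ γ t := fun t => integral_nonneg (fun σ => hbnn _)
  have hγsec : ∀ t ∈ Icc T0 T, (fun σ => bfun (t, σ))
      = (Icc T0 t).indicator (fun σ => β2 t σ) := by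
    intro t ht; funext σ
    rw [hbfun]
    by_cases h : σ ∈ Icc T0 t
    · rw [indicator_of_mem h, indicator_of_mem (show (t, σ) ∈ Sset from
        ⟨ht, ⟨h.1, le_trans h.2 ht.2⟩, h.2⟩)]
    · rw [indicator_of_notMem h, indicator_of_notMem (show (t, σ) ∉ Sset from
        fun hcon => h ⟨hcon.2.1.1, hcon.2.2⟩)]
  have hγval : ∀ t ∈ Icc T0 T, γ t = ∫ σ in Ioc T0 t, β2 t σ := by
    intro t ht
    show (∫ σ, bfun (t, σ)) = _
    rw [hγsec t ht, integral_indicator measurableSet_Icc,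
      setIntegral_congr_set Ioc_ae_eq_Icc.symm]
  have hbsec_ae : ∀ᵐ t ∂(volume : Measure ℝ), Integrable (fun σ => bfun (t, σ)) volume :=
    hbint.prod_right_ae
  -- the constant from prox-regularity
  set c : ℝ := ((2 * r)⁻¹).toReal with hc
  have hc0 : 0 ≤ c := ENNReal.toReal_nonneg
  set A : ℝ → ℝ := fun s => ‖x1' s‖ + ‖x2' s‖ + 2*(1+η)*(β1 s + γ s) with hA
  set G : ℝ → ℝ := fun s => 2*(c * A s + L1 s + L2 s * (T - T0)) with hGdef
  have hGint : IntegrableOn G (Ioc T0 T) volume := by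
    apply Integrable.const_mul
    apply Integrable.add
    apply Integrable.add
    · exact (((h1int.1.norm.add h2int.1.norm).add
        (((hβ1int.1.add (hγint.integrableOn)).const_mul (2*(1+η))))).const_mul c)
    · exact hL1int.1
    · exact hL2int.1.mul_const _
  have hGnn : ∀ s ∈ Icc T0 T, 0 ≤ G s := by
    intro s hs
    have h1' := hβ1nn s hs
    have h2' := hγnn s
    have h3' := hL1nn s hs
    have h4' := hL2nn s hs
    have h5' : (0:ℝ) ≤ A s := by
      simp only [hA]
      have := norm_nonneg (x1' s); have := norm_nonneg (x2' s)
      nlinarith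
    simp only [hGdef]
    nlinarith
  -- representation of the difference
  have hrep : ∀ t ∈ Icc T0 T, x1 t - x2 t = ∫ s in Ioc T0 t, u s := by
    intro t ht
    rw [h1rep t ht, h2rep t ht, hinit, intervalIntegral.integral_of_le ht.1,
      intervalIntegral.integral_of_le ht.1, add_sub_add_left_eq_sub]
    exact (integral_sub (h1int.1.mono_set (Ioc_subset_Ioc le_rfl ht.2))
      (h2int.1.mono_set (Ioc_subset_Ioc le_rfl ht.2))).symm
  -- integrability of the inner-product integrand
  have hinnint : ∀ t ∈ Icc T0 T,
      IntegrableOn (fun s => ⟪u s, x1 s - x2 s⟫) (Ioc T0 t) volume := by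
    intro t ht
    have h0 := inner_primitive_integrable ht.1 (hu_int.mono_set (Ioc_subset_Ioc le_rfl ht.2))
    refine h0.congr_fun (fun s hs => ?_) measurableSet_Ioc
    beta_reduce
    rw [← hrep s ⟨hs.1.le, le_trans hs.2 ht.2⟩]
  -- the energy identity
  have hiden : ∀ t ∈ Icc T0 T, D t ^ 2 = 2 * ∫ s in Ioc T0 t, ⟪u s, x1 s - x2 s⟫ := by
    intro t ht
    have h0 := normsq_primitive ht.1 (hu_int.mono_set (Ioc_subset_Ioc le_rfl ht.2))
    have h1' : D t ^ 2 = ‖∫ s in Ioc T0 t, u s‖ ^ 2 := by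
      rw [hD]; simp only; rw [hrep t ht]
    rw [h1', h0]
    congr 1
    refine setIntegral_congr_fun measurableSet_Ioc (fun s hs => ?_)
    rw [← hrep s ⟨hs.1.le, le_trans hs.2 ht.2⟩]
  -- MASTER a.e. differential inequality
  have master : ∀ᵐ s ∂(volume : Measure ℝ), s ∈ Icc T0 T →
      ⟪u s, x1 s - x2 s⟫ ≤ c * A s * D s ^ 2 + L1 s * D s ^ 2
        + L2 s * (∫ σ in Ioc T0 s, D σ) * D s := by
    filter_upwards [h1incl, h2incl, hbsec_ae] with s hincl1 hincl2 hbsec hs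
    have hx1m := h1mem s hs
    have hx2m := h2mem s hs
    -- integrability of β2 s on the段
    have hβ2s : IntegrableOn (fun σ => β2 s σ) (Ioc T0 s) volume := by
      rw [hγsec s hs] at hbsec
      exact ((integrable_indicator_iff measurableSet_Icc).mp hbsec).mono_set
        Ioc_subset_Icc_self
    have hβ2snn : ∀ σ ∈ Ioc T0 s, 0 ≤ β2 s σ := fun σ hσ =>
      hβ2nn s hs σ ⟨hσ.1.le, hσ.2⟩
    -- integrability of the compositions with f2
    have hcompint : ∀ (x : ℝ → H), ContinuousOn x (Icc T0 T) →
        (∀ σ ∈ Icc T0 T, ‖x σ‖ ≤ η) → (∀ σ ∈ Icc T0 T, x σ ∈ C σ) →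
        IntegrableOn (fun σ => f2 s σ (x σ)) (Ioc T0 s) volume := by
      intro x hxcont hxb hxC
      have haesm : AEStronglyMeasurable (fun σ => f2 s σ (x σ))
          (volume.restrict (Icc T0 s)) := by
        refine aesm_comp (F := fun σ y => f2 s σ y) ?_ ?_ ?_
        · intro cc
          exact (hf2meas cc).comp_measurable measurable_prodMk_left
        · exact hxcont.mono (Icc_subset_Icc le_rfl hs.2)
        · intro σ hσ
          refine ⟨L2 s, fun y hy => ?_⟩
          obtain ⟨z, hz, rfl⟩ := hy
          exact hL2lip s hs σ hσ _
            (mem_closedBall_zero_iff.mpr (hxb z ⟨hz.1, le_trans hz.2 hs.2⟩)) _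
            (mem_closedBall_zero_iff.mpr (hxb σ ⟨hσ.1, le_trans hσ.2 hs.2⟩))
      refine Integrable.mono' (hβ2s.mul_const (1+η))
        (haesm.mono_measure (Measure.restrict_mono Ioc_subset_Icc_self le_rfl)) ?_
      refine (ae_restrict_mem measurableSet_Ioc).mono (fun σ hσ => ?_)
      have hσIcc : σ ∈ Icc T0 T := ⟨hσ.1.le, le_trans hσ.2 hs.2⟩
      have hgrow := hf2grow s hs σ ⟨hσ.1.le, hσ.2⟩ (x σ)
        (mem_biUnion hσIcc (hxC σ hσIcc))
      have hb := hβ2snn σ hσ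
      have hxbb := hxb σ hσIcc
      nlinarith
    have hI1int := hcompint x1 hxc1 hx1b h1mem
    have hI2int := hcompint x2 hxc2 hx2b h2mem
    -- difference of the two f2-integrals
    have hDints : IntegrableOn D (Ioc T0 s) volume :=
      hDintIcc.mono_set (le_trans Ioc_subset_Icc_self (Icc_subset_Icc le_rfl hs.2))
    have hIdiff : ‖(∫ σ in Ioc T0 s, f2 s σ (x1 σ)) - ∫ σ in Ioc T0 s, f2 s σ (x2 σ)‖
        ≤ L2 s * ∫ σ in Ioc T0 s, D σ := by
      rw [← integral_sub hI1int hI2int]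
      calc ‖∫ σ in Ioc T0 s, (f2 s σ (x1 σ) - f2 s σ (x2 σ))‖
          ≤ ∫ σ in Ioc T0 s, ‖f2 s σ (x1 σ) - f2 s σ (x2 σ)‖ :=
            norm_integral_le_integral_norm _
        _ ≤ ∫ σ in Ioc T0 s, L2 s * D σ := by
            refine integral_mono_ae (hI1int.sub hI2int).norm (hDints.const_mul _) ?_
            refine (ae_restrict_mem measurableSet_Ioc).mono (fun σ hσ => ?_)
            have hσIcc : σ ∈ Icc T0 T := ⟨hσ.1.le, le_trans hσ.2 hs.2⟩
            exact hL2lip s hs σ ⟨hσ.1.le, hσ.2⟩ _ (hx1ball σ hσIcc) _ (hx2ball σ hσIcc)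
        _ = L2 s * ∫ σ in Ioc T0 s, D σ := integral_const_mul _ _
    -- the normal cone elements
    set v1 : H := -x1' s - f1 s (x1 s) - ∫ σ in T0..s, f2 s σ (x1 σ) with hv1
    set v2 : H := -x2' s - f1 s (x2 s) - ∫ σ in T0..s, f2 s σ (x2 σ) with hv2
    have hv1mem : v1 ∈ proxNormalCone (C s) (x1 s) := hincl1 hs
    have hv2mem : v2 ∈ proxNormalCone (C s) (x2 s) := hincl2 hs
    have hIrw1 : (∫ σ in T0..s, f2 s σ (x1 σ)) = ∫ σ in Ioc T0 s, f2 s σ (x1 σ) :=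
      intervalIntegral.integral_of_le hs.1
    have hIrw2 : (∫ σ in T0..s, f2 s σ (x2 σ)) = ∫ σ in Ioc T0 s, f2 s σ (x2 σ) :=
      intervalIntegral.integral_of_le hs.1
    -- bound on ‖v i‖
    have hvnorm : ∀ (x : ℝ → H) (x' : ℝ → H), (∀ σ ∈ Icc T0 T, ‖x σ‖ ≤ η) →
        (∀ σ ∈ Icc T0 T, x σ ∈ C σ) →
        IntegrableOn (fun σ => f2 s σ (x σ)) (Ioc T0 s) volume →
        ‖-x' s - f1 s (x s) - ∫ σ in T0..s, f2 s σ (x σ)‖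
          ≤ ‖x' s‖ + β1 s * (1+η) + (1+η) * γ s := by
      intro x x' hxb hxC hIint
      have htri : ‖-x' s - f1 s (x s) - ∫ σ in T0..s, f2 s σ (x σ)‖
          ≤ ‖x' s‖ + ‖f1 s (x s)‖ + ‖∫ σ in T0..s, f2 s σ (x σ)‖ := by
        calc ‖-x' s - f1 s (x s) - ∫ σ in T0..s, f2 s σ (x σ)‖
            ≤ ‖-x' s - f1 s (x s)‖ + ‖∫ σ in T0..s, f2 s σ (x σ)‖ := norm_sub_le _ _
          _ ≤ ‖-x' s‖ + ‖f1 s (x s)‖ + ‖∫ σ in T0..s, f2 s σ (x σ)‖ := by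
              have := norm_sub_le (-x' s) (f1 s (x s)); linarith
          _ = ‖x' s‖ + ‖f1 s (x s)‖ + ‖∫ σ in T0..s, f2 s σ (x σ)‖ := by rw [norm_neg]
      have hf1b : ‖f1 s (x s)‖ ≤ β1 s * (1+η) := by
        have hgrow := hf1grow s hs (x s) (mem_biUnion hs (hxC s hs))
        have hb := hβ1nn s hs
        have := hxb s hs
        nlinarith
      have hIb : ‖∫ σ in T0..s, f2 s σ (x σ)‖ ≤ (1+η) * γ s := by
        rw [intervalIntegral.integral_of_le hs.1]
        calc ‖∫ σ in Ioc T0 s, f2 s σ (x σ)‖ ≤ ∫ σ in Ioc T0 s, ‖f2 s σ (x σ)‖ :=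
            norm_integral_le_integral_norm _
          _ ≤ ∫ σ in Ioc T0 s, β2 s σ * (1+η) := by
              refine integral_mono_ae hIint.norm (hβ2s.mul_const _) ?_
              refine (ae_restrict_mem measurableSet_Ioc).mono (fun σ hσ => ?_)
              have hσIcc : σ ∈ Icc T0 T := ⟨hσ.1.le, le_trans hσ.2 hs.2⟩
              have hgrow := hf2grow s hs σ ⟨hσ.1.le, hσ.2⟩ (x σ)
                (mem_biUnion hσIcc (hxC σ hσIcc))
              have hb := hβ2snn σ hσ
              have := hxb σ hσIcc
              show ‖f2 s σ (x σ)‖ ≤ β2 s σ * (1+η)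
              nlinarith
          _ = (1+η) * γ s := by
              rw [hγval s hs, integral_mul_const, mul_comm]
      linarith
    have hv1n : ‖v1‖ ≤ ‖x1' s‖ + β1 s * (1+η) + (1+η) * γ s :=
      hvnorm x1 x1' hx1b h1mem hI1int
    have hv2n : ‖v2‖ ≤ ‖x2' s‖ + β1 s * (1+η) + (1+η) * γ s :=
      hvnorm x2 x2' hx2b h2mem hI2int
    -- prox-regularity estimate
    have hkey : ∀ (v p q : H), v ∈ proxNormalCone (C s) p → p ∈ C s → q ∈ C s →
        ⟪v, q - p⟫ ≤ ‖v‖ * (c * ‖q - p‖ ^ 2) := by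
      intro v p q hv hp hq
      by_cases h0 : v = 0
      · simp [h0]
      · have hineq := (hC s hs).2.2 p hp v hv h0 q hq
        rw [real_inner_smul_left] at hineq
        have hn : 0 < ‖v‖ := norm_pos_iff.mpr h0
        calc ⟪v, q - p⟫ = ‖v‖ * (‖v‖⁻¹ * ⟪v, q - p⟫) := by field_simp
          _ ≤ ‖v‖ * (c * ‖q - p‖ ^ 2) := mul_le_mul_of_nonneg_left hineq hn.le
    have hk1 := hkey v1 (x1 s) (x2 s) hv1mem hx1m hx2m
    have hk2 := hkey v2 (x2 s) (x1 s) hv2mem hx2m hx1m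
    -- assemble
    set w : H := x1 s - x2 s with hw
    have hDs : ‖w‖ = D s := rfl
    have hDs' : ‖x2 s - x1 s‖ = D s := by rw [norm_sub_rev]
    have hk1' : ⟪v1, -w⟫ ≤ ‖v1‖ * (c * D s ^ 2) := by
      have hneg : x2 s - x1 s = -w := by simp [hw]
      have hsq : ‖x2 s - x1 s‖ ^ 2 = D s ^ 2 := by rw [hDs']
      calc ⟪v1, -w⟫ = ⟪v1, x2 s - x1 s⟫ := by rw [hneg]
        _ ≤ ‖v1‖ * (c * ‖x2 s - x1 s‖ ^ 2) := hk1
        _ = ‖v1‖ * (c * D s ^ 2) := by rw [hsq]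
    have hk2' : ⟪v2, w⟫ ≤ ‖v2‖ * (c * D s ^ 2) := by
      have hsq : ‖x1 s - x2 s‖ ^ 2 = D s ^ 2 := rfl
      calc ⟪v2, w⟫ = ⟪v2, x1 s - x2 s⟫ := rfl
        _ ≤ ‖v2‖ * (c * ‖x1 s - x2 s‖ ^ 2) := hk2
        _ = ‖v2‖ * (c * D s ^ 2) := by rw [hsq]
    -- the identity for ⟪u s, w⟫
    have huw : ⟪u s, w⟫ = (⟪v2, w⟫ + ⟪v1, -w⟫)
        - ⟪f1 s (x1 s) - f1 s (x2 s), w⟫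
        - ⟪(∫ σ in Ioc T0 s, f2 s σ (x1 σ)) - ∫ σ in Ioc T0 s, f2 s σ (x2 σ), w⟫ := by
      have hueq : u s = (v2 - v1) - (f1 s (x1 s) - f1 s (x2 s))
          - ((∫ σ in Ioc T0 s, f2 s σ (x1 σ)) - ∫ σ in Ioc T0 s, f2 s σ (x2 σ)) := by
        rw [hv1, hv2, ← hIrw1, ← hIrw2]
        simp only [hu_def]
        abel
      rw [hueq]
      simp only [inner_sub_left, inner_neg_right]
      ring
    -- bounds for the f1 and f2 difference terms
    have hf1d : ‖f1 s (x1 s) - f1 s (x2 s)‖ ≤ L1 s * D s :=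
      hL1lip s hs _ (hx1ball s hs) _ (hx2ball s hs)
    have hb2 : -⟪f1 s (x1 s) - f1 s (x2 s), w⟫ ≤ L1 s * D s ^ 2 := by
      have h1' := abs_real_inner_le_norm (f1 s (x1 s) - f1 s (x2 s)) w
      have h2' : ‖f1 s (x1 s) - f1 s (x2 s)‖ * ‖w‖ ≤ (L1 s * D s) * D s := by
        rw [hDs]
        exact mul_le_mul_of_nonneg_right hf1d (hD0 s)
      nlinarith [neg_le_abs ⟪f1 s (x1 s) - f1 s (x2 s), w⟫, sq_nonneg (D s)]
    have hb3 : -⟪(∫ σ in Ioc T0 s, f2 s σ (x1 σ)) - ∫ σ in Ioc T0 s, f2 s σ (x2 σ), w⟫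
        ≤ L2 s * (∫ σ in Ioc T0 s, D σ) * D s := by
      have h1' := abs_real_inner_le_norm
        ((∫ σ in Ioc T0 s, f2 s σ (x1 σ)) - ∫ σ in Ioc T0 s, f2 s σ (x2 σ)) w
      have h2' : ‖(∫ σ in Ioc T0 s, f2 s σ (x1 σ)) - ∫ σ in Ioc T0 s, f2 s σ (x2 σ)‖ * ‖w‖
          ≤ (L2 s * ∫ σ in Ioc T0 s, D σ) * D s := by
        rw [hDs]
        exact mul_le_mul_of_nonneg_right hIdiff (hD0 s)
      nlinarith [neg_le_abs ⟪(∫ σ in Ioc T0 s, f2 s σ (x1 σ))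
        - ∫ σ in Ioc T0 s, f2 s σ (x2 σ), w⟫]
    have hb1 : ⟪v2, w⟫ + ⟪v1, -w⟫ ≤ c * A s * D s ^ 2 := by
      have hsum : ‖v1‖ * (c * D s ^ 2) + ‖v2‖ * (c * D s ^ 2)
          ≤ A s * (c * D s ^ 2) := by
        have hcd : 0 ≤ c * D s ^ 2 := mul_nonneg hc0 (sq_nonneg _)
        have hAb : ‖v1‖ + ‖v2‖ ≤ A s := by
          simp only [hA]; linarith
        nlinarith
      have : A s * (c * D s ^ 2) = c * A s * D s ^ 2 := by ring
      linarith
    linarith [hb1, hb2, hb3, huw.le, huw.ge]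
  -- primitive of G and uniform continuity
  set P : ℝ → ℝ := fun z => ∫ σ in Ioc T0 z, G σ with hP
  have hPc : ContinuousOn P (Icc T0 T) :=
    intervalIntegral.continuousOn_primitive ((integrableOn_Icc_iff_integrableOn_Ioc).mpr hGint)
  have huc := isCompact_Icc.uniformContinuousOn_of_continuous hPc
  rw [Metric.uniformContinuousOn_iff] at huc
  obtain ⟨δ, hδ0, hδ⟩ := huc (1/2) (by norm_num)
  -- the bootstrap step
  have step : ∀ a ∈ Icc T0 T, (∀ s ∈ Icc T0 a, x1 s = x2 s) →
      ∀ s ∈ Icc T0 (min (a + δ/2) T), x1 s = x2 s := by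
    intro a ha hzero
    set b : ℝ := min (a + δ/2) T with hb
    have hab : a ≤ b := le_min (by linarith) ha.2
    have hbT : b ≤ T := min_le_right _ _
    have hbmem : b ∈ Icc T0 T := ⟨le_trans ha.1 hab, hbT⟩
    obtain ⟨t0, ht0mem, ht0max⟩ := isCompact_Icc.exists_isMaxOn (nonempty_Icc.mpr hab)
      (hDcont.mono (Icc_subset_Icc ha.1 hbT))
    set N : ℝ := D t0 with hN
    have hN0 : 0 ≤ N := hD0 t0
    have hDle : ∀ z ∈ Icc a b, D z ≤ N := fun z hz => ht0max hz
    have ht0Icc : t0 ∈ Icc T0 T := ⟨le_trans ha.1 ht0mem.1, le_trans ht0mem.2 hbT⟩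
    have hDzero : ∀ σ ∈ Icc T0 a, D σ = 0 := by
      intro σ hσ
      simp only [hD]
      rw [hzero σ hσ, sub_self, norm_zero]
    -- key integral inequality
    have hGt0int : IntegrableOn G (Ioc T0 t0) volume :=
      hGint.mono_set (Ioc_subset_Ioc le_rfl ht0Icc.2)
    have hineq : D t0 ^ 2 ≤ N ^ 2 * ∫ σ in Ioc a t0, G σ := by
      refine le_trans (le_of_eq (hiden t0 ht0Icc)) ?_
      calc 2 * ∫ s in Ioc T0 t0, ⟪u s, x1 s - x2 s⟫
          = ∫ s in Ioc T0 t0, 2 * ⟪u s, x1 s - x2 s⟫ := (integral_const_mul 2 _).symm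
        _ ≤ ∫ s in Ioc T0 t0, (Ioc a t0).indicator (fun σ => G σ * N ^ 2) s := by
            refine integral_mono_ae ((hinnint t0 ht0Icc).const_mul 2)
              ((hGt0int.mul_const _).indicator measurableSet_Ioc) ?_
            have hmaster' : ∀ᵐ s ∂(volume.restrict (Ioc T0 t0)), s ∈ Icc T0 T →
                ⟪u s, x1 s - x2 s⟫ ≤ c * A s * D s ^ 2 + L1 s * D s ^ 2
                  + L2 s * (∫ σ in Ioc T0 s, D σ) * D s := ae_restrict_of_ae master
            filter_upwards [hmaster', ae_restrict_mem measurableSet_Ioc] with s hma hsmem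
            have hsIcc : s ∈ Icc T0 T := ⟨hsmem.1.le, le_trans hsmem.2 ht0Icc.2⟩
            by_cases hcase : a < s
            · rw [indicator_of_mem (show s ∈ Ioc a t0 from ⟨hcase, hsmem.2⟩)]
              have hsab : s ∈ Icc a b := ⟨hcase.le, le_trans hsmem.2 ht0mem.2⟩
              have hDsN : D s ≤ N := hDle s hsab
              have hintD : (∫ σ in Ioc T0 s, D σ) ≤ (T - T0) * N := by
                have hzeroint : ∫ σ in Ioc T0 s, D σ = ∫ σ in Ioc a s, D σ := by
                  have hsplit : Ioc T0 a ∪ Ioc a s = Ioc T0 s :=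
                    Ioc_union_Ioc_eq_Ioc ha.1 hcase.le
                  rw [← hsplit, setIntegral_union (Ioc_disjoint_Ioc_of_le le_rfl) measurableSet_Ioc
                    (hDintIcc.mono_set (le_trans Ioc_subset_Icc_self
                      (Icc_subset_Icc le_rfl ha.2)))
                    (hDintIcc.mono_set (le_trans Ioc_subset_Icc_self
                      (Icc_subset_Icc ha.1 hsIcc.2)))]
                  have : ∫ σ in Ioc T0 a, D σ = 0 := by
                    rw [setIntegral_congr_fun measurableSet_Ioc
                      (fun σ hσ => hDzero σ ⟨hσ.1.le, hσ.2⟩)]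
                    exact integral_zero _ _
                  rw [this, zero_add]
                rw [hzeroint]
                calc ∫ σ in Ioc a s, D σ ≤ ∫ σ in Ioc a s, N := by
                      refine integral_mono_ae (hDintIcc.mono_set (le_trans
                        Ioc_subset_Icc_self (Icc_subset_Icc ha.1 hsIcc.2)))
                        (integrableOn_const measure_Ioc_lt_top.ne) ?_
                      refine (ae_restrict_mem measurableSet_Ioc).mono (fun σ hσ => ?_)
                      exact hDle σ ⟨hσ.1.le, le_trans hσ.2 hsab.2⟩
                  _ = (s - a) * N := by
                      rw [setIntegral_const, Real.volume_real_Ioc_of_le (by linarith), smul_eq_mul]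
                  _ ≤ (T - T0) * N := by
                      have : s - a ≤ T - T0 := by
                        have := hsIcc.2; have := ha.1; linarith
                      exact mul_le_mul_of_nonneg_right this hN0
              have hAnn : 0 ≤ A s := by
                simp only [hA]
                have := norm_nonneg (x1' s); have := norm_nonneg (x2' s)
                have := hβ1nn s hsIcc; have := hγnn s
                nlinarith
              have hm1 : c * A s * D s ^ 2 ≤ c * A s * N ^ 2 := by
                have h2' : D s ^ 2 ≤ N ^ 2 := by nlinarith [hD0 s]
                exact mul_le_mul_of_nonneg_left h2' (mul_nonneg hc0 hAnn)
              have hm2 : L1 s * D s ^ 2 ≤ L1 s * N ^ 2 := by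
                have h2' : D s ^ 2 ≤ N ^ 2 := by nlinarith [hD0 s]
                exact mul_le_mul_of_nonneg_left h2' (hL1nn s hsIcc)
              have hm3 : L2 s * (∫ σ in Ioc T0 s, D σ) * D s
                  ≤ L2 s * (T - T0) * N ^ 2 := by
                have hL2s := hL2nn s hsIcc
                have hDint0 : 0 ≤ ∫ σ in Ioc T0 s, D σ :=
                  integral_nonneg (fun σ => hD0 σ)
                have e1 : L2 s * (∫ σ in Ioc T0 s, D σ) * D s
                    ≤ L2 s * (∫ σ in Ioc T0 s, D σ) * N :=
                  mul_le_mul_of_nonneg_left hDsN (mul_nonneg hL2s hDint0)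
                have e2 : L2 s * (∫ σ in Ioc T0 s, D σ) ≤ L2 s * ((T - T0) * N) :=
                  mul_le_mul_of_nonneg_left hintD hL2s
                have e3 : L2 s * (∫ σ in Ioc T0 s, D σ) * N
                    ≤ L2 s * ((T - T0) * N) * N :=
                  mul_le_mul_of_nonneg_right e2 hN0
                calc L2 s * (∫ σ in Ioc T0 s, D σ) * D s
                    ≤ L2 s * ((T - T0) * N) * N := le_trans e1 e3
                  _ = L2 s * (T - T0) * N ^ 2 := by ring
              have hGeq : G s * N ^ 2 = 2 * (c * A s * N ^ 2) + 2 * (L1 s * N ^ 2)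
                  + 2 * (L2 s * (T - T0) * N ^ 2) := by
                simp only [hGdef]; ring
              have := hma hsIcc
              linarith
            · push_neg at hcase
              rw [indicator_of_notMem (fun hmem0 => absurd hmem0.1 (not_lt.mpr hcase))]
              have hzs : x1 s = x2 s := hzero s ⟨hsmem.1.le, hcase⟩
              have : x1 s - x2 s = 0 := sub_eq_zero.mpr hzs
              rw [this, inner_zero_right]
              simp
        _ = ∫ s in Ioc a t0, G s * N ^ 2 := by
            rw [integral_indicator measurableSet_Ioc,
              Measure.restrict_restrict measurableSet_Ioc,
              inter_eq_self_of_subset_left (Ioc_subset_Ioc ha.1 le_rfl)]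
        _ = N ^ 2 * ∫ s in Ioc a t0, G s := by
            rw [integral_mul_const]; exact mul_comm _ _
    -- the primitive bound
    have hPbound : (∫ σ in Ioc a t0, G σ) ≤ 1/2 := by
      have hsplit : P t0 = P a + ∫ σ in Ioc a t0, G σ := by
        simp only [hP]
        rw [← setIntegral_union (Ioc_disjoint_Ioc_of_le le_rfl) measurableSet_Ioc
          (hGint.mono_set (Ioc_subset_Ioc le_rfl ha.2))
          (hGint.mono_set (Ioc_subset_Ioc ha.1 ht0Icc.2)),
          Ioc_union_Ioc_eq_Ioc ha.1 ht0mem.1]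
      have hdist : dist t0 a < δ := by
        rw [Real.dist_eq, abs_of_nonneg (by linarith [ht0mem.1])]
        have : t0 ≤ a + δ/2 := le_trans ht0mem.2 (min_le_left _ _)
        linarith
      have := hδ t0 ht0Icc a ha hdist
      rw [Real.dist_eq] at this
      have habs := abs_lt.mp this
      linarith [hsplit]
    -- conclude N = 0
    have hNzero : N = 0 := by
      have h1' : N ^ 2 ≤ N ^ 2 * (1/2) := by
        calc N ^ 2 = D t0 ^ 2 := by rw [hN]
          _ ≤ N ^ 2 * ∫ σ in Ioc a t0, G σ := hineq
          _ ≤ N ^ 2 * (1/2) := mul_le_mul_of_nonneg_left hPbound (sq_nonneg _)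
      nlinarith [sq_nonneg N]
    intro s hs
    rcases le_or_gt s a with h | h
    · exact hzero s ⟨hs.1, h⟩
    · have hDs0 : D s = 0 := le_antisymm (by rw [← hNzero]; exact hDle s ⟨h.le, hs.2⟩)
        (hD0 s)
      have : x1 s - x2 s = 0 := by
        have := hDs0
        simpa [hD] using this
      exact sub_eq_zero.mp this
  -- iteration
  have hiter : ∀ k : ℕ, ∀ s ∈ Icc T0 (min (T0 + k*(δ/2)) T), x1 s = x2 s := by
    intro k
    induction k with
    | zero =>
      intro s hs
      have h0 : min (T0 + (0:ℕ)*(δ/2)) T = T0 := by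
        simp [min_eq_left hTT]
      rw [h0] at hs
      have : s = T0 := le_antisymm hs.2 hs.1
      rw [this, hinit]
    | succ k ih =>
      have hknn : (0:ℝ) ≤ (k:ℝ)*(δ/2) := by positivity
      have hk : min (T0 + k*(δ/2)) T ∈ Icc T0 T :=
        ⟨le_min (by linarith) hTT, min_le_right _ _⟩
      have hstep := step _ hk ih
      intro s hs
      apply hstep
      refine ⟨hs.1, le_trans hs.2 ?_⟩
      rcases le_total (T0 + k*(δ/2)) T with hcase | hcase
      · rw [min_eq_left hcase]
        apply min_le_min _ le_rfl
        push_cast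
        ring_nf
        linarith
      · rw [min_eq_right hcase]
        have : min (T0 + (k+1 : ℕ)*(δ/2)) T ≤ T := min_le_right _ _
        calc min (T0 + ((k:ℕ)+1 : ℕ)*(δ/2)) T ≤ T := min_le_right _ _
          _ ≤ min (T + δ/2) T := le_min (by linarith) le_rfl
  obtain ⟨k, hk⟩ := exists_nat_ge ((T - T0)/(δ/2))
  have hfin : min (T0 + k*(δ/2)) T = T := by
    have hδ2 : 0 < δ/2 := by linarith
    rw [div_le_iff₀ hδ2] at hk
    exact min_eq_right (by linarith)
  intro t ht
  exact hiter k t (by rw [hfin]; exact ht)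
end
end
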